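/- arXiv:1305.1676 — 5 statements merged into one kernel-verified Lean document; each statement's English description precedes it below -/
import Mathlib

section
/- For every fixed integer k ≥ 1 and every real ξ > 0 there exists ε > 0 such that for all sufficiently large n, the number of labelled graphs G on vertex set {1,…,n} that are k-cop-win and satisfy δ_k(G) > ξn is at most 2^{(log₂(1−2^{−k}) − ε) n} · 2^{n(n−1)/2}. -/
open Filter Topology

/-- Cop-win positions in the Cops and Robbers game with `k` cops, cops to move:
the least set of positions `(c, r)` such that `(c, r)` is a member whenever the cops
can move (each staying or moving along an edge) to some `c'` with `c' i = r` for some `i`,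
or to some `c'` such that every robber move from `r` lands in a member position. -/
inductive CopsWinPos {V : Type*} (G : SimpleGraph V) {k : ℕ} : (Fin k → V) → V → Prop
  | capture (c : Fin k → V) (r : V) (c' : Fin k → V)
      (hmove : ∀ i, c' i = c i ∨ G.Adj (c i) (c' i))
      (hc : ∃ i, c' i = r) : CopsWinPos G c r
  | advance (c : Fin k → V) (r : V) (c' : Fin k → V)
      (hmove : ∀ i, c' i = c i ∨ G.Adj (c i) (c' i))
      (h : ∀ r', r' = r ∨ G.Adj r r' → CopsWinPos G c' r') : CopsWinPos G c r

/-- `G` is `k`-cop-win: some initial cop placement wins against every robber placement. -/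
def IsKCopWin {V : Type*} (G : SimpleGraph V) (k : ℕ) : Prop :=
  ∃ c : Fin k → V, ∀ r : V, (∃ i, c i = r) ∨ CopsWinPos G c r

/-- `G` has a dominating set of cardinality `k`. -/
def HasDomSet {V : Type*} (G : SimpleGraph V) (k : ℕ) : Prop :=
  ∃ S : Finset V, S.card = k ∧ ∀ v ∉ S, ∃ u ∈ S, G.Adj u v

/-- `δ_k(G)`: minimum over `k`-element vertex sets `S` of the number of vertices
not in `S` and not adjacent to any vertex of `S`. -/
noncomputable def deltaK {V : Type*} [Fintype V] (G : SimpleGraph V) (k : ℕ) : ℕ :=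
  sInf {m | ∃ S : Finset V, S.card = k ∧ {w : V | ∀ u ∈ S, w ≠ u ∧ ¬ G.Adj u w}.ncard = m}

/-- `b` is `(k,q)`-dangerous: there is a `k`-set `A` avoiding `b` with `|N^c(A) ∩ N(b)| ≤ 2q`. -/
def Dangerous {V : Type*} [Fintype V] (G : SimpleGraph V) (k q : ℕ) (b : V) : Prop :=
  ∃ A : Finset V, A.card = k ∧ b ∉ A ∧
    {w : V | (∀ u ∈ A, w ≠ u ∧ ¬ G.Adj u w) ∧ G.Adj b w}.ncard ≤ 2 * q


namespace KCW

open Finset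

open scoped Classical

variable {n k : ℕ}

/-- Finset of non-neighbours of `A` (also excluding `A` itself). -/
noncomputable def ncF (G : SimpleGraph (Fin n)) (A : Finset (Fin n)) : Finset (Fin n) :=
  Finset.univ.filter (fun w => ∀ u ∈ A, w ≠ u ∧ ¬ G.Adj u w)

lemma mem_ncF {G : SimpleGraph (Fin n)} {A : Finset (Fin n)} {w : Fin n} :
    w ∈ ncF G A ↔ ∀ u ∈ A, w ≠ u ∧ ¬ G.Adj u w := by
  simp [ncF]

lemma coe_ncF (G : SimpleGraph (Fin n)) (A : Finset (Fin n)) :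
    ({w : Fin n | ∀ u ∈ A, w ≠ u ∧ ¬ G.Adj u w} : Set (Fin n)) = ↑(ncF G A) := by
  ext w; simp [ncF]

lemma ncard_ncF (G : SimpleGraph (Fin n)) (A : Finset (Fin n)) :
    {w : Fin n | ∀ u ∈ A, w ≠ u ∧ ¬ G.Adj u w}.ncard = (ncF G A).card := by
  rw [coe_ncF, Set.ncard_coe_finset]

lemma pad (c : Fin k → Fin n) (r : Fin n) (hr : ∀ i, c i ≠ r) (hn : k + 1 ≤ n) :
    ∃ A : Finset (Fin n), A.card = k ∧ (∀ i, c i ∈ A) ∧ r ∉ A := by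
  have h1 : Finset.univ.image c ⊆ Finset.univ.erase r := by
    intro x hx
    simp only [mem_image] at hx
    obtain ⟨i, -, rfl⟩ := hx
    exact mem_erase.2 ⟨hr i, mem_univ _⟩
  have h2 : (Finset.univ.image c).card ≤ k := card_image_le.trans (by simp)
  have h3 : k ≤ (Finset.univ.erase r).card := by
    rw [card_erase_of_mem (mem_univ r), card_univ, Fintype.card_fin]
    omega
  obtain ⟨A, hA1, hA2, hA3⟩ := Finset.exists_subsuperset_card_eq h1 h2 h3
  exact ⟨A, hA3, fun i => hA1 (mem_image_of_mem c (mem_univ i)),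
    fun h => (mem_erase.1 (hA2 h)).1 rfl⟩

lemma extraction (G : SimpleGraph (Fin n)) (hwin : IsKCopWin G k)
    (hn : k + 1 ≤ n) (B : Finset (Fin n))
    (hδ : ∀ S : Finset (Fin n), S.card = k → B.card < (ncF G S).card) :
    ∃ b A, b ∉ B ∧ A.card = k ∧ b ∉ A ∧
      ∀ w ∈ ncF G A, (w = b ∨ G.Adj b w) → w ∈ B := by
  by_contra hcon
  push_neg at hcon
  have hcon' : ∀ b : Fin n, b ∉ B → ∀ A : Finset (Fin n), A.card = k → b ∉ A →
      ∃ w ∈ ncF G A, (w = b ∨ G.Adj b w) ∧ w ∉ B := by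
    intro b hb A hA hbA
    obtain ⟨w, hw1, hw2, hw3⟩ := hcon b A hb hA hbA
    exact ⟨w, hw1, hw2, hw3⟩
  have key : ∀ (c : Fin k → Fin n) (r : Fin n), CopsWinPos G c r → (r ∉ B ∧ ∀ i, r ≠ c i ∧ ¬ G.Adj (c i) r) → False := by
    intro c r hpos
    induction hpos with
    | capture c r c' hmove hc =>
        rintro ⟨hB, hsafe⟩
        obtain ⟨i, hi⟩ := hc
        rcases hmove i with h | h
        · exact (hsafe i).1 (hi ▸ h)
        · exact (hsafe i).2 (hi ▸ h)
    | advance c r c' hmove h ih =>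
        rintro ⟨hB, hsafe⟩
        have hrc' : ∀ i, c' i ≠ r := by
          intro i hi
          rcases hmove i with h' | h'
          · exact (hsafe i).1 (hi ▸ h')
          · exact (hsafe i).2 (hi ▸ h')
        obtain ⟨A, hAcard, hAmem, hrA⟩ := pad c' r hrc' hn
        obtain ⟨w, hwnc, hwadj, hwB⟩ := hcon' r hB A hAcard hrA
        refine ih w hwadj ⟨hwB, fun i => ?_⟩
        exact (mem_ncF.1 hwnc) (c' i) (hAmem i)
  obtain ⟨c, hc⟩ := hwin
  -- initial robber position
  have h1 : Finset.univ.image c ⊆ Finset.univ := subset_univ _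
  have h2 : (Finset.univ.image c).card ≤ k := card_image_le.trans (by simp)
  have h3 : k ≤ (Finset.univ : Finset (Fin n)).card := by
    rw [card_univ, Fintype.card_fin]; omega
  obtain ⟨A₀, hA01, -, hA03⟩ := Finset.exists_subsuperset_card_eq h1 h2 h3
  have hex : ∃ r ∈ ncF G A₀, r ∉ B := by
    by_contra hno
    push_neg at hno
    exact absurd (Finset.card_le_card hno) (not_le.2 (hδ A₀ hA03))
  obtain ⟨r, hr1, hr2⟩ := hex
  have hsafe : ∀ i, r ≠ c i ∧ ¬ G.Adj (c i) r :=
    fun i => (mem_ncF.1 hr1) (c i) (hA01 (mem_image_of_mem c (mem_univ i)))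
  rcases hc r with ⟨i, hi⟩ | hpos
  · exact (hsafe i).1 hi.symm
  · exact key c r hpos ⟨hr2, hsafe⟩


/-- Accumulated vertex set of a list of (vertex, finset) pairs. -/
def Bf : List (Fin n × Finset (Fin n)) → Finset (Fin n)
  | [] => ∅
  | p :: t => insert p.1 (p.2 ∪ Bf t)

/-- A chain of "stuck" configurations, most recent first. -/
def Chain (G : SimpleGraph (Fin n)) (k : ℕ) : List (Fin n × Finset (Fin n)) → Prop
  | [] => True
  | p :: t => Chain G k t ∧ p.2.card = k ∧ p.1 ∉ p.2 ∧ p.1 ∉ Bf t ∧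
      ∀ w ∈ ncF G p.2, (w = p.1 ∨ G.Adj p.1 w) → w ∈ Bf t

lemma card_Bf {G : SimpleGraph (Fin n)} : ∀ {l : List (Fin n × Finset (Fin n))},
    Chain G k l → (Bf l).card ≤ l.length * (k + 1)
  | [], _ => by simp [Bf]
  | p :: t, h => by
    have ih := card_Bf (G := G) h.1
    calc (Bf (p :: t)).card ≤ (p.2 ∪ Bf t).card + 1 := Finset.card_insert_le _ _
      _ ≤ (p.2.card + (Bf t).card) + 1 := by
          exact Nat.add_le_add_right (Finset.card_union_le _ _) 1
      _ ≤ (k + t.length * (k+1)) + 1 := by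
          have := h.2.1
          omega
      _ ≤ (p :: t).length * (k + 1) := by simp [List.length_cons]; ring_nf; omega

lemma mem_Bf_fst {l : List (Fin n × Finset (Fin n))} {p} (hp : p ∈ l) : p.1 ∈ Bf l := by
  induction l with
  | nil => simp at hp
  | cons q t ih =>
      rcases List.mem_cons.1 hp with rfl | hp'
      · exact Finset.mem_insert_self _ _
      · exact Finset.mem_insert_of_mem (Finset.mem_union_right _ (ih hp'))

lemma mem_Bf_snd {l : List (Fin n × Finset (Fin n))} {p} (hp : p ∈ l) : p.2 ⊆ Bf l := by
  induction l with
  | nil => simp at hp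
  | cons q t ih =>
      rcases List.mem_cons.1 hp with rfl | hp'
      · exact fun x hx => Finset.mem_insert_of_mem (Finset.mem_union_left _ hx)
      · exact fun x hx => Finset.mem_insert_of_mem (Finset.mem_union_right _ (ih hp' hx))

lemma Bf_tail_subset (p) (t : List (Fin n × Finset (Fin n))) : Bf t ⊆ Bf (p :: t) :=
  fun x hx => Finset.mem_insert_of_mem (Finset.mem_union_right _ hx)

lemma chain_mem {G : SimpleGraph (Fin n)} : ∀ {l : List (Fin n × Finset (Fin n))},
    Chain G k l → ∀ p ∈ l, p.2.card = k ∧ p.1 ∉ p.2 ∧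
      ∀ w ∈ ncF G p.2, (w = p.1 ∨ G.Adj p.1 w) → w ∈ Bf l
  | [], _, p, hp => by simp at hp
  | q :: t, h, p, hp => by
      rcases List.mem_cons.1 hp with rfl | hp'
      · exact ⟨h.2.1, h.2.2.1, fun w hw hadj => Bf_tail_subset _ _ (h.2.2.2.2 w hw hadj)⟩
      · obtain ⟨h1, h2, h3⟩ := chain_mem h.1 p hp'
        exact ⟨h1, h2, fun w hw hadj => Bf_tail_subset _ _ (h3 w hw hadj)⟩

lemma chain_pairwise {G : SimpleGraph (Fin n)} : ∀ {l : List (Fin n × Finset (Fin n))},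
    Chain G k l → l.Pairwise (fun p q => p.1 ≠ q.1 ∧ p.1 ∉ q.2)
  | [], _ => List.Pairwise.nil
  | p :: t, h => by
      refine List.Pairwise.cons (fun q hq => ?_) (chain_pairwise h.1)
      have h1 := mem_Bf_fst hq
      have h2 := mem_Bf_snd hq
      exact ⟨fun he => h.2.2.2.1 (he ▸ h1), fun he => h.2.2.2.1 (h2 he)⟩

lemma iterate (G : SimpleGraph (Fin n)) (hwin : IsKCopWin G k) (hn : k + 1 ≤ n) (m : ℕ)
    (hδ : ∀ S : Finset (Fin n), S.card = k → m * (k+1) < (ncF G S).card) :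
    ∃ l : List (Fin n × Finset (Fin n)), l.length = m ∧ Chain G k l := by
  induction m with
  | zero => exact ⟨[], rfl, trivial⟩
  | succ m ih =>
      obtain ⟨l, hlen, hch⟩ := ih (fun S hS => lt_of_le_of_lt
        (Nat.mul_le_mul_right _ (Nat.le_succ m)) (hδ S hS))
      have hB : (Bf l).card ≤ m * (k+1) := hlen ▸ card_Bf hch
      obtain ⟨b, A, hb, hA, hbA, hcon⟩ := extraction G hwin hn (Bf l)
        (fun S hS => lt_of_le_of_lt (hB.trans (Nat.mul_le_mul_right _ (Nat.le_succ m))) (hδ S hS))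
      exact ⟨(b, A) :: l, by simp [hlen], hch, hA, hbA, hb, hcon⟩

/-- Cleanup: greedily keep the head, drop later pairs whose vertex lies in its set. -/
def cleanL : List (Fin n × Finset (Fin n)) → List (Fin n × Finset (Fin n))
  | [] => []
  | p :: t => p :: cleanL (t.filter (fun q => q.1 ∉ p.2))
  termination_by l => l.length
  decreasing_by simp only [List.length_unattach, List.length_cons]; exact Nat.lt_succ_of_le ((List.length_filter_le _ _).trans_eq List.length_attach)

lemma cleanL_sublist : ∀ l : List (Fin n × Finset (Fin n)), (cleanL l).Sublist l
  | [] => by rw [cleanL]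
  | p :: t => by
    rw [cleanL]
    exact List.Sublist.cons₂ p ((cleanL_sublist _).trans List.filter_sublist)
  termination_by l => l.length
  decreasing_by simpa using Nat.lt_succ_of_le (List.length_filter_le _ _)

lemma cleanL_length : ∀ l : List (Fin n × Finset (Fin n)),
    (∀ p ∈ l, p.2.card ≤ k) → (l.map Prod.fst).Nodup →
    l.length ≤ (cleanL l).length * (k + 1)
  | [], _, _ => by simp
  | p :: t, hc, hnd => by
    rw [cleanL]
    have hnd' : (t.map Prod.fst).Nodup := (List.nodup_cons.1 hnd).2
    have hsub : ((t.filter (fun q => q.1 ∉ p.2)).map Prod.fst).Nodup :=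
      List.Nodup.sublist (List.Sublist.map _ List.filter_sublist) hnd'
    have ih := cleanL_length (t.filter (fun q => q.1 ∉ p.2))
      (fun q hq => hc q (List.mem_cons_of_mem _ (List.mem_of_mem_filter hq))) hsub
    -- removed elements have distinct fst all in p.2
    have hrem : (t.filter (fun q => decide (q.1 ∈ p.2))).length ≤ k := by
      have hnd2 : ((t.filter (fun q => decide (q.1 ∈ p.2))).map Prod.fst).Nodup :=
        List.Nodup.sublist (List.Sublist.map _ List.filter_sublist) hnd'
      have hsub2 : ∀ x ∈ (t.filter (fun q => decide (q.1 ∈ p.2))).map Prod.fst, x ∈ p.2 := by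
        intro x hx
        obtain ⟨q, hq, rfl⟩ := List.mem_map.1 hx
        simpa using (List.mem_filter.1 hq).2
      calc (t.filter (fun q => decide (q.1 ∈ p.2))).length
          = ((t.filter (fun q => decide (q.1 ∈ p.2))).map Prod.fst).length := by
            rw [List.length_map]
        _ = ((t.filter (fun q => decide (q.1 ∈ p.2))).map Prod.fst).toFinset.card :=
            (List.toFinset_card_of_nodup hnd2).symm
        _ ≤ p.2.card := Finset.card_le_card (fun x hx => hsub2 x (List.mem_toFinset.1 hx))
        _ ≤ k := hc p List.mem_cons_self
    have hsplit : t.length ≤ (t.filter (fun q => q.1 ∉ p.2)).length + k := by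
      have heq := List.length_eq_length_filter_add (l := t) (fun q => decide (q.1 ∉ p.2))
      have hnn : (t.filter (fun q => !decide (q.1 ∉ p.2))).length
          = (t.filter (fun q => decide (q.1 ∈ p.2))).length := by
        congr 1
        apply List.filter_congr
        intro q _
        simp
      rw [hnn] at heq
      omega
    simp only [List.length_cons]
    calc t.length + 1 ≤ ((t.filter (fun q => q.1 ∉ p.2)).length + k) + 1 := by omega
      _ ≤ ((cleanL (t.filter (fun q => q.1 ∉ p.2))).length * (k+1) + k) + 1 := by omega
      _ = ((cleanL (t.filter (fun q => q.1 ∉ p.2))).length + 1) * (k+1) := by ring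
  termination_by l => l.length
  decreasing_by simpa using Nat.lt_succ_of_le (List.length_filter_le _ _)

lemma cleanL_pairwise : ∀ l : List (Fin n × Finset (Fin n)),
    l.Pairwise (fun p q => p.1 ≠ q.1 ∧ p.1 ∉ q.2) →
    (cleanL l).Pairwise (fun p q => p.1 ≠ q.1 ∧ p.1 ∉ q.2 ∧ q.1 ∉ p.2)
  | [], _ => by rw [cleanL]; exact List.Pairwise.nil
  | p :: t, h => by
    rw [cleanL]
    obtain ⟨hhead, htail⟩ := List.pairwise_cons.1 h
    refine List.Pairwise.cons (fun q hq => ?_) (cleanL_pairwise _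
      (htail.sublist List.filter_sublist))
    have hq1 : q ∈ t.filter (fun q => q.1 ∉ p.2) := (cleanL_sublist _).subset hq
    have hq2 : q ∈ t := List.mem_of_mem_filter hq1
    have hq3 : q.1 ∉ p.2 := by simpa using (List.mem_filter.1 hq1).2
    exact ⟨(hhead q hq2).1, (hhead q hq2).2, hq3⟩
  termination_by l => l.length
  decreasing_by simpa using Nat.lt_succ_of_le (List.length_filter_le _ _)


lemma card_subsets {α : Type*} (t : Finset α) : Nat.card {s : Finset α // s ⊆ t} = 2 ^ t.card := by
  have e : {s : Finset α // s ⊆ t} ≃ {s : Finset α // s ∈ t.powerset} :=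
    Equiv.subtypeEquivRight (fun s => (Finset.mem_powerset).symm)
  rw [Nat.card_congr e, Nat.card_eq_fintype_card, Fintype.card_coe, Finset.card_powerset]

lemma card_graphs_le (n : ℕ) : Nat.card (SimpleGraph (Fin n)) ≤ 2 ^ (n * (n-1) / 2) := by
  classical
  have hinj : Function.Injective (fun G : SimpleGraph (Fin n) =>
      (⟨G.edgeFinset, SimpleGraph.edgeFinset_mono le_top⟩ :
        {s : Finset (Sym2 (Fin n)) // s ⊆ (⊤ : SimpleGraph (Fin n)).edgeFinset})) := by
    intro G G' h
    have h2 := congrArg Subtype.val h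
    simpa only [SimpleGraph.edgeFinset_inj] using h2
  calc Nat.card (SimpleGraph (Fin n))
      ≤ Nat.card {s : Finset (Sym2 (Fin n)) // s ⊆ (⊤ : SimpleGraph (Fin n)).edgeFinset} :=
        Nat.card_le_card_of_injective _ hinj
    _ = 2 ^ ((⊤ : SimpleGraph (Fin n)).edgeFinset.card) := card_subsets _
    _ = 2 ^ (n * (n-1) / 2) := by
        rw [SimpleGraph.card_edgeFinset_top_eq_card_choose_two, Fintype.card_fin,
          Nat.choose_two_right]

section Counting

variable (Lc s₀ : ℕ) (B : Finset (Fin n)) (b : Fin Lc → Fin n) (A : Fin Lc → Finset (Fin n))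

lemma count_main (hbinj : Function.Injective b) (hbB : ∀ i, b i ∈ B)
    (hAb : ∀ i j, b i ∉ A j) :
    Nat.card {G : SimpleGraph (Fin n) //
        ∀ i, s₀ ≤ (ncF G (A i) \ B).card ∧ ∀ w ∈ ncF G (A i) \ B, ¬ G.Adj (b i) w}
      * 2 ^ (Lc * s₀) ≤ 2 ^ (n * (n-1) / 2) := by
  classical
  set P : SimpleGraph (Fin n) → Prop := fun G =>
    ∀ i, s₀ ≤ (ncF G (A i) \ B).card ∧ ∀ w ∈ ncF G (A i) \ B, ¬ G.Adj (b i) w with hPdef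
  let E : (Fin Lc → Finset (Fin n)) → Set (Sym2 (Fin n)) :=
    fun SS => {e | ∃ i, ∃ w ∈ SS i, e = s(b i, w)}
  let Psi : SimpleGraph (Fin n) → (Fin Lc → Finset (Fin n)) → SimpleGraph (Fin n) :=
    fun G SS => G ⊔ SimpleGraph.fromEdgeSet (E SS)
  have adj_psi : ∀ (G : SimpleGraph (Fin n)) (SS : Fin Lc → Finset (Fin n)),
      (∀ i, SS i ⊆ ncF G (A i) \ B) → ∀ u v : Fin n,
      ((Psi G SS).Adj u v ↔ G.Adj u v ∨ ∃ i, (u = b i ∧ v ∈ SS i) ∨ (v = b i ∧ u ∈ SS i)) := by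
    intro G SS hSS u v
    simp only [Psi, SimpleGraph.sup_adj, SimpleGraph.fromEdgeSet_adj]
    constructor
    · rintro (h | ⟨he, -⟩)
      · exact Or.inl h
      · obtain ⟨i, w, hw, hew⟩ := he
        rw [Sym2.eq_iff] at hew
        rcases hew with ⟨h1, h2⟩ | ⟨h1, h2⟩
        · exact Or.inr ⟨i, Or.inl ⟨h1, h2 ▸ hw⟩⟩
        · exact Or.inr ⟨i, Or.inr ⟨h2, h1 ▸ hw⟩⟩
    · rintro (h | ⟨i, ⟨h1, h2⟩ | ⟨h1, h2⟩⟩)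
      · exact Or.inl h
      · refine Or.inr ⟨⟨i, v, h2, by rw [h1]⟩, fun he => ?_⟩
        have hv := (Finset.mem_sdiff.1 (hSS i h2)).2
        exact hv (he ▸ h1 ▸ hbB i)
      · refine Or.inr ⟨⟨i, u, h2, by rw [h1, Sym2.eq_swap]⟩, fun he => ?_⟩
        have hu := (Finset.mem_sdiff.1 (hSS i h2)).2
        exact hu (he.symm ▸ h1 ▸ hbB i)
  have Tpres : ∀ (G : SimpleGraph (Fin n)) (SS : Fin Lc → Finset (Fin n)),
      (∀ i, SS i ⊆ ncF G (A i) \ B) → ∀ i,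
      ncF (Psi G SS) (A i) \ B = ncF G (A i) \ B := by
    intro G SS hSS i
    ext w
    simp only [Finset.mem_sdiff, mem_ncF]
    constructor
    · rintro ⟨h1, h2⟩
      refine ⟨fun u hu => ⟨(h1 u hu).1, fun hadj => (h1 u hu).2 ?_⟩, h2⟩
      exact (adj_psi G SS hSS u w).2 (Or.inl hadj)
    · rintro ⟨h1, h2⟩
      refine ⟨fun u hu => ⟨(h1 u hu).1, fun hadj => ?_⟩, h2⟩
      rcases (adj_psi G SS hSS u w).1 hadj with h | ⟨j, ⟨hj1, hj2⟩ | ⟨hj1, hj2⟩⟩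
      · exact (h1 u hu).2 h
      · exact hAb j i (hj1 ▸ hu)
      · exact h2 (hj1 ▸ hbB j)
  have Srec : ∀ (G : SimpleGraph (Fin n)) (hG : P G) (SS : Fin Lc → Finset (Fin n))
      (hSS : ∀ i, SS i ⊆ ncF G (A i) \ B) (i : Fin Lc) (w : Fin n),
      (w ∈ SS i ↔ w ∈ ncF (Psi G SS) (A i) \ B ∧ (Psi G SS).Adj (b i) w) := by
    intro G hG SS hSS i w
    rw [Tpres G SS hSS i]
    constructor
    · intro hw
      exact ⟨hSS i hw, (adj_psi G SS hSS (b i) w).2 (Or.inr ⟨i, Or.inl ⟨rfl, hw⟩⟩)⟩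
    · rintro ⟨hwT, hadj⟩
      rcases (adj_psi G SS hSS (b i) w).1 hadj with h | ⟨j, ⟨hj1, hj2⟩ | ⟨hj1, hj2⟩⟩
      · exact absurd h ((hG i).2 w hwT)
      · exact (hbinj hj1) ▸ hj2
      · exact absurd (hbB i) (Finset.mem_sdiff.1 (hSS j hj2)).2
  have Grec : ∀ (G : SimpleGraph (Fin n)) (hG : P G) (SS : Fin Lc → Finset (Fin n))
      (hSS : ∀ i, SS i ⊆ ncF G (A i) \ B) (u v : Fin n),
      (G.Adj u v ↔ (Psi G SS).Adj u v ∧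
        ¬ ∃ i, (u = b i ∧ v ∈ SS i) ∨ (v = b i ∧ u ∈ SS i)) := by
    intro G hG SS hSS u v
    constructor
    · intro hadj
      refine ⟨(SimpleGraph.sup_adj _ _ _ _).2 (Or.inl hadj), ?_⟩
      rintro ⟨i, ⟨h1, h2⟩ | ⟨h1, h2⟩⟩
      · have hT : v ∈ ncF G (A i) \ B := hSS i h2
        exact (hG i).2 v hT (h1 ▸ hadj)
      · have hT : u ∈ ncF G (A i) \ B := hSS i h2
        exact (hG i).2 u hT (h1 ▸ hadj.symm)
    · rintro ⟨hadj, hnot⟩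
      rcases (adj_psi G SS hSS u v).1 hadj with h | hex
      · exact h
      · exact absurd hex hnot
  -- the injection
  let F : (Σ g : {G : SimpleGraph (Fin n) // P G},
      ∀ i : Fin Lc, {s : Finset (Fin n) // s ⊆ ncF g.1 (A i) \ B}) → SimpleGraph (Fin n) :=
    fun x => Psi x.1.1 (fun i => (x.2 i).1)
  have hFinj : Function.Injective F := by
    rintro ⟨⟨G, hG⟩, S⟩ ⟨⟨G', hG'⟩, S'⟩ hEq
    have hSS : ∀ i, (fun i => (S i).1) i ⊆ ncF G (A i) \ B := fun i => (S i).2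
    have hSS' : ∀ i, (fun i => (S' i).1) i ⊆ ncF G' (A i) \ B := fun i => (S' i).2
    have hEq' : Psi G (fun i => (S i).1) = Psi G' (fun i => (S' i).1) := hEq
    have hS : ∀ i, (S i).1 = (S' i).1 := by
      intro i
      ext w
      rw [Srec G hG _ hSS i w, Srec G' hG' _ hSS' i w, hEq']
    have hGG : G = G' := by
      ext u v
      rw [Grec G hG _ hSS u v, Grec G' hG' _ hSS' u v, hEq']
      constructor
      · rintro ⟨h1, h2⟩
        exact ⟨h1, fun ⟨i, hc⟩ => h2 ⟨i, by
          rcases hc with ⟨ha, hb'⟩ | ⟨ha, hb'⟩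
          · exact Or.inl ⟨ha, (hS i) ▸ hb'⟩
          · exact Or.inr ⟨ha, (hS i) ▸ hb'⟩⟩⟩
      · rintro ⟨h1, h2⟩
        exact ⟨h1, fun ⟨i, hc⟩ => h2 ⟨i, by
          rcases hc with ⟨ha, hb'⟩ | ⟨ha, hb'⟩
          · exact Or.inl ⟨ha, (hS i).symm ▸ hb'⟩
          · exact Or.inr ⟨ha, (hS i).symm ▸ hb'⟩⟩⟩
    subst hGG
    have hSeq : S = S' := funext fun i => Subtype.ext (hS i)
    subst hSeq
    rfl
  -- cardinality chain
  have hcard1 : Nat.card (Σ g : {G : SimpleGraph (Fin n) // P G},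
      ∀ i : Fin Lc, {s : Finset (Fin n) // s ⊆ ncF g.1 (A i) \ B})
      = ∑ g : {G : SimpleGraph (Fin n) // P G}, ∏ i : Fin Lc, 2 ^ ((ncF g.1 (A i) \ B).card) := by
    rw [Nat.card_eq_fintype_card, Fintype.card_sigma]
    congr 1
    funext g
    rw [Fintype.card_pi]
    congr 1
    funext i
    rw [← Nat.card_eq_fintype_card, card_subsets]
  have hlow : Nat.card {G : SimpleGraph (Fin n) // P G} * 2 ^ (Lc * s₀)
      ≤ ∑ g : {G : SimpleGraph (Fin n) // P G}, ∏ i : Fin Lc, 2 ^ ((ncF g.1 (A i) \ B).card) := by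
    rw [Nat.card_eq_fintype_card]
    calc Fintype.card {G : SimpleGraph (Fin n) // P G} * 2 ^ (Lc * s₀)
        = ∑ _g : {G : SimpleGraph (Fin n) // P G}, 2 ^ (Lc * s₀) := by
          rw [Finset.sum_const, smul_eq_mul, Finset.card_univ]
      _ ≤ _ := by
          apply Finset.sum_le_sum
          intro g _
          rw [Finset.prod_pow_eq_pow_sum]
          apply Nat.pow_le_pow_right (by norm_num)
          calc Lc * s₀ = ∑ _i : Fin Lc, s₀ := by
                rw [Finset.sum_const, smul_eq_mul, Finset.card_univ, Fintype.card_fin]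
            _ ≤ ∑ i : Fin Lc, (ncF g.1 (A i) \ B).card :=
                Finset.sum_le_sum (fun i _ => (g.2 i).1)
  calc Nat.card {G : SimpleGraph (Fin n) // P G} * 2 ^ (Lc * s₀)
      ≤ Nat.card (Σ g : {G : SimpleGraph (Fin n) // P G},
          ∀ i : Fin Lc, {s : Finset (Fin n) // s ⊆ ncF g.1 (A i) \ B}) := by
        rw [hcard1]; exact hlow
    _ ≤ Nat.card (SimpleGraph (Fin n)) := Nat.card_le_card_of_injective F hFinj
    _ ≤ 2 ^ (n * (n-1) / 2) := card_graphs_le n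

lemma count_main' (hk : 1 ≤ Lc) :
    Nat.card {G : SimpleGraph (Fin n) //
        (Function.Injective b ∧ (∀ i, b i ∈ B) ∧ (∀ i j, b i ∉ A j)) ∧
        ∀ i, s₀ ≤ (ncF G (A i) \ B).card ∧ ∀ w ∈ ncF G (A i) \ B, ¬ G.Adj (b i) w}
      * 2 ^ (Lc * s₀) ≤ 2 ^ (n * (n-1) / 2) := by
  classical
  by_cases hhyp : Function.Injective b ∧ (∀ i, b i ∈ B) ∧ (∀ i j, b i ∉ A j)
  · have hle : Nat.card {G : SimpleGraph (Fin n) //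
        (Function.Injective b ∧ (∀ i, b i ∈ B) ∧ (∀ i j, b i ∉ A j)) ∧
        ∀ i, s₀ ≤ (ncF G (A i) \ B).card ∧ ∀ w ∈ ncF G (A i) \ B, ¬ G.Adj (b i) w}
        ≤ Nat.card {G : SimpleGraph (Fin n) //
        ∀ i, s₀ ≤ (ncF G (A i) \ B).card ∧ ∀ w ∈ ncF G (A i) \ B, ¬ G.Adj (b i) w} := by
      apply Nat.card_le_card_of_injective (fun g => ⟨g.1, g.2.2⟩)
      intro g g' h
      have h2 : g.1.Adj = g'.1.Adj := congrArg (fun x => SimpleGraph.Adj x.1) h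
      exact Subtype.ext (SimpleGraph.ext h2)
    exact le_trans (Nat.mul_le_mul_right _ hle)
      (count_main Lc s₀ B b A hhyp.1 hhyp.2.1 hhyp.2.2)
  · have hempty : IsEmpty {G : SimpleGraph (Fin n) //
        (Function.Injective b ∧ (∀ i, b i ∈ B) ∧ (∀ i j, b i ∉ A j)) ∧
        ∀ i, s₀ ≤ (ncF G (A i) \ B).card ∧ ∀ w ∈ ncF G (A i) \ B, ¬ G.Adj (b i) w} :=
      ⟨fun g => hhyp g.2.1⟩
    rw [Nat.card_of_isEmpty]
    simp

end Counting

lemma union_count {α : Type*} [Fintype α] {D : Type*} [Fintype D] (P : D → α → Prop)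
    (Q : α → Prop) (h : ∀ a, Q a → ∃ d, P d a) (c m : ℕ)
    (hper : ∀ d, Nat.card {a // P d a} * c ≤ m) :
    Nat.card {a // Q a} * c ≤ Fintype.card D * m := by
  classical
  have hF : ∀ a : {a // Q a}, ∃ d, P d a.1 := fun a => h a.1 a.2
  let F : {a // Q a} → Σ d : D, {a // P d a} :=
    fun a => ⟨Classical.choose (hF a), ⟨a.1, Classical.choose_spec (hF a)⟩⟩
  have hFinj : Function.Injective F := by
    intro a a' hEq
    have h3 := congrArg (fun x : Σ d : D, {a // P d a} => (x.2.1 : α)) hEq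
    exact Subtype.ext h3
  have h1 : Nat.card {a // Q a} ≤ ∑ d : D, Nat.card {a // P d a} := by
    calc Nat.card {a // Q a} ≤ Nat.card (Σ d : D, {a // P d a}) :=
          Nat.card_le_card_of_injective F hFinj
      _ = ∑ d : D, Nat.card {a // P d a} := by
          rw [Nat.card_eq_fintype_card, Fintype.card_sigma]
          simp [Nat.card_eq_fintype_card]
  calc Nat.card {a // Q a} * c ≤ (∑ d : D, Nat.card {a // P d a}) * c :=
        Nat.mul_le_mul_right _ h1
    _ = ∑ d : D, Nat.card {a // P d a} * c := by rw [Finset.sum_mul]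
    _ ≤ ∑ _d : D, m := Finset.sum_le_sum (fun d _ => hper d)
    _ = Fintype.card D * m := by rw [Finset.sum_const, smul_eq_mul, Finset.card_univ]

lemma encode_finset {α : Type*} [DecidableEq α] (M : ℕ) (s : Finset α) (hne : s.Nonempty)
    (hcard : s.card ≤ M) : ∃ f : Fin M → α, Finset.image f Finset.univ = s := by
  obtain ⟨a, ha⟩ := hne
  refine ⟨fun i => s.toList.getD i a, ?_⟩
  ext x
  simp only [Finset.mem_image, Finset.mem_univ, true_and]
  constructor
  · rintro ⟨i, rfl⟩
    rcases lt_or_ge (i : ℕ) s.toList.length with h | h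
    · rw [List.getD_eq_getElem _ _ h]
      exact Finset.mem_toList.1 (List.getElem_mem h)
    · rw [List.getD_eq_default _ _ h]
      exact ha
  · intro hx
    have hxl : x ∈ s.toList := Finset.mem_toList.2 hx
    obtain ⟨i, hi, hget⟩ := List.getElem_of_mem hxl
    have hiM : i < M := lt_of_lt_of_le (by simpa [Finset.length_toList] using hi) hcard
    refine ⟨⟨i, hiM⟩, ?_⟩
    rw [List.getD_eq_getElem _ _ (by simpa using hi)]
    exact hget

end KCW

open KCW

/-- Theorem (b): for every `ξ > 0` there is `ε > 0` such that for all large `n`, the number of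
labelled `k`-cop-win graphs on `{1,…,n}` with `δ_k > ξn` is at most
`2^{(log₂(1-2^{-k}) - ε) n} · 2^{n(n-1)/2}`. -/
theorem kCopWin_large_deltaK_count (k : ℕ) (hk : 1 ≤ k) (ξ : ℝ) (hξ : 0 < ξ) :
    ∃ ε : ℝ, 0 < ε ∧
      ∀ᶠ n : ℕ in atTop,
        (Nat.card {G : SimpleGraph (Fin n) //
            IsKCopWin G k ∧ ξ * n < (deltaK G k : ℝ)} : ℝ) ≤
          2 ^ ((Real.logb 2 (1 - 2 ^ (-(k : ℝ))) - ε) * n) * 2 ^ (n * (n - 1) / 2) := by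
  classical
  refine ⟨1/2, by norm_num, ?_⟩
  set L : ℝ := Real.logb 2 (1 - 2 ^ (-(k : ℝ))) with hLdef
  have hL : -1 ≤ L := by
    have h2k : (2:ℝ) ^ (-(k:ℝ)) ≤ 2 ^ (-1:ℝ) := by
      apply Real.rpow_le_rpow_of_exponent_le (by norm_num)
      have : (1:ℝ) ≤ (k:ℝ) := by exact_mod_cast hk
      linarith
    have h2k' : (2:ℝ) ^ (-1:ℝ) = 1/2 := by
      rw [Real.rpow_neg_one]; norm_num
    have hhalf : (1:ℝ)/2 ≤ 1 - 2 ^ (-(k:ℝ)) := by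
      rw [h2k'] at h2k; linarith
    have hm1 : Real.logb 2 (1/2) = -1 := by
      rw [show (1:ℝ)/2 = 2 ^ (-1:ℝ) by rw [Real.rpow_neg_one]; norm_num]
      exact Real.logb_rpow (b := 2) (by norm_num) (by norm_num)
    calc (-1:ℝ) = Real.logb 2 (1/2) := hm1.symm
      _ ≤ L := Real.logb_le_logb_of_le (b := 2) (x := 1/2) (by norm_num) (by norm_num) hhalf
  -- constants
  set ℓ₀ : ℕ := ⌈(5:ℝ)/ξ⌉₊ + 1 with hl0
  have hℓ₀pos : 1 ≤ ℓ₀ := Nat.le_add_left 1 _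
  have hξℓ₀ : 5 ≤ ξ * ℓ₀ := by
    have h1 : (5:ℝ)/ξ ≤ ℓ₀ := by
      calc (5:ℝ)/ξ ≤ ⌈(5:ℝ)/ξ⌉₊ := Nat.le_ceil _
        _ ≤ ℓ₀ := by rw [hl0]; push_cast; linarith
    calc (5:ℝ) = ξ * (5/ξ) := by field_simp
      _ ≤ ξ * ℓ₀ := mul_le_mul_of_nonneg_left h1 hξ.le
  set m₀ : ℕ := ℓ₀ * (k+1) with hm0
  set M : ℕ := m₀ * (k+1) with hM
  set QM : ℕ := M + (k+1) * ℓ₀ with hQM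
  -- eventual facts
  have hev1 : ∀ᶠ N : ℕ in atTop, (N:ℝ)^QM / 2^N ≤ 1 := by
    have ht := tendsto_pow_const_div_const_pow_of_one_lt QM (by norm_num : (1:ℝ) < 2)
    exact (ht.eventually_lt_const (by norm_num : (0:ℝ) < 1)).mono (fun N h => le_of_lt h)
  have hev2 : ∀ᶠ N : ℕ in atTop, (M:ℝ) + 1 ≤ ξ * N := by
    have ht : Tendsto (fun N : ℕ => ξ * N) atTop atTop :=
      Tendsto.const_mul_atTop hξ tendsto_natCast_atTop_atTop
    exact ht.eventually_ge_atTop _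
  have hev3 : ∀ᶠ N : ℕ in atTop, 2 * (ℓ₀:ℝ) * M ≤ N := by
    have ht : Tendsto (fun N : ℕ => (N:ℝ)) atTop atTop := tendsto_natCast_atTop_atTop
    exact ht.eventually_ge_atTop _
  filter_upwards [hev1, hev2, hev3, eventually_ge_atTop (k+1), eventually_ge_atTop 1]
    with n h1 h2 h3 h4 h5
  -- fixed n
  set s₀ : ℕ := ⌊ξ * n⌋₊ + 1 - M with hs0
  have hMfl : M ≤ ⌊ξ * n⌋₊ := by
    apply Nat.le_floor
    linarith
  have hs₀real : ξ * n - M ≤ (s₀:ℝ) := by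
    have hfl : ξ * n < (⌊ξ*n⌋₊:ℝ) + 1 := Nat.lt_floor_add_one _
    have hcast : (s₀:ℝ) = ((⌊ξ*n⌋₊ + 1 : ℕ):ℝ) - M := by
      rw [hs0, Nat.cast_sub (by omega)]
    rw [hcast]; push_cast; linarith
  -- the data type
  have hper : ∀ d : (Fin M → Fin n) × (Fin ℓ₀ → Fin n × (Fin k → Fin n)),
      Nat.card {G : SimpleGraph (Fin n) //
        (Function.Injective (fun i => (d.2 i).1) ∧
          (∀ i, (d.2 i).1 ∈ Finset.image d.1 Finset.univ) ∧
          (∀ i j, (d.2 i).1 ∉ Finset.image (d.2 j).2 Finset.univ)) ∧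
        ∀ i, s₀ ≤ (ncF G (Finset.image (d.2 i).2 Finset.univ) \ Finset.image d.1 Finset.univ).card ∧
          ∀ w ∈ ncF G (Finset.image (d.2 i).2 Finset.univ) \ Finset.image d.1 Finset.univ,
            ¬ G.Adj ((d.2 i).1) w} * 2 ^ (ℓ₀ * s₀) ≤ 2 ^ (n * (n-1) / 2) :=
    fun d => KCW.count_main' ℓ₀ s₀ (Finset.image d.1 Finset.univ)
      (fun i => (d.2 i).1) (fun i => Finset.image (d.2 i).2 Finset.univ) hℓ₀pos
  -- data existence
  have hdata : ∀ G : SimpleGraph (Fin n), IsKCopWin G k → ξ * n < (deltaK G k : ℝ) →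
      ∃ d : (Fin M → Fin n) × (Fin ℓ₀ → Fin n × (Fin k → Fin n)),
        (Function.Injective (fun i => (d.2 i).1) ∧
          (∀ i, (d.2 i).1 ∈ Finset.image d.1 Finset.univ) ∧
          (∀ i j, (d.2 i).1 ∉ Finset.image (d.2 j).2 Finset.univ)) ∧
        ∀ i, s₀ ≤ (ncF G (Finset.image (d.2 i).2 Finset.univ) \ Finset.image d.1 Finset.univ).card ∧
          ∀ w ∈ ncF G (Finset.image (d.2 i).2 Finset.univ) \ Finset.image d.1 Finset.univ,
            ¬ G.Adj ((d.2 i).1) w := by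
    intro G hwin hδξ
    have hδS : ∀ S : Finset (Fin n), S.card = k → deltaK G k ≤ (ncF G S).card := by
      intro S hS
      exact Nat.sInf_le ⟨S, hS, ncard_ncF G S⟩
    have hMδ : M < deltaK G k := by
      have hx : (M:ℝ) < (deltaK G k : ℝ) := by linarith
      exact_mod_cast hx
    obtain ⟨l, hlen, hch⟩ := KCW.iterate G hwin h4 m₀ (fun S hS => by
      have : m₀ * (k+1) = M := hM.symm
      rw [this]
      exact lt_of_lt_of_le hMδ (hδS S hS))
    have hchm := KCW.chain_mem hch
    have hcards : ∀ p ∈ l, p.2.card ≤ k := fun p hp => le_of_eq (hchm p hp).1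
    have hpw := KCW.chain_pairwise hch
    have hnodup : (l.map Prod.fst).Nodup := by
      rw [List.Nodup, List.pairwise_map]
      exact hpw.imp (fun h => h.1)
    have hlenc : ℓ₀ ≤ (KCW.cleanL l).length := by
      have hcl := KCW.cleanL_length l hcards hnodup
      rw [hlen] at hcl
      have hcl2 : ℓ₀ * (k+1) ≤ (KCW.cleanL l).length * (k+1) := by rw [← hm0]; exact hcl
      exact Nat.le_of_mul_le_mul_right hcl2 (by omega)
    set lc := (KCW.cleanL l).take ℓ₀ with hlc
    have hlc_len : lc.length = ℓ₀ := by
      rw [hlc, List.length_take]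
      exact Nat.min_eq_left hlenc
    have hlc_sub_l : lc.Sublist l := ((List.take_sublist _ _).trans (KCW.cleanL_sublist l))
    have hlc_pw : lc.Pairwise (fun p q => p.1 ≠ q.1 ∧ p.1 ∉ q.2 ∧ q.1 ∉ p.2) :=
      List.Pairwise.sublist (List.take_sublist _ _) (KCW.cleanL_pairwise l hpw)
    have hm₀pos : 0 < m₀ := by
      rw [hm0]; exact Nat.mul_pos (by omega) (by omega)
    have hBne : (KCW.Bf l).Nonempty := by
      rcases l with _ | ⟨p, t⟩
      · simp at hlen
      · exact ⟨p.1, by simp [KCW.Bf]⟩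
    have hBcard : (KCW.Bf l).card ≤ M := by
      have hcb := KCW.card_Bf hch
      rw [hlen] at hcb
      rw [hM]
      exact hcb
    obtain ⟨fB, hfB⟩ := KCW.encode_finset M (KCW.Bf l) hBne hBcard
    have hidx : ∀ i : Fin ℓ₀, (i : ℕ) < lc.length := fun i => by rw [hlc_len]; exact i.2
    have hprmem : ∀ i : Fin ℓ₀, lc.get ⟨(i:ℕ), hidx i⟩ ∈ l := fun i => hlc_sub_l.subset (List.get_mem lc ⟨(i:ℕ), hidx i⟩)
    have hAcard : ∀ i : Fin ℓ₀, (lc.get ⟨(i:ℕ), hidx i⟩).2.card = k := fun i => (hchm _ (hprmem i)).1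
    have hAne : ∀ i : Fin ℓ₀, (lc.get ⟨(i:ℕ), hidx i⟩).2.Nonempty :=
      fun i => Finset.card_pos.1 (by rw [hAcard i]; omega)
    have hfAex : ∀ i : Fin ℓ₀, ∃ f : Fin k → Fin n,
        Finset.image f Finset.univ = (lc.get ⟨(i:ℕ), hidx i⟩).2 :=
      fun i => KCW.encode_finset k _ (hAne i) (le_of_eq (hAcard i))
    choose fA hfA using hfAex
    have hpair := List.pairwise_iff_get.1 hlc_pw
    refine ⟨(fB, fun i => ((lc.get ⟨(i:ℕ), hidx i⟩).1, fA i)), ⟨?_, ?_, ?_⟩, ?_⟩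
    · intro i j hij
      simp only at hij
      by_contra hne
      rcases Nat.lt_or_ge (i:ℕ) (j:ℕ) with h | h
      · exact ((hpair ⟨(i:ℕ), hidx i⟩ ⟨(j:ℕ), hidx j⟩ (Fin.mk_lt_mk.2 h)).1) hij
      · have hlt : (j:ℕ) < (i:ℕ) := by
          rcases Nat.lt_or_ge (j:ℕ) (i:ℕ) with h' | h'
          · exact h'
          · exact absurd (Fin.ext (le_antisymm h' h)) hne
        exact ((hpair ⟨(j:ℕ), hidx j⟩ ⟨(i:ℕ), hidx i⟩ (Fin.mk_lt_mk.2 hlt)).1) hij.symm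
    · intro i
      show (lc.get ⟨(i:ℕ), hidx i⟩).1 ∈ Finset.image fB Finset.univ
      rw [hfB]
      exact KCW.mem_Bf_fst (hprmem i)
    · intro i j
      show (lc.get ⟨(i:ℕ), hidx i⟩).1 ∉ Finset.image (fA j) Finset.univ
      rw [hfA j]
      rcases eq_or_ne i j with rfl | hne
      · exact (hchm _ (hprmem i)).2.1
      · rcases Nat.lt_or_ge (i:ℕ) (j:ℕ) with h | h
        · exact (hpair ⟨(i:ℕ), hidx i⟩ ⟨(j:ℕ), hidx j⟩ (Fin.mk_lt_mk.2 h)).2.1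
        · have hlt : (j:ℕ) < (i:ℕ) := by
            rcases Nat.lt_or_ge (j:ℕ) (i:ℕ) with h' | h'
            · exact h'
            · exact absurd (Fin.ext (le_antisymm h' h)) hne
          exact (hpair ⟨(j:ℕ), hidx j⟩ ⟨(i:ℕ), hidx i⟩ (Fin.mk_lt_mk.2 hlt)).2.2
    · intro i
      show s₀ ≤ (ncF G (Finset.image (fA i) Finset.univ) \ Finset.image fB Finset.univ).card ∧
        ∀ w ∈ ncF G (Finset.image (fA i) Finset.univ) \ Finset.image fB Finset.univ,
          ¬ G.Adj ((lc.get ⟨(i:ℕ), hidx i⟩).1) w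
      rw [hfA i, hfB]
      constructor
      · have hδle : deltaK G k ≤ (ncF G (lc.get ⟨(i:ℕ), hidx i⟩).2).card := hδS _ (hAcard i)
        have hsd : (ncF G (lc.get ⟨(i:ℕ), hidx i⟩).2).card - (KCW.Bf l).card
            ≤ ((ncF G (lc.get ⟨(i:ℕ), hidx i⟩).2) \ (KCW.Bf l)).card := Finset.le_card_sdiff _ _
        have hfloor : ⌊ξ * n⌋₊ < deltaK G k := by
          have h0 : (0:ℝ) ≤ ξ * n := by positivity
          exact (Nat.floor_lt h0).2 hδξ
        rw [hs0]
        omega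
      · intro w hw hadj
        have hwmem := Finset.mem_sdiff.1 hw
        exact hwmem.2 ((hchm _ (hprmem i)).2.2 w hwmem.1 (Or.inr hadj))
  -- union bound
  have hUB := KCW.union_count
    (fun (d : (Fin M → Fin n) × (Fin ℓ₀ → Fin n × (Fin k → Fin n))) (G : SimpleGraph (Fin n)) =>
      (Function.Injective (fun i => (d.2 i).1) ∧
        (∀ i, (d.2 i).1 ∈ Finset.image d.1 Finset.univ) ∧
        (∀ i j, (d.2 i).1 ∉ Finset.image (d.2 j).2 Finset.univ)) ∧
      ∀ i, s₀ ≤ (ncF G (Finset.image (d.2 i).2 Finset.univ) \ Finset.image d.1 Finset.univ).card ∧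
        ∀ w ∈ ncF G (Finset.image (d.2 i).2 Finset.univ) \ Finset.image d.1 Finset.univ,
          ¬ G.Adj ((d.2 i).1) w)
    (fun G => IsKCopWin G k ∧ ξ * n < (deltaK G k : ℝ))
    (fun G hG => hdata G hG.1 hG.2) (2 ^ (ℓ₀ * s₀)) (2 ^ (n * (n-1) / 2)) hper
  -- card of data type
  have hDTcard : Fintype.card ((Fin M → Fin n) × (Fin ℓ₀ → Fin n × (Fin k → Fin n))) = n ^ QM := by
    have h1 : n * n ^ k = n ^ (k+1) := by rw [pow_succ, mul_comm]
    rw [Fintype.card_prod, Fintype.card_fun, Fintype.card_fun, Fintype.card_prod,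
      Fintype.card_fun]
    simp only [Fintype.card_fin]
    rw [h1, ← pow_mul, ← pow_add, hQM]
  rw [hDTcard] at hUB
  -- pass to the reals
  have hreal : (Nat.card {G : SimpleGraph (Fin n) //
      IsKCopWin G k ∧ ξ * n < (deltaK G k : ℝ)} : ℝ) * 2 ^ (ℓ₀ * s₀)
      ≤ (n:ℝ) ^ QM * 2 ^ (n * (n-1) / 2) := by exact_mod_cast hUB
  have hn0 : (0:ℝ) ≤ n := Nat.cast_nonneg n
  have hpow1 : (n:ℝ)^QM ≤ 2^(n:ℕ) := by
    have h2n : (0:ℝ) < 2^(n:ℕ) := by positivity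
    calc (n:ℝ)^QM = ((n:ℝ)^QM / 2^(n:ℕ)) * 2^(n:ℕ) := by field_simp
      _ ≤ 1 * 2^(n:ℕ) := mul_le_mul_of_nonneg_right h1 h2n.le
      _ = 2^(n:ℕ) := one_mul _
  have hs₀big : (5:ℝ)/2 * n ≤ (ℓ₀:ℝ) * (s₀:ℝ) := by
    have p1 : (ℓ₀:ℝ) * (ξ*n - M) ≤ (ℓ₀:ℝ) * s₀ :=
      mul_le_mul_of_nonneg_left hs₀real (by positivity)
    have p1' : (ℓ₀:ℝ)*(ξ*n) - (ℓ₀:ℝ)*M ≤ (ℓ₀:ℝ)*s₀ := by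
      have : (ℓ₀:ℝ) * (ξ*n - M) = (ℓ₀:ℝ)*(ξ*n) - (ℓ₀:ℝ)*M := by ring
      linarith [p1]
    have p2 : 5 * (n:ℝ) ≤ (ξ * ℓ₀) * n := mul_le_mul_of_nonneg_right hξℓ₀ hn0
    have p2' : 5 * (n:ℝ) ≤ (ℓ₀:ℝ)*(ξ*n) := by
      have : (ξ * (ℓ₀:ℝ)) * n = (ℓ₀:ℝ)*(ξ*n) := by ring
      linarith [p2]
    linarith [p1', p2', h3]
  have hexp : (n:ℝ) ≤ (L - 1/2)*n + ((ℓ₀ * s₀ : ℕ):ℝ) := by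
    have hc : ((ℓ₀ * s₀ : ℕ):ℝ) = (ℓ₀:ℝ)*(s₀:ℝ) := by push_cast; ring
    have hL' : (-3/2:ℝ) * n ≤ (L - 1/2) * n := mul_le_mul_of_nonneg_right (by linarith) hn0
    rw [hc]
    linarith [hs₀big, hL']
  have hkey : (n:ℝ)^QM ≤ 2 ^ ((L - 1/2) * n) * (2:ℝ)^(ℓ₀*s₀) := by
    calc (n:ℝ)^QM ≤ 2^(n:ℕ) := hpow1
      _ = (2:ℝ) ^ ((n:ℕ):ℝ) := (Real.rpow_natCast 2 n).symm
      _ ≤ (2:ℝ) ^ ((L - 1/2)*n + ((ℓ₀*s₀ : ℕ):ℝ)) :=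
          Real.rpow_le_rpow_of_exponent_le (by norm_num) hexp
      _ = (2:ℝ) ^ ((L-1/2)*n) * (2:ℝ) ^ (((ℓ₀*s₀:ℕ)):ℝ) := Real.rpow_add (by norm_num) _ _
      _ = 2 ^ ((L-1/2)*n) * (2:ℝ)^(ℓ₀*s₀) := by rw [Real.rpow_natCast]
  have h2s : (0:ℝ) < 2 ^ (ℓ₀*s₀) := by positivity
  calc (Nat.card {G : SimpleGraph (Fin n) //
      IsKCopWin G k ∧ ξ * n < (deltaK G k : ℝ)} : ℝ)
      ≤ ((n:ℝ)^QM * 2^(n*(n-1)/2)) / 2^(ℓ₀*s₀) := by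
        rw [le_div_iff₀ h2s]
        exact hreal
    _ = ((n:ℝ)^QM / 2^(ℓ₀*s₀)) * 2^(n*(n-1)/2) := by ring
    _ ≤ 2 ^ ((L - 1/2) * n) * 2^(n*(n-1)/2) := by
        apply mul_le_mul_of_nonneg_right _ (by positivity)
        rw [div_le_iff₀ h2s]
        exact hkey
end

section
/- Let k ≥ 1 be an integer. There exist ξ ∈ (0, 1/2] and ε > 0 such that the following holds for every n ≥ 1. Let V = {1,…,n+k+1}, let S ⊆ V with |S| = k, let v ∈ V \ S, let T ⊊ S with |T| = ℓ (0 ≤ ℓ < k), set W = V \ (S ∪ {v}), and let a, b, c be integers with 0 ≤ a ≤ b ≤ n and 0 ≤ c ≤ ξn. Then the number of labelled graphs G on V satisfying simultaneously: (p1) v has no neighbour in S; (p2) exactly b vertices of W are adjacent to v; (p3) exactly c vertices of W have no neighbour in S; (p4) exactly a vertices u ∈ N(v) have at least one neighbour in S and no neighbour in T; and (p5) it is NOT the case that for every U ⊆ W with |U| = k−ℓ and every w ∈ W \ U there exists a vertex w' ∈ N(v) adjacent to w and with no neighbour in T ∪ U; is at most 2^{(log₂(1−2^{−k}) − ε) n}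 · 2^{(n+k+1)(n+k)/2}. -/
open Filter Topology

attribute [local instance] Classical.propDecidable
set_option linter.unusedSectionVars false
set_option linter.unusedVariables false
set_option maxHeartbeats 1000000

abbrev EdgeIdx (N : ℕ) := {p : Fin N × Fin N // p.1 < p.2}

noncomputable def graphEquiv (N : ℕ) : SimpleGraph (Fin N) ≃ (EdgeIdx N → Bool) where
  toFun G p := decide (G.Adj p.1.1 p.1.2)
  invFun f := SimpleGraph.fromRel (fun x y => ∃ h : x < y, f ⟨(x,y), h⟩ = true)
  left_inv G := by
    ext x y
    simp only [SimpleGraph.fromRel_adj]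
    constructor
    · rintro ⟨hne, (⟨h, hf⟩ | ⟨h, hf⟩)⟩
      · simpa using hf
      · exact G.adj_symm (by simpa using hf)
    · intro h
      refine ⟨G.ne_of_adj h, ?_⟩
      rcases lt_or_gt_of_ne (G.ne_of_adj h) with hlt | hgt
      · exact Or.inl ⟨hlt, by simpa using h⟩
      · exact Or.inr ⟨hgt, by simpa using G.adj_symm h⟩
  right_inv f := by
    funext p
    obtain ⟨⟨x, y⟩, hxy⟩ := p
    have hne : x ≠ y := ne_of_lt hxy
    have hnyx : ¬ y < x := asymm hxy
    by_cases hf : f ⟨(x, y), hxy⟩ = true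
    · simp [SimpleGraph.fromRel_adj, hne, hxy, hf]
    · simp only [Bool.not_eq_true] at hf
      simp [SimpleGraph.fromRel_adj, hne, hxy, hnyx, hf]

def pairMk {N : ℕ} (x y : Fin N) (h : x ≠ y) : EdgeIdx N :=
  if h' : x < y then ⟨(x, y), h'⟩ else ⟨(y, x), h.lt_or_gt.resolve_left h'⟩

lemma adj_pairMk {N : ℕ} (f : EdgeIdx N → Bool) (x y : Fin N) (h : x ≠ y) :
    ((graphEquiv N).symm f).Adj x y ↔ f (pairMk x y h) = true := by
  have := (graphEquiv N).right_inv f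
  have hval : (graphEquiv N) ((graphEquiv N).symm f) = f := by
    simp
  have h1 : ∀ p : EdgeIdx N, decide (((graphEquiv N).symm f).Adj p.1.1 p.1.2) = f p := by
    intro p
    have := congrFun hval p
    simpa [graphEquiv] using this
  unfold pairMk
  split_ifs with h'
  · have := h1 ⟨(x, y), h'⟩
    simp only at this
    rw [← this]
    simp
  · have hyx : y < x := h.lt_or_gt.resolve_left h'
    have := h1 ⟨(y, x), hyx⟩
    simp only at this
    rw [← this]
    simp [SimpleGraph.adj_comm]

noncomputable def edgeSigma (N : ℕ) : EdgeIdx N ≃ Σ j : Fin N, Fin j.val where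
  toFun p := ⟨p.1.2, ⟨p.1.1.val, p.2⟩⟩
  invFun x := ⟨(⟨x.2.val, lt_trans x.2.isLt x.1.isLt⟩, x.1), x.2.isLt⟩
  left_inv p := by
    obtain ⟨⟨x, y⟩, h⟩ := p
    simp
  right_inv x := by
    obtain ⟨j, i⟩ := x
    simp

lemma card_edgeIdx (N : ℕ) : 2 * Fintype.card (EdgeIdx N) = N * (N - 1) := by
  have h1 : Fintype.card (EdgeIdx N) = ∑ j : Fin N, j.val := by
    rw [Fintype.card_congr (edgeSigma N)]
    simp [Fintype.card_sigma]
  rw [h1]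
  have := Finset.sum_range_id_mul_two N
  have h2 : ∑ j : Fin N, j.val = ∑ j ∈ Finset.range N, j := by
    rw [Finset.sum_range fun j => j]
  omega


section Master
variable {α ι : Type*} [Fintype α] [Fintype ι]

noncomputable def blockEquiv (blk : α → Option ι) :
    (α → Bool) ≃ ∀ j : Option ι, ({a : α // blk a = j} → Bool) :=
  ((Equiv.arrowCongr (Equiv.sigmaFiberEquiv blk) (Equiv.refl Bool)).symm).trans
    (Equiv.piCurry fun _ _ => Bool)

lemma count_blocks (blk : α → Option ι) (Q : ∀ j : Option ι, ({a : α // blk a = j} → Bool) → Prop) :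
    Nat.card {f : α → Bool // ∀ j, Q j (fun a => f a.1)} =
      ∏ j : Option ι, Nat.card {g : {a : α // blk a = j} → Bool // Q j g} := by
  have e1 : {f : α → Bool // ∀ j, Q j (fun a => f a.1)} ≃
      {g : ∀ j : Option ι, ({a : α // blk a = j} → Bool) // ∀ j, Q j (g j)} := by
    refine Equiv.subtypeEquiv (blockEquiv blk) fun f => ?_
    exact ⟨fun h j => h j, fun h j => h j⟩
  rw [Nat.card_congr (e1.trans Equiv.subtypePiEquivPi), Nat.card_pi]

lemma card_sum_fibers (blk : α → Option ι) :
    Fintype.card α = ∑ j : Option ι, Nat.card {a : α // blk a = j} := by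
  rw [← Fintype.card_congr (Equiv.sigmaFiberEquiv blk), Fintype.card_sigma]
  simp [Nat.card_eq_fintype_card]

lemma count_full {β : Type*} [Fintype β] {Q : (β → Bool) → Prop} (hQ : ∀ g, Q g) :
    Nat.card {g : β → Bool // Q g} = 2 ^ (Nat.card β) := by
  rw [Nat.card_congr (Equiv.subtypeUnivEquiv hQ), Nat.card_eq_fintype_card, Fintype.card_fun,
    Nat.card_eq_fintype_card]
  simp

lemma count_blocks_le (blk : α → Option ι)
    (Q : ∀ j : Option ι, ({a : α // blk a = j} → Bool) → Prop)
    (hQnone : ∀ g, Q none g)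
    (dm : Finset ι) (q : ι → ℝ) (hq0 : ∀ i, 0 ≤ q i)
    (hQout : ∀ i ∉ dm, ∀ g, Q (some i) g)
    (hq : ∀ i ∈ dm, (Nat.card {g : {a : α // blk a = some i} → Bool // Q (some i) g} : ℝ) ≤
      q i * 2 ^ (Nat.card {a : α // blk a = some i})) :
    (Nat.card {f : α → Bool // ∀ j, Q j (fun a => f a.1)} : ℝ) ≤
      (∏ i ∈ dm, q i) * 2 ^ (Fintype.card α) := by
  have key := count_blocks blk Q
  have step1 : (Nat.card {f : α → Bool // ∀ j, Q j (fun a => f a.1)} : ℝ) =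
      (2 ^ (Nat.card {a : α // blk a = none}) : ℝ) *
      ∏ i : ι, (Nat.card {g : {a : α // blk a = some i} → Bool // Q (some i) g} : ℝ) := by
    rw [key]
    push_cast
    rw [Fintype.prod_option, count_full (hQnone)]
    push_cast
    ring
  rw [step1]
  have step2 : ∏ i : ι, (Nat.card {g : {a : α // blk a = some i} → Bool // Q (some i) g} : ℝ) ≤
      ∏ i : ι, ((if i ∈ dm then q i else 1) * 2 ^ (Nat.card {a : α // blk a = some i})) := by
    apply Finset.prod_le_prod
    · intro i _; positivity
    · intro i _
      by_cases hi : i ∈ dm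
      · simpa [hi] using hq i hi
      · rw [if_neg hi, one_mul, count_full (hQout i hi)]
        push_cast
        exact le_refl _
  calc (2 ^ (Nat.card {a : α // blk a = none}) : ℝ) * ∏ i : ι, _ ≤
      (2 ^ (Nat.card {a : α // blk a = none}) : ℝ) *
        ∏ i : ι, ((if i ∈ dm then q i else 1) * 2 ^ (Nat.card {a : α // blk a = some i})) := by
        apply mul_le_mul_of_nonneg_left step2 (by positivity)
    _ = (∏ i ∈ dm, q i) * 2 ^ (Fintype.card α) := by
        rw [Finset.prod_mul_distrib, Finset.prod_pow_eq_pow_sum, card_sum_fibers blk,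
          Fintype.sum_option, pow_add]
        have : ∏ i : ι, (if i ∈ dm then q i else 1) = ∏ i ∈ dm, q i := by
          rw [Finset.prod_ite_mem, Finset.univ_inter]
        rw [this]
        ring
end Master


section Pattern
variable {σ : Type*} [Fintype σ]

noncomputable def patternEquiv (s : Finset σ) (pat : σ → Bool) :
    {g : σ → Bool // ∀ x ∈ s, g x = pat x} ≃ ({x : σ // x ∉ s} → Bool) where
  toFun g x := g.1 x.1
  invFun h := ⟨fun x => if hx : x ∈ s then pat x else h ⟨x, hx⟩, by
    intro x hx; simp [hx]⟩
  left_inv g := by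
    apply Subtype.ext
    funext x
    by_cases hx : x ∈ s
    · simp [hx, g.2 x hx]
    · simp [hx]
  right_inv h := by
    funext x
    simp [x.2]

lemma card_pattern (s : Finset σ) (pat : σ → Bool) :
    Nat.card {g : σ → Bool // ∀ x ∈ s, g x = pat x} = 2 ^ (Fintype.card σ - s.card) := by
  rw [Nat.card_congr (patternEquiv s pat), Nat.card_eq_fintype_card, Fintype.card_fun]
  have h1 : Fintype.card {x : σ // x ∉ s} = Fintype.card σ - Fintype.card {x : σ // x ∈ s} :=
    Fintype.card_subtype_compl _
  rw [h1, Fintype.card_coe]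
  simp

lemma card_subtype_split {P B : σ → Prop} :
    Nat.card {x : σ // P x} =
      Nat.card {x : σ // P x ∧ B x} + Nat.card {x : σ // P x ∧ ¬ B x} := by
  classical
  rw [Nat.card_eq_fintype_card, Nat.card_eq_fintype_card, Nat.card_eq_fintype_card,
    Fintype.card_subtype, Fintype.card_subtype, Fintype.card_subtype]
  rw [← Finset.filter_filter, ← Finset.filter_filter]
  exact (Finset.card_filter_add_card_filter_not (fun x => B x)).symm

lemma card_subtype_total {P : σ → Prop} :
    Nat.card {x : σ // P x} + Nat.card {x : σ // ¬ P x} = Fintype.card σ := by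
  classical
  rw [Nat.card_eq_fintype_card, Nat.card_eq_fintype_card,
    Fintype.card_subtype, Fintype.card_subtype]
  exact Finset.card_filter_add_card_filter_not (fun x => P x)

lemma card_subtype_mono' {P R : σ → Prop} (h : ∀ x, P x → R x) :
    Nat.card {x : σ // P x} ≤ Nat.card {x : σ // R x} := by
  classical
  rw [Nat.card_eq_fintype_card, Nat.card_eq_fintype_card]
  exact Fintype.card_subtype_mono _ _ h

end Pattern

-- helper : card of filter of subtype coe
lemma card_filter_val {V : Type*} [Fintype V] [DecidableEq V] (t s : Finset V) (hst : s ⊆ t) :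
    (Finset.univ.filter (fun x : {v : V // v ∈ t} => x.1 ∈ s)).card = s.card := by
  apply Finset.card_bij (fun x _ => x.1)
  · intro a ha; simpa using (Finset.mem_filter.mp ha).2
  · intro a ha b hb hab; exact Subtype.ext hab
  · intro b hb
    exact ⟨⟨b, hst hb⟩, by simpa using hb, rfl⟩

section Blocks
variable {V : Type*} [Fintype V] [DecidableEq V]

lemma card_all_false {σ : Type*} [Fintype σ] :
    Nat.card {h : σ → Bool // ∀ x : σ, h x = false} = 1 := by
  have h1 : ∀ h : σ → Bool, (∀ x : σ, h x = false) ↔ (∀ x ∈ Finset.univ, h x = (fun _ => false) x) := by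
    intro h; simp
  rw [Nat.card_congr (Equiv.subtypeEquivRight h1), card_pattern]
  simp

lemma card_exists_true {σ : Type*} [Fintype σ] :
    Nat.card {h : σ → Bool // ∃ x : σ, h x = true} = 2 ^ (Fintype.card σ) - 1 := by
  have h1 : ∀ h : σ → Bool, (∃ x : σ, h x = true) ↔ ¬ (∀ x : σ, h x = false) := by
    intro h; simp
  rw [Nat.card_congr (Equiv.subtypeEquivRight h1)]
  have h2 := card_subtype_total (σ := σ → Bool) (P := fun h => ∀ x : σ, h x = false)
  rw [card_all_false] at h2
  have h3 : Fintype.card (σ → Bool) = 2 ^ Fintype.card σ := by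
    rw [Fintype.card_fun, Fintype.card_bool]
  rw [h3] at h2
  rw [← h2]
  simp

/-- The main per-block estimate. -/
lemma block_bound (S T U : Finset V) (v w : V) (k l : ℕ)
    (hTS : T ⊆ S) (hUS : ∀ x ∈ U, x ∉ S) (hvS : v ∉ S) (hwS : w ∉ S)
    (hvU : v ∉ U) (hwU : w ∉ U) (hvw : v ≠ w)
    (hSc : S.card = k) (hTc : T.card = l) (hUc : U.card = k - l) (hlk : l < k) :
    (Nat.card {h : {x : V // x ∈ insert v (insert w (S ∪ U))} → Bool //
        (∃ x, x.1 ∈ S ∧ h x = true) ∧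
        ¬ ((∀ x, (x.1 = v ∨ x.1 = w) → h x = true) ∧
           (∀ x, (x.1 ∈ T ∨ x.1 ∈ U) → h x = false))} : ℝ) ≤
      (1 - (1/2 : ℝ) ^ k) * (1 - (1/2 : ℝ) ^ (k + 3)) *
        2 ^ (Fintype.card {x : V // x ∈ insert v (insert w (S ∪ U))}) := by
  classical
  set tgtD := insert v (insert w (S ∪ U)) with htgtD
  set σ := {x : V // x ∈ tgtD}
  set j := k - l with hj
  have hjl : l + j = k := by omega
  have hj1 : 1 ≤ j := by omega
  set domP : (σ → Bool) → Prop := fun h => ∃ x, x.1 ∈ S ∧ h x = true with hdomP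
  set GoodP : (σ → Bool) → Prop := fun h =>
    (∀ x, (x.1 = v ∨ x.1 = w) → h x = true) ∧ (∀ x, (x.1 ∈ T ∨ x.1 ∈ U) → h x = false) with hGoodP
  -- vertex facts
  have hvT : v ∉ T := fun h => hvS (hTS h)
  have hwT : w ∉ T := fun h => hwS (hTS h)
  have hdTU : Disjoint T U := by
    rw [Finset.disjoint_left]
    intro x hxT hxU; exact hUS x hxU (hTS hxT)
  have hdSU : Disjoint S U := by
    rw [Finset.disjoint_left]
    intro x hxS hxU; exact hUS x hxU hxS
  -- card σ
  have hm : Fintype.card σ = k + j + 2 := by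
    rw [Fintype.card_coe]
    have h1 : w ∉ S ∪ U := by simp [hwS, hwU]
    have h2 : v ∉ insert w (S ∪ U) := by simp [hvS, hvU, hvw]
    rw [htgtD, Finset.card_insert_of_notMem h2, Finset.card_insert_of_notMem h1,
      Finset.card_union_of_disjoint hdSU, hSc, hUc]
  have hSsub : S ⊆ tgtD := fun x hx => by simp [htgtD, Finset.mem_union, hx]
  -- card of not-dominated
  have hNotDom : Nat.card {h : σ → Bool // ¬ domP h} = 2 ^ (j + 2) := by
    have h1 : ∀ h : σ → Bool, (¬ domP h) ↔
        (∀ x ∈ Finset.univ.filter (fun x : σ => x.1 ∈ S), h x = (fun _ => false) x) := by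
      intro h
      simp only [hdomP, not_exists, Finset.mem_filter, Finset.mem_univ, true_and, not_and]
      constructor
      · intro hh x hx
        have := hh x hx
        simpa using this
      · intro hh x hx
        simp [hh x hx]
    rw [Nat.card_congr (Equiv.subtypeEquivRight h1), card_pattern,
      card_filter_val tgtD S hSsub, hm, hSc]
    congr 1
    omega
  -- card of Good
  have hGood : Nat.card {h : σ → Bool // GoodP h} = 2 ^ j := by
    have hFsub : (insert v (insert w (T ∪ U)) : Finset V) ⊆ tgtD := by
      intro x hx
      simp only [Finset.mem_insert, Finset.mem_union] at hx
      rcases hx with h | h | h | h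
      · simp [htgtD, h]
      · simp [htgtD, h]
      · simp [htgtD, Finset.mem_union, hTS h]
      · simp [htgtD, Finset.mem_union, h]
    have hFcard : (insert v (insert w (T ∪ U)) : Finset V).card = k + 2 := by
      have h1 : w ∉ T ∪ U := by simp [hwT, hwU]
      have h2 : v ∉ insert w (T ∪ U) := by simp [hvT, hvU, hvw]
      rw [Finset.card_insert_of_notMem h2, Finset.card_insert_of_notMem h1,
        Finset.card_union_of_disjoint hdTU, hTc, hUc]
      omega
    have h1 : ∀ h : σ → Bool, GoodP h ↔
        (∀ x ∈ Finset.univ.filter (fun x : σ => x.1 ∈ insert v (insert w (T ∪ U))), h x =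
          (fun x : σ => decide (x.1 = v ∨ x.1 = w)) x) := by
      intro h
      simp only [hGoodP, Finset.mem_filter, Finset.mem_univ, true_and,
        Finset.mem_insert, Finset.mem_union]
      constructor
      · rintro ⟨hg1, hg2⟩ x hx
        by_cases hvx : x.1 = v ∨ x.1 = w
        · simp [hvx, hg1 x hvx]
        · push_neg at hvx
          have hxTU : x.1 ∈ T ∨ x.1 ∈ U := by tauto
          simp [hg2 x hxTU, hvx.1, hvx.2]
      · intro hg
        constructor
        · intro x hx
          have := hg x (by tauto)
          simpa [hx] using this
        · intro x hx
          have hxv : x.1 ≠ v := by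
            intro heq
            rcases hx with h | h
            · exact hvT (heq ▸ h)
            · exact hvU (heq ▸ h)
          have hxw : x.1 ≠ w := by
            intro heq
            rcases hx with h | h
            · exact hwT (heq ▸ h)
            · exact hwU (heq ▸ h)
          have := hg x (by tauto)
          simpa [hxv, hxw] using this
    rw [Nat.card_congr (Equiv.subtypeEquivRight h1), card_pattern,
      card_filter_val tgtD _ hFsub, hm, hFcard]
    congr 1
    omega
  -- Good and not dominated is (at most) unique
  have hGnD : Nat.card {h : σ → Bool // GoodP h ∧ ¬ domP h} ≤ 1 := by
    rw [Nat.card_eq_fintype_card, Fintype.card_le_one_iff]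
    rintro ⟨h₁, hg₁, hd₁⟩ ⟨h₂, hg₂, hd₂⟩
    apply Subtype.ext
    funext x
    show h₁ x = h₂ x
    have hx := x.2
    simp only [htgtD, Finset.mem_insert, Finset.mem_union] at hx
    have hval : ∀ (h : σ → Bool), GoodP h → ¬ domP h → h x = decide (x.1 = v ∨ x.1 = w) := by
      intro h hg hd
      by_cases hvx : x.1 = v ∨ x.1 = w
      · simp [hvx, hg.1 x hvx]
      · push_neg at hvx
        rcases hx with h' | h' | h' | h'
        · exact absurd h' hvx.1
        · exact absurd h' hvx.2
        · have : h x = false := by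
            simp only [hdomP, not_exists] at hd
            have := hd x
            simpa [h'] using this
          simp [this, hvx.1, hvx.2]
        · simp [hg.2 x (Or.inr h'), hvx.1, hvx.2]
    rw [hval h₁ hg₁ hd₁, hval h₂ hg₂ hd₂]
  -- assemble integer identities
  have hA : Nat.card {h : σ → Bool // domP h} + 2 ^ (j + 2) = 2 ^ (k + j + 2) := by
    have := card_subtype_total (σ := σ → Bool) (P := domP)
    rw [hNotDom] at this
    rw [this]
    rw [Fintype.card_fun, hm]
    simp
  have hsplit1 : Nat.card {h : σ → Bool // domP h} =
      Nat.card {h : σ → Bool // domP h ∧ GoodP h} +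
      Nat.card {h : σ → Bool // domP h ∧ ¬ GoodP h} := card_subtype_split
  have hsplit2 : Nat.card {h : σ → Bool // GoodP h} =
      Nat.card {h : σ → Bool // GoodP h ∧ domP h} +
      Nat.card {h : σ → Bool // GoodP h ∧ ¬ domP h} := card_subtype_split
  have hcomm : Nat.card {h : σ → Bool // domP h ∧ GoodP h} =
      Nat.card {h : σ → Bool // GoodP h ∧ domP h} :=
    Nat.card_congr (Equiv.subtypeEquivRight (fun h => and_comm))
  -- target as real bound
  have hmain : (Nat.card {h : σ → Bool // domP h ∧ ¬ GoodP h} : ℝ) ≤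
      2 ^ (k + j + 2) - 2 ^ (j + 2) + 1 - 2 ^ j := by
    have : Nat.card {h : σ → Bool // domP h ∧ ¬ GoodP h} + 2 ^ (j+2) + 2 ^ j ≤
        2 ^ (k + j + 2) + 1 := by omega
    have := (Nat.cast_le (α := ℝ)).2 this
    push_cast at this
    linarith
  refine le_trans hmain ?_
  rw [hm]
  -- final real inequality
  have e1 : (2:ℝ) ^ (k + j + 2) = 2^k * 2^j * 4 := by ring
  have e2 : (2:ℝ) ^ (j + 2) = 2^j * 4 := by ring
  have hX : (1:ℝ) ≤ 2^k := one_le_pow₀ (by norm_num)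
  have hY : (2:ℝ) ≤ 2^j := by
    calc (2:ℝ) = 2^1 := by norm_num
    _ ≤ 2^j := by
      apply pow_le_pow_right₀ (by norm_num) hj1
  have hYk : (2:ℝ)^j ≤ 2^k := by
    apply pow_le_pow_right₀ (by norm_num) (by omega)
  have hhalf : (1/2:ℝ)^k = 1/2^k := by
    rw [div_pow]; norm_num
  have hhalf3 : (1/2:ℝ)^(k+3) = 1/(2^k * 8) := by
    rw [div_pow]; norm_num; ring
  rw [hhalf, hhalf3, e1, e2]
  have h2k : (0:ℝ) < 2^k := by positivity
  have h2j : (0:ℝ) < 2^j := by positivity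
  have hexp : (1 - 1/(2:ℝ)^k) * (1 - 1/(2^k * 8)) * (2^k * 2^j * 4) =
      4 * 2^k * 2^j - 4 * 2^j - 2^j/2 + 2^j/(2 * 2^k) := by
    field_simp
    ring
  rw [hexp]
  have hkey : (1:ℝ) ≤ 2^j/2 + 2^j/(2 * 2^k) := by
    have : (1:ℝ) ≤ 2^j/2 := by linarith
    have hpos : (0:ℝ) ≤ 2^j/(2*2^k) := by positivity
    linarith
  linarith
end Blocks


section Fibers
variable {N : ℕ}

def blkF (dom tgt : Finset (Fin N)) (p : EdgeIdx N) : Option (Fin N) :=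
  if p.1.1 ∈ dom ∧ p.1.2 ∈ tgt then some p.1.1
  else if p.1.2 ∈ dom ∧ p.1.1 ∈ tgt then some p.1.2 else none

lemma blkF_pairMk {dom tgt : Finset (Fin N)} (hdisj : ∀ x ∈ dom, x ∉ tgt)
    {u x : Fin N} (hu : u ∈ dom) (hx : x ∈ tgt) (hne : u ≠ x) :
    blkF dom tgt (pairMk u x hne) = some u := by
  unfold pairMk
  split_ifs with h'
  · simp [blkF, hu, hx]
  · have hxd : x ∉ dom := fun hc => hdisj x hc hx
    simp [blkF, hu, hx, hxd]

lemma pairMk_val (x y : Fin N) (h : x ≠ y) :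
    (pairMk x y h).1 = if x < y then (x, y) else (y, x) := by
  unfold pairMk
  split_ifs <;> rfl

noncomputable def fiberEquiv {dom tgt : Finset (Fin N)} (hdisj : ∀ x ∈ dom, x ∉ tgt)
    (u : Fin N) (hu : u ∈ dom) :
    {x : Fin N // x ∈ tgt} ≃ {p : EdgeIdx N // blkF dom tgt p = some u} where
  toFun x := ⟨pairMk u x.1 (fun hc => hdisj u hu (hc ▸ x.2)), blkF_pairMk hdisj hu x.2 _⟩
  invFun p := ⟨if p.1.1.1 = u then p.1.1.2 else p.1.1.1, by
    obtain ⟨⟨⟨a, b⟩, hab⟩, hp⟩ := p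
    simp only [blkF] at hp
    split_ifs at hp with h1 h2
    · have ha : a = u := by simpa using hp
      simpa [ha] using h1.2
    · have hb : b = u := by simpa using hp
      have hne : a ≠ u := by
        intro hc
        subst hc
        exact hdisj a (hb ▸ h2.1) h2.2
      simpa [hne] using h2.2⟩
  left_inv x := by
    obtain ⟨x, hx⟩ := x
    apply Subtype.ext
    by_cases h' : u < x
    · simp [pairMk, h']
    · have hne : x ≠ u := fun hc => hdisj u hu (hc ▸ hx)
      simp [pairMk, h', hne]
  right_inv p := by
    obtain ⟨⟨⟨a, b⟩, hab⟩, hp⟩ := p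
    apply Subtype.ext
    apply Subtype.ext
    have hp' := hp
    simp only [blkF] at hp'
    split_ifs at hp' with h1 h2
    · have ha : a = u := by simpa using hp'
      subst ha
      rw [pairMk_val]
      have hab' : a < b := hab
      simp [hab']
    · have hb : b = u := by simpa using hp'
      subst hb
      have hne : a ≠ b := ne_of_lt hab
      have hab' : a < b := hab
      rw [pairMk_val]
      simp [hne, asymm hab']

lemma card_fiber {dom tgt : Finset (Fin N)} (hdisj : ∀ x ∈ dom, x ∉ tgt)
    (u : Fin N) (hu : u ∈ dom) :
    Nat.card {p : EdgeIdx N // blkF dom tgt p = some u} = tgt.card := by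
  rw [← Nat.card_congr (fiberEquiv hdisj u hu), Nat.card_eq_fintype_card, Fintype.card_coe]

end Fibers

section Scenario
variable {N : ℕ}

/-- Block-local predicate family induced by a target-indexed predicate. -/
def QBlk (dom tgt : Finset (Fin N)) (hdisj : ∀ x ∈ dom, x ∉ tgt)
    (QT : Fin N → (({x : Fin N // x ∈ tgt} → Bool) → Prop)) :
    ∀ j : Option (Fin N), ({p : EdgeIdx N // blkF dom tgt p = j} → Bool) → Prop
  | none => fun _ => True
  | some u => fun g => ∀ hu : u ∈ dom, QT u (fun x => g (fiberEquiv hdisj u hu x))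

lemma scenario_le (dom tgt : Finset (Fin N)) (hdisj : ∀ x ∈ dom, x ∉ tgt)
    (QT : Fin N → (({x : Fin N // x ∈ tgt} → Bool) → Prop))
    (q : Fin N → ℝ) (hq0 : ∀ u, 0 ≤ q u)
    (hq : ∀ u ∈ dom, (Nat.card {h : {x : Fin N // x ∈ tgt} → Bool // QT u h} : ℝ) ≤
      q u * 2 ^ tgt.card) :
    (Nat.card {f : EdgeIdx N → Bool //
        ∀ j, QBlk dom tgt hdisj QT j (fun p => f p.1)} : ℝ) ≤
      (∏ u ∈ dom, q u) * 2 ^ (Fintype.card (EdgeIdx N)) := by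
  apply count_blocks_le (blkF dom tgt) (QBlk dom tgt hdisj QT) (fun _ => trivial) dom q hq0
  · intro u hu g hu'
    exact absurd hu' hu
  · intro u hu
    have heq : ∀ g : {p : EdgeIdx N // blkF dom tgt p = some u} → Bool,
        QBlk dom tgt hdisj QT (some u) g ↔ QT u (fun x => g (fiberEquiv hdisj u hu x)) := by
      intro g
      constructor
      · intro h; exact h hu
      · intro h hu'; exact h
    rw [Nat.card_congr (Equiv.subtypeEquivRight heq)]
    have htrans : Nat.card {g : {p : EdgeIdx N // blkF dom tgt p = some u} → Bool //
        QT u (fun x => g (fiberEquiv hdisj u hu x))} =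
        Nat.card {h : {x : Fin N // x ∈ tgt} → Bool // QT u h} := by
      apply Nat.card_congr
      exact Equiv.subtypeEquiv (Equiv.arrowCongr (fiberEquiv hdisj u hu) (Equiv.refl Bool)).symm
        (fun g => Iff.rfl)
    rw [htrans, card_fiber hdisj u hu]
    exact hq u hu

lemma cover_card_le {F : Type*} [Fintype F] (P : F → Prop) {I : Type*} [DecidableEq I]
    (idx : Finset I) (Q : I → F → Prop)
    (hcov : ∀ f, P f → ∃ i ∈ idx, Q i f) (B : ℝ) (hB0 : 0 ≤ B)
    (hB : ∀ i ∈ idx, (Nat.card {f // Q i f} : ℝ) ≤ B) :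
    (Nat.card {f // P f} : ℝ) ≤ idx.card * B := by
  classical
  have h1 : (Finset.univ.filter P) ⊆ idx.biUnion (fun i => Finset.univ.filter (Q i)) := by
    intro f hf
    obtain ⟨i, hi, hQ⟩ := hcov f (by simpa using hf)
    exact Finset.mem_biUnion.mpr ⟨i, hi, by simpa using hQ⟩
  have h2 : (Finset.univ.filter P).card ≤ ∑ i ∈ idx, (Finset.univ.filter (Q i)).card :=
    le_trans (Finset.card_le_card h1) (Finset.card_biUnion_le)
  have h3 : (Nat.card {f // P f} : ℝ) ≤ ∑ i ∈ idx, ((Finset.univ.filter (Q i)).card : ℝ) := by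
    rw [Nat.card_eq_fintype_card, Fintype.card_subtype]
    exact_mod_cast h2
  refine le_trans h3 ?_
  have h4 : ∀ i ∈ idx, ((Finset.univ.filter (Q i)).card : ℝ) ≤ B := by
    intro i hi
    have := hB i hi
    rwa [Nat.card_eq_fintype_card, Fintype.card_subtype] at this
  calc ∑ i ∈ idx, ((Finset.univ.filter (Q i)).card : ℝ) ≤ ∑ i ∈ idx, B :=
        Finset.sum_le_sum h4
    _ = idx.card * B := by rw [Finset.sum_const]; ring

lemma pairMk_bool (f : EdgeIdx N → Bool) (x y : Fin N) (h : x ≠ y) :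
    f (pairMk x y h) = decide (((graphEquiv N).symm f).Adj x y) := by
  by_cases hA : ((graphEquiv N).symm f).Adj x y
  · simp [hA, (adj_pairMk f x y h).mp hA]
  · have : ¬ f (pairMk x y h) = true := fun hc => hA ((adj_pairMk f x y h).mpr hc)
    simp [hA, Bool.not_eq_true] at this ⊢
    exact this

end Scenario

section Cases
variable {N : ℕ}

lemma caseSmall {k : ℕ} (S C₀ : Finset (Fin N)) (v : Fin N) (hvS : v ∉ S) (hSc : S.card = k)
    (hdisj : ∀ x ∈ insert v ((Finset.univ \ insert v S) \ C₀), x ∉ S) :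
    (Nat.card {f : EdgeIdx N → Bool // ∀ j,
        QBlk (insert v ((Finset.univ \ insert v S) \ C₀)) S hdisj
          (fun u h => if u = v then (∀ x, h x = false) else (∃ x, h x = true))
          j (fun p => f p.1)} : ℝ) ≤
      (1/2 : ℝ)^k * (1 - (1/2 : ℝ)^k) ^ (((Finset.univ \ insert v S) \ C₀).card) *
        2 ^ (Fintype.card (EdgeIdx N)) := by
  have hp2k : (0:ℝ) < 2^k := by positivity
  have hple : (1/2:ℝ)^k ≤ 1 := by
    apply pow_le_one₀ <;> norm_num
  refine le_trans (scenario_le _ _ hdisj _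
    (fun u => if u = v then (1/2 : ℝ)^k else (1 - (1/2 : ℝ)^k)) ?_ ?_) ?_
  · intro u
    by_cases hu : u = v
    · simp only [if_pos hu]; positivity
    · simp only [if_neg hu]; linarith
  · intro u hu
    have hcardS : Fintype.card {x : Fin N // x ∈ S} = k := by
      rw [Fintype.card_coe, hSc]
    by_cases huv : u = v
    · simp only [if_pos huv]
      rw [card_all_false, hSc]
      have hmul : (1/2:ℝ)^k * 2^k = 1 := by
        rw [← mul_pow]; norm_num
      rw [hmul]
      norm_num
    · simp only [if_neg huv]
      rw [card_exists_true, hcardS]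
      have h1 : ((2^k - 1 : ℕ) : ℝ) = 2^k - 1 := by
        have : (1:ℕ) ≤ 2^k := Nat.one_le_two_pow
        push_cast [this]
        ring
      rw [h1, hSc]
      have hmul : (1/2:ℝ)^k * 2^k = 1 := by
        rw [← mul_pow]; norm_num
      nlinarith [hmul]
  · have hvnot : v ∉ (Finset.univ \ insert v S) \ C₀ := by
      simp
    rw [Finset.prod_insert hvnot, if_pos rfl]
    have : ∏ u ∈ (Finset.univ \ insert v S) \ C₀,
        (if u = v then (1/2 : ℝ)^k else (1 - (1/2 : ℝ)^k)) =
        (1 - (1/2 : ℝ)^k) ^ (((Finset.univ \ insert v S) \ C₀).card) := by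
      rw [Finset.prod_congr rfl (fun u hu => ?_), Finset.prod_const]
      have huv : u ≠ v := by
        intro hc
        subst hc
        simp at hu
      rw [if_neg huv]
    rw [this]

lemma caseLarge {k l : ℕ} (S T U C₀ : Finset (Fin N)) (v w : Fin N)
    (hTS : T ⊆ S) (hSc : S.card = k) (hTc : T.card = l) (hlk : l < k)
    (hUc : U.card = k - l) (hUS : ∀ x ∈ U, x ∉ S ∧ x ≠ v) (hwS : w ∉ S) (hwv : w ≠ v)
    (hwU : w ∉ U) (hvS : v ∉ S)
    (hdisj : ∀ x ∈ (Finset.univ \ insert v S) \ insert w (U ∪ C₀),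
      x ∉ insert v (insert w (S ∪ U))) :
    (Nat.card {f : EdgeIdx N → Bool // ∀ j,
        QBlk ((Finset.univ \ insert v S) \ insert w (U ∪ C₀)) (insert v (insert w (S ∪ U))) hdisj
          (fun u h => (∃ x, x.1 ∈ S ∧ h x = true) ∧
            ¬ ((∀ x, (x.1 = v ∨ x.1 = w) → h x = true) ∧
               (∀ x, (x.1 ∈ T ∨ x.1 ∈ U) → h x = false)))
          j (fun p => f p.1)} : ℝ) ≤
      ((1 - (1/2 : ℝ)^k) * (1 - (1/2 : ℝ)^(k+3))) ^
          (((Finset.univ \ insert v S) \ insert w (U ∪ C₀)).card) *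
        2 ^ (Fintype.card (EdgeIdx N)) := by
  have hq0 : (0:ℝ) ≤ (1 - (1/2 : ℝ)^k) * (1 - (1/2 : ℝ)^(k+3)) := by
    have h1 : (1/2:ℝ)^k ≤ 1 := by apply pow_le_one₀ <;> norm_num
    have h2 : (1/2:ℝ)^(k+3) ≤ 1 := by apply pow_le_one₀ <;> norm_num
    nlinarith
  refine le_trans (scenario_le _ _ hdisj _
    (fun _ => (1 - (1/2 : ℝ)^k) * (1 - (1/2 : ℝ)^(k+3))) (fun _ => hq0) ?_) ?_
  · intro u hu
    have hb := block_bound S T U v w k l hTS (fun x hx => (hUS x hx).1) hvS hwS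
      (fun hc => (hUS v hc).2 rfl) hwU hwv.symm hSc hTc hUc hlk
    refine le_trans hb ?_
    have : Fintype.card {x : Fin N // x ∈ insert v (insert w (S ∪ U))} =
        (insert v (insert w (S ∪ U))).card := Fintype.card_coe _
    rw [this]
  · rw [Finset.prod_const]
end Cases

section Analytic

lemma card_subtype_equiv {A B : Type*} (e : A ≃ B) (P : A → Prop) :
    Nat.card {x : A // P x} = Nat.card {y : B // P (e.symm y)} :=
  Nat.card_congr (Equiv.subtypeEquiv e (fun a => by rw [Equiv.symm_apply_apply]))

lemma exists_n0 (k : ℕ) (r : ℝ) (hr0 : 0 ≤ r) (hr1 : r < 1) :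
    ∃ n₀ : ℕ, 1 ≤ n₀ ∧ ∀ n : ℕ, n₀ ≤ n → ((n : ℝ) + k + 1)^(k+1) * 8^(k+1) * r^n ≤ 1 := by
  have habs : |r| < 1 := by rw [abs_of_nonneg hr0]; exact hr1
  have h := tendsto_pow_const_mul_const_pow_of_abs_lt_one (k+1) habs
  have hc : (0:ℝ) < (((k:ℝ)+2)^(k+1) * 8^(k+1))⁻¹ := by positivity
  have heps : ∀ᶠ m : ℕ in Filter.atTop,
      (m:ℝ)^(k+1) * r^m < (((k:ℝ)+2)^(k+1) * 8^(k+1))⁻¹ := by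
    have := h.eventually (gt_mem_nhds hc)
    exact this
  obtain ⟨n₀', hn₀'⟩ := Filter.eventually_atTop.mp heps
  refine ⟨max n₀' 1, le_max_right _ _, ?_⟩
  intro n hn
  have hn1 : 1 ≤ n := le_trans (le_max_right _ _) hn
  have hn' : n₀' ≤ n := le_trans (le_max_left _ _) hn
  have h1 : ((n:ℝ) + k + 1) ≤ ((k:ℝ)+2) * n := by
    have : (1:ℝ) ≤ (n:ℝ) := by exact_mod_cast hn1
    nlinarith [Nat.cast_nonneg (α := ℝ) k]
  have h2 : ((n:ℝ) + k + 1)^(k+1) ≤ (((k:ℝ)+2) * n)^(k+1) := by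
    apply pow_le_pow_left₀ (by positivity) h1
  have h3 := hn₀' n hn'
  have hrn : (0:ℝ) ≤ r^n := by positivity
  have h4 : (((k:ℝ)+2) * n)^(k+1) * 8^(k+1) * r^n =
      ((k:ℝ)+2)^(k+1) * 8^(k+1) * ((n:ℝ)^(k+1) * r^n) := by rw [mul_pow]; ring
  calc ((n : ℝ) + k + 1)^(k+1) * 8^(k+1) * r^n ≤ (((k:ℝ)+2) * n)^(k+1) * 8^(k+1) * r^n := by
        apply mul_le_mul_of_nonneg_right (mul_le_mul_of_nonneg_right h2 (by positivity)) hrn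
    _ = ((k:ℝ)+2)^(k+1) * 8^(k+1) * ((n:ℝ)^(k+1) * r^n) := h4
    _ ≤ ((k:ℝ)+2)^(k+1) * 8^(k+1) * (((k:ℝ)+2)^(k+1) * 8^(k+1))⁻¹ := by
        apply mul_le_mul_of_nonneg_left (le_of_lt h3) (by positivity)
    _ = 1 := by
        field_simp

lemma two_rpow_le_inv_one_sub {t : ℝ} (h0 : 0 ≤ t) (h1 : t ≤ 1/2) :
    (2:ℝ) ^ t ≤ 1 / (1 - t) := by
  have hlog2 : Real.log 2 ≤ 1 := by
    have := Real.log_le_sub_one_of_pos (x := 2) (by norm_num)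
    linarith
  have h2 : (2:ℝ) ^ t = Real.exp (Real.log 2 * t) := by
    rw [Real.rpow_def_of_pos (by norm_num)]
  have h3 : Real.exp (Real.log 2 * t) ≤ Real.exp t := by
    apply Real.exp_le_exp.mpr
    nlinarith [Real.log_pos (show (1:ℝ) < 2 by norm_num)]
  have h4 : Real.exp t ≤ 1 / (1 - t) := by
    have h5 : 1 - t ≤ Real.exp (-t) := by
      have := Real.add_one_le_exp (-t)
      linarith
    have h6 : (0:ℝ) < 1 - t := by linarith
    have h7 : Real.exp (-t) = (Real.exp t)⁻¹ := Real.exp_neg t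
    rw [h7] at h5
    have h8 := inv_anti₀ h6 h5
    rw [inv_inv] at h8
    rw [one_div]
    exact h8
  rw [h2]
  calc Real.exp (Real.log 2 * t) ≤ Real.exp t := h3
    _ ≤ 1 / (1 - t) := h4

lemma pow_base_shift {x y : ℝ} (hy : 0 < y) (hyx : y ≤ x) (hx1 : x ≤ 1)
    {m n c : ℕ} (h : n ≤ m + c) : x ^ m ≤ x ^ n * (1/y) ^ c := by
  have hx0 : 0 < x := lt_of_lt_of_le hy hyx
  have h1 : x ^ (m + c) ≤ x ^ n := pow_le_pow_of_le_one (le_of_lt hx0) hx1 h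
  have h2 : y ^ c ≤ x ^ c := pow_le_pow_left₀ (le_of_lt hy) hyx c
  have h3 : x ^ m * y ^ c ≤ x ^ n := by
    calc x ^ m * y ^ c ≤ x ^ m * x ^ c := by
          apply mul_le_mul_of_nonneg_left h2 (by positivity)
      _ = x ^ (m + c) := (pow_add x m c).symm
      _ ≤ x ^ n := h1
  have hyc : (0:ℝ) < y ^ c := by positivity
  rw [one_div, inv_pow]
  calc x ^ m = x ^ m * y ^ c / y ^ c := by field_simp
    _ ≤ x ^ n / y ^ c := by
        exact div_le_div_of_nonneg_right h3 hyc.le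
    _ = x ^ n * (y ^ c)⁻¹ := by rw [div_eq_mul_inv]

lemma choose_mul_pow_le (N c : ℕ) (hc : c ≤ N) (ρ : ℝ) (hρ : 0 ≤ ρ) :
    (N.choose c : ℝ) * ρ ^ c ≤ (1 + ρ) ^ N := by
  have h := add_pow ρ 1 N
  have hmem : c ∈ Finset.range (N+1) := Finset.mem_range.mpr (by omega)
  have hterm : ∀ i ∈ Finset.range (N+1), (0:ℝ) ≤ ρ^i * 1^(N-i) * N.choose i := by
    intro i _; positivity
  have hsingle := Finset.single_le_sum hterm hmem
  rw [← h] at hsingle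
  have : ρ ^ c * 1 ^ (N - c) * (N.choose c : ℝ) = (N.choose c : ℝ) * ρ ^ c := by
    rw [one_pow]; ring
  rw [this] at hsingle
  calc (N.choose c : ℝ) * ρ ^ c ≤ (ρ + 1) ^ N := hsingle
    _ = (1 + ρ) ^ N := by rw [add_comm]

end Analytic


/-- Key lemma, `N(v)` version: there exist `ξ ∈ (0,1/2]` and `ε > 0` such that for every
`n ≥ 1`, every `S` of cardinality `k`, every `v ∉ S`, every `T ⊊ S`, and all `a ≤ b ≤ n`,
`c ≤ ξn`, the number of labelled graphs on `{1,…,n+k+1}` satisfying (p1)–(p5) simultaneously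
is at most `2^{(log₂(1-2^{-k}) - ε) n} · 2^{(n+k+1)(n+k)/2}`. -/

theorem key_lemma_nbr (k : ℕ) (hk : 1 ≤ k) :
    ∃ ξ ε : ℝ, 0 < ξ ∧ ξ ≤ 1 / 2 ∧ 0 < ε ∧
      ∀ n : ℕ, 1 ≤ n →
      ∀ S : Finset (Fin (n + k + 1)), S.card = k →
      ∀ v : Fin (n + k + 1), v ∉ S →
      ∀ T : Finset (Fin (n + k + 1)), T ⊂ S →
      ∀ a b c : ℕ, a ≤ b → b ≤ n → (c : ℝ) ≤ ξ * n →
        (Nat.card {G : SimpleGraph (Fin (n + k + 1)) //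
            -- (p1) `v` has no neighbour in `S`
            (∀ u ∈ S, ¬ G.Adj v u) ∧
            -- (p2) exactly `b` vertices of `W = V \ (S ∪ {v})` are adjacent to `v`
            {w | w ∉ S ∧ w ≠ v ∧ G.Adj v w}.ncard = b ∧
            -- (p3) exactly `c` vertices of `W` have no neighbour in `S`
            {w | w ∉ S ∧ w ≠ v ∧ ∀ u ∈ S, ¬ G.Adj u w}.ncard = c ∧
            -- (p4) exactly `a` vertices of `N(v)` are dominated by `S` and nonadjacent to `T`
            {u | G.Adj v u ∧ (∃ s ∈ S, G.Adj s u) ∧ ∀ t ∈ T, ¬ G.Adj t u}.ncard = a ∧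
            -- (p5) the escape property fails for some `U ⊆ W` with `|U| = k - ℓ` and `w ∈ W \ U`
            ¬ (∀ U : Finset (Fin (n + k + 1)), (∀ x ∈ U, x ∉ S ∧ x ≠ v) →
                U.card = k - T.card →
                ∀ w : Fin (n + k + 1), w ∉ S → w ≠ v → w ∉ U →
                ∃ w', G.Adj v w' ∧ G.Adj w w' ∧ (∀ t ∈ T, ¬ G.Adj t w') ∧
                  ∀ u ∈ U, ¬ G.Adj u w')} : ℝ) ≤
          2 ^ ((Real.logb 2 (1 - 2 ^ (-(k : ℝ))) - ε) * n) *
            2 ^ ((n + k + 1) * (n + k) / 2) := by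
  classical
  have hp : (0:ℝ) < (1/2:ℝ)^k := by positivity
  have hp2 : (1/2:ℝ)^k ≤ 1/2 := by
    calc (1/2:ℝ)^k ≤ (1/2:ℝ)^1 := pow_le_pow_of_le_one (by norm_num) (by norm_num) hk
      _ = 1/2 := pow_one _
  set δ : ℝ := (1/2:ℝ)^(k+3) with hδdef
  have hδpos : 0 < δ := by positivity
  have hδle : δ ≤ 1/16 := by
    calc δ ≤ (1/2:ℝ)^4 := pow_le_pow_of_le_one (by norm_num) (by norm_num) (by omega)
      _ = 1/16 := by norm_num
  obtain ⟨n₀, hn₀1, hn₀⟩ := exists_n0 k (1 - δ/2) (by linarith) (by linarith)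
  have hn₀R : (1:ℝ) ≤ (n₀:ℝ) := by exact_mod_cast hn₀1
  set ξ : ℝ := min (1/2) (min (δ/(64*((k:ℝ)+9))) (1/(4*(n₀:ℝ)*((n₀:ℝ)+k+1)))) with hξdef
  set ε : ℝ := min (δ/64) (1/(2*(n₀:ℝ))) with hεdef
  have hξpos : 0 < ξ := by
    apply lt_min (by norm_num)
    apply lt_min (by positivity) (by positivity)
  have hεpos : 0 < ε := lt_min (by positivity) (by positivity)
  refine ⟨ξ, ε, hξpos, min_le_left _ _, hεpos, ?_⟩
  intro n hn S hS v hvS T hTsub a b c hab hbn hcξ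
  have hTS : T ⊆ S := hTsub.subset
  have hlk : T.card < k := by
    have := Finset.card_lt_card hTsub
    omega
  set l := T.card with hl
  set W : Finset (Fin (n+k+1)) := Finset.univ \ insert v S with hWdef
  have hWcard : W.card = n := by
    rw [hWdef, Finset.card_sdiff_of_subset (Finset.subset_univ _), Finset.card_univ, Fintype.card_fin,
      Finset.card_insert_of_notMem hvS, hS]
    omega
  set M := Fintype.card (EdgeIdx (n+k+1)) with hMdef
  have hM : 2 * M = (n+k+1) * (n+k) := by
    have h := card_edgeIdx (n+k+1)
    have h2 : (n+k+1) - 1 = n+k := by omega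
    rw [h2] at h
    rw [hMdef]
    exact h
  have h1p : (0:ℝ) < 1 - (1/2:ℝ)^k := by linarith
  have h1p' : (1:ℝ)/2 ≤ 1 - (1/2:ℝ)^k := by linarith
  have h1p1 : 1 - (1/2:ℝ)^k ≤ 1 := by linarith
  -- rewrite RHS
  have hpk : (2:ℝ) ^ (-(k:ℝ)) = (1/2:ℝ)^k := by
    have hnat : (2:ℝ)^((k:ℕ):ℝ) = 2^k := Real.rpow_natCast 2 k
    rw [Real.rpow_neg (by norm_num : (0:ℝ) ≤ 2), hnat, one_div, inv_pow]
  have hRHSeq : (2:ℝ) ^ ((Real.logb 2 (1 - 2 ^ (-(k:ℝ))) - ε) * n) *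
      (2:ℝ) ^ ((n + k + 1) * (n + k) / 2 : ℕ)
      = (1 - (1/2:ℝ)^k)^n * (2:ℝ) ^ (-(ε * n)) * (2:ℝ)^M := by
    rw [hpk]
    have e1 : (Real.logb 2 (1 - (1/2:ℝ)^k) - ε) * n
        = Real.logb 2 (1 - (1/2:ℝ)^k) * n + (-(ε*n)) := by ring
    rw [e1, Real.rpow_add (by norm_num : (0:ℝ) < 2)]
    have e2 : (2:ℝ) ^ (Real.logb 2 (1 - (1/2:ℝ)^k) * (n:ℝ)) = (1 - (1/2:ℝ)^k)^n := by
      rw [Real.rpow_mul (by norm_num : (0:ℝ) ≤ 2),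
        Real.rpow_logb (by norm_num) (by norm_num) h1p, Real.rpow_natCast]
    have e3 : (n + k + 1) * (n + k) / 2 = M := by omega
    rw [e3, e2]
  refine le_trans ?_ (le_of_eq hRHSeq.symm)
  -- transfer to function space
  rw [card_subtype_equiv (graphEquiv (n+k+1))]
  -- common facts
  have hξa : ξ ≤ δ/(64*((k:ℝ)+9)) := le_trans (min_le_right _ _) (min_le_left _ _)
  have hξb : ξ ≤ 1/(4*(n₀:ℝ)*((n₀:ℝ)+k+1)) := le_trans (min_le_right _ _) (min_le_right _ _)
  have hεa : ε ≤ δ/64 := min_le_left _ _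
  have hεb : ε ≤ 1/(2*(n₀:ℝ)) := min_le_right _ _
  have hnR : (1:ℝ) ≤ (n:ℝ) := by exact_mod_cast hn
  have hcn : c ≤ n := by
    have h1 : (c:ℝ) ≤ (1/2) * n := le_trans hcξ
      (mul_le_mul_of_nonneg_right (min_le_left _ _) (by positivity))
    have h2 : (c:ℝ) ≤ (n:ℝ) := by linarith
    exact_mod_cast h2
  rcases lt_or_ge n n₀ with hsmall | hlarge
  · -- SMALL CASE
    have hdisjS : ∀ C₀ : Finset (Fin (n+k+1)), ∀ x ∈ insert v (W \ C₀), x ∉ S := by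
      intro C₀ x hx hxS
      rcases Finset.mem_insert.mp hx with h | h
      · exact hvS (h ▸ hxS)
      · have h1 := Finset.mem_sdiff.mp h
        have h2 := Finset.mem_sdiff.mp h1.1
        exact h2.2 (Finset.mem_insert_of_mem hxS)
    refine le_trans (cover_card_le _ (Finset.powersetCard c Finset.univ)
      (fun C₀ f => ∀ j, QBlk (insert v (W \ C₀)) S (hdisjS C₀)
        (fun u h => if u = v then (∀ x, h x = false) else (∃ x, h x = true)) j (fun p => f p.1))
      ?_ ((1/2:ℝ)^k * ((1 - (1/2:ℝ)^k)^n * 2^c) * 2^M) (by positivity) ?_) ?_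
    · -- cover
      intro f hf
      obtain ⟨h1, h2, h3, h4, h5⟩ := hf
      set G := (graphEquiv (n+k+1)).symm f with hG
      set C₀ : Finset (Fin (n+k+1)) :=
        Set.toFinset {w | w ∉ S ∧ w ≠ v ∧ ∀ u ∈ S, ¬ G.Adj u w} with hC₀
      have hC₀card : C₀.card = c := by
        rw [hC₀, ← Set.ncard_eq_toFinset_card']
        exact h3
      refine ⟨C₀, Finset.mem_powersetCard_univ.mpr hC₀card, ?_⟩
      intro j
      match j with
      | none => trivial
      | some u =>
        intro hu
        by_cases huv : u = v
        · subst huv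
          simp only [if_pos rfl]
          intro x
          have hne : u ≠ x.1 := fun hc => hdisjS C₀ u hu (hc ▸ x.2)
          show f (pairMk u x.1 hne) = false
          rw [pairMk_bool f u x.1 hne]
          simp only [decide_eq_false_iff_not]
          exact fun hA => h1 x.1 x.2 hA
        · simp only [if_neg huv]
          have huW : u ∈ W \ C₀ := by
            rcases Finset.mem_insert.mp hu with h | h
            · exact absurd h huv
            · exact h
          have huW' := Finset.mem_sdiff.mp huW
          have huniv := Finset.mem_sdiff.mp huW'.1
          have huS : u ∉ S := fun hc => huniv.2 (Finset.mem_insert_of_mem hc)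
          have hnotC : u ∉ C₀ := huW'.2
          have hdom : ¬ (∀ s ∈ S, ¬ G.Adj s u) := by
            intro hall
            exact hnotC (by rw [hC₀]; exact Set.mem_toFinset.mpr ⟨huS, huv, hall⟩)
          push_neg at hdom
          obtain ⟨s, hsS, hAdj⟩ := hdom
          refine ⟨⟨s, hsS⟩, ?_⟩
          have hne : u ≠ s := fun hc => huS (hc ▸ hsS)
          show f (pairMk u s hne) = true
          rw [pairMk_bool f u s hne]
          simp only [decide_eq_true_eq]
          exact G.adj_symm hAdj
    · -- per-index bound
      intro C₀ hC₀
      have hC₀card : C₀.card = c := Finset.mem_powersetCard_univ.mp hC₀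
      refine le_trans (caseSmall S C₀ v hvS hS (hdisjS C₀)) ?_
      have hcount : n ≤ (W \ C₀).card + c := by
        have := Finset.card_le_card_sdiff_add_card (s := W) (t := C₀)
        omega
      have hshift : (1 - (1/2:ℝ)^k) ^ ((W \ C₀).card)
          ≤ (1 - (1/2:ℝ)^k)^n * 2^c := by
        have h := pow_base_shift (x := 1 - (1/2:ℝ)^k) (y := 1/2) (by norm_num) h1p' h1p1 hcount
        have h2 : ((1:ℝ)/(1/2))^c = 2^c := by norm_num
        rwa [h2] at h
      calc (1/2:ℝ)^k * (1 - (1/2:ℝ)^k) ^ ((W \ C₀).card) * 2^M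
          ≤ (1/2:ℝ)^k * ((1 - (1/2:ℝ)^k)^n * 2^c) * 2^M := by
            apply mul_le_mul_of_nonneg_right (mul_le_mul_of_nonneg_left hshift (by positivity))
              (by positivity)
        _ = (1/2:ℝ)^k * ((1 - (1/2:ℝ)^k)^n * 2^c) * 2^M := rfl
    · -- final numeric (small)
      have hidx : ((Finset.powersetCard c (Finset.univ : Finset (Fin (n+k+1)))).card : ℝ)
          ≤ ((n+k+1 : ℕ):ℝ)^c := by
        rw [Finset.card_powersetCard, Finset.card_univ, Fintype.card_fin]
        have := Nat.choose_le_pow (n+k+1) c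
        calc (((n+k+1).choose c : ℕ):ℝ) ≤ (((n+k+1)^c : ℕ):ℝ) := by exact_mod_cast this
          _ = ((n+k+1 : ℕ):ℝ)^c := by push_cast; ring
      have hkey : ((n+k+1:ℕ):ℝ)^c * 2^c * (1/2:ℝ)^k ≤ (2:ℝ) ^ (-(ε * (n:ℝ))) := by
        have hnn₀ : (n:ℝ) ≤ (n₀:ℝ) := by exact_mod_cast hsmall.le
        have hkR : (1:ℝ) ≤ (k:ℝ) := by exact_mod_cast hk
        have hk0 : (0:ℝ) ≤ (k:ℝ) := by positivity
        have hden : (0:ℝ) < 4*(n₀:ℝ)*((n₀:ℝ)+k+1) := by positivity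
        have hξb' : ξ * (4*(n₀:ℝ)*((n₀:ℝ)+k+1)) ≤ 1 := by
          have := (le_div_iff₀ hden).mp (by rw [div_eq_mul_inv] at hξb ⊢; linarith [hξb] : ξ ≤ 1 / (4*(n₀:ℝ)*((n₀:ℝ)+k+1)))
          linarith
        have hcN : (c:ℝ)*((n:ℝ)+(k:ℝ)+2) ≤ 1/2 := by
          have s1 : (c:ℝ)*((n:ℝ)+k+2) ≤ (ξ*n)*((n:ℝ)+k+2) :=
            mul_le_mul_of_nonneg_right hcξ (by positivity)
          have s2 : (ξ*n)*((n:ℝ)+k+2) ≤ (ξ*n₀)*((n₀:ℝ)+k+2) := by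
            apply mul_le_mul (mul_le_mul_of_nonneg_left hnn₀ hξpos.le) (by linarith)
              (by positivity) (by positivity)
          have s3 : (ξ*n₀)*((n₀:ℝ)+k+2) ≤ ξ*(2*(n₀:ℝ)*((n₀:ℝ)+k+1)) := by
            have hfac : (n₀:ℝ)*((n₀:ℝ)+k+2) ≤ 2*(n₀:ℝ)*((n₀:ℝ)+k+1) := by nlinarith
            calc (ξ*n₀)*((n₀:ℝ)+k+2) = ξ*((n₀:ℝ)*((n₀:ℝ)+k+2)) := by ring
              _ ≤ ξ*(2*(n₀:ℝ)*((n₀:ℝ)+k+1)) := mul_le_mul_of_nonneg_left hfac hξpos.le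
          have s4 : ξ*(2*(n₀:ℝ)*((n₀:ℝ)+k+1)) = (1/2)*(ξ*(4*(n₀:ℝ)*((n₀:ℝ)+k+1))) := by ring
          nlinarith
        have hεn : ε*(n:ℝ) ≤ 1/2 := by
          have s1 : ε*(n:ℝ) ≤ (1/(2*(n₀:ℝ)))*(n₀:ℝ) :=
            mul_le_mul hεb hnn₀ (by positivity) (by positivity)
          have s2 : (1/(2*(n₀:ℝ)))*(n₀:ℝ) = 1/2 := by
            field_simp
          linarith
        have hcast : (((n+k+1)*c + c : ℕ):ℝ) = (c:ℝ)*((n:ℝ)+(k:ℝ)+2) := by push_cast; ring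
        have hexp : (((n+k+1)*c + c : ℕ):ℝ) + (-(k:ℝ)) ≤ -(ε*(n:ℝ)) := by
          rw [hcast]; linarith
        have hNlt : ((n+k+1 : ℕ):ℝ) ≤ (2:ℝ)^(n+k+1) := by
          have h := Nat.lt_two_pow_self (n := n+k+1)
          have h2 : ((n+k+1 : ℕ):ℝ) ≤ ((2^(n+k+1) : ℕ):ℝ) := by exact_mod_cast h.le
          calc ((n+k+1 : ℕ):ℝ) ≤ ((2^(n+k+1) : ℕ):ℝ) := h2
            _ = (2:ℝ)^(n+k+1) := by push_cast; ring
        calc ((n+k+1:ℕ):ℝ)^c * 2^c * (1/2:ℝ)^k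
            ≤ ((2:ℝ)^(n+k+1))^c * 2^c * (1/2:ℝ)^k := by
              apply mul_le_mul_of_nonneg_right (mul_le_mul_of_nonneg_right
                (pow_le_pow_left₀ (by positivity) hNlt c) (by positivity)) (by positivity)
          _ = (2:ℝ)^((n+k+1)*c + c) * (1/2:ℝ)^k := by rw [← pow_mul, ← pow_add]
          _ = (2:ℝ)^(((n+k+1)*c + c : ℕ):ℝ) * (2:ℝ)^(-(k:ℝ)) := by
              rw [Real.rpow_natCast, hpk]
          _ = (2:ℝ)^((((n+k+1)*c + c : ℕ):ℝ) + (-(k:ℝ))) :=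
              (Real.rpow_add (by norm_num) _ _).symm
          _ ≤ (2:ℝ)^(-(ε*(n:ℝ))) := Real.rpow_le_rpow_of_exponent_le (by norm_num) hexp
      have hfin : ((n+k+1:ℕ):ℝ)^c * ((1/2:ℝ)^k * ((1 - (1/2:ℝ)^k)^n * 2^c) * 2^M)
          ≤ (1 - (1/2:ℝ)^k)^n * 2 ^ (-(ε * (n:ℝ))) * 2^M := by
        have hrw : ((n+k+1:ℕ):ℝ)^c * ((1/2:ℝ)^k * ((1 - (1/2:ℝ)^k)^n * 2^c) * 2^M)
            = (((n+k+1:ℕ):ℝ)^c * 2^c * (1/2:ℝ)^k) * ((1 - (1/2:ℝ)^k)^n * 2^M) := by ring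
        have hrw2 : (1 - (1/2:ℝ)^k)^n * 2 ^ (-(ε * (n:ℝ))) * 2^M
            = (2:ℝ) ^ (-(ε * (n:ℝ))) * ((1 - (1/2:ℝ)^k)^n * 2^M) := by ring
        rw [hrw, hrw2]
        exact mul_le_mul_of_nonneg_right hkey (by positivity)
      calc ((Finset.powersetCard c (Finset.univ : Finset (Fin (n+k+1)))).card : ℝ) *
            ((1/2:ℝ)^k * ((1 - (1/2:ℝ)^k)^n * 2^c) * 2^M)
          ≤ ((n+k+1:ℕ):ℝ)^c * ((1/2:ℝ)^k * ((1 - (1/2:ℝ)^k)^n * 2^c) * 2^M) :=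
            mul_le_mul_of_nonneg_right hidx (by positivity)
        _ ≤ (1 - (1/2:ℝ)^k)^n * 2 ^ (-(ε * (n:ℝ))) * 2^M := hfin
  · -- LARGE CASE
    have hdisjL : ∀ t : Finset (Fin (n+k+1)) × Fin (n+k+1) × Finset (Fin (n+k+1)),
        ∀ x ∈ (Finset.univ \ insert v S) \ insert t.2.1 (t.1 ∪ t.2.2),
          x ∉ insert v (insert t.2.1 (S ∪ t.1)) := by
      intro t x hx hmem
      have h1 := Finset.mem_sdiff.mp hx
      have h2 := Finset.mem_sdiff.mp h1.1
      have h3 := h1.2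
      rcases Finset.mem_insert.mp hmem with h | h
      · exact h2.2 (h ▸ Finset.mem_insert_self v S)
      rcases Finset.mem_insert.mp h with h' | h'
      · exact h3 (h' ▸ Finset.mem_insert_self _ _)
      rcases Finset.mem_union.mp h' with h'' | h''
      · exact h2.2 (Finset.mem_insert_of_mem h'')
      · exact h3 (Finset.mem_insert_of_mem (Finset.mem_union_left _ h''))
    set qq : ℝ := (1 - (1/2:ℝ)^k) * (1 - (1/2:ℝ)^(k+3)) with hqq
    have hd1 : (1/2:ℝ)^(k+3) ≤ 1/16 := hδle
    have hqq14 : (1/4:ℝ) ≤ qq := by rw [hqq]; nlinarith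
    have hqq1 : qq ≤ 1 := by rw [hqq]; nlinarith
    set idx := ((Finset.powersetCard (k - T.card) (Finset.univ : Finset (Fin (n+k+1)))) ×ˢ
        ((Finset.univ : Finset (Fin (n+k+1))) ×ˢ
          Finset.powersetCard c (Finset.univ : Finset (Fin (n+k+1))))).filter
      (fun t => (∀ x ∈ t.1, x ∉ S ∧ x ≠ v) ∧ t.2.1 ∉ S ∧ t.2.1 ≠ v ∧ t.2.1 ∉ t.1) with hidx
    refine le_trans (cover_card_le _ idx
      (fun t f => ∀ j, QBlk ((Finset.univ \ insert v S) \ insert t.2.1 (t.1 ∪ t.2.2))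
        (insert v (insert t.2.1 (S ∪ t.1))) (hdisjL t)
        (fun u h => (∃ x, x.1 ∈ S ∧ h x = true) ∧
          ¬ ((∀ x, (x.1 = v ∨ x.1 = t.2.1) → h x = true) ∧
             (∀ x, (x.1 ∈ T ∨ x.1 ∈ t.1) → h x = false)))
        j (fun p => f p.1))
      ?_ (qq^n * 4^(c+k+1) * 2^M) (by positivity) ?_) ?_
    · -- cover
      intro f hf
      obtain ⟨h1, h2, h3, h4, h5⟩ := hf
      push_neg at h5
      obtain ⟨U, hU, hUcard, w, hwS, hwv, hwU, hw'⟩ := h5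
      set G := (graphEquiv (n+k+1)).symm f with hG
      set C₀ : Finset (Fin (n+k+1)) :=
        Set.toFinset {w | w ∉ S ∧ w ≠ v ∧ ∀ u ∈ S, ¬ G.Adj u w} with hC₀
      have hC₀card : C₀.card = c := by
        rw [hC₀, ← Set.ncard_eq_toFinset_card']
        exact h3
      refine ⟨(U, w, C₀), ?_, ?_⟩
      · rw [hidx, Finset.mem_filter]
        refine ⟨?_, hU, hwS, hwv, hwU⟩
        rw [Finset.mem_product]
        refine ⟨Finset.mem_powersetCard_univ.mpr hUcard, ?_⟩
        rw [Finset.mem_product]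
        exact ⟨Finset.mem_univ _, Finset.mem_powersetCard_univ.mpr hC₀card⟩
      intro j
      match j with
      | none => trivial
      | some u =>
        intro hu
        have hu1 := Finset.mem_sdiff.mp hu
        have hu2 := Finset.mem_sdiff.mp hu1.1
        have hu3 := hu1.2
        have huS : u ∉ S := fun hc => hu2.2 (Finset.mem_insert_of_mem hc)
        have huv : u ≠ v := fun hc => hu2.2 (hc ▸ Finset.mem_insert_self _ _)
        have huw : u ≠ w := fun hc => hu3 (hc ▸ Finset.mem_insert_self _ _)
        have huU : u ∉ U := fun hc =>
          hu3 (Finset.mem_insert_of_mem (Finset.mem_union_left _ hc))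
        have huC : u ∉ C₀ := fun hc =>
          hu3 (Finset.mem_insert_of_mem (Finset.mem_union_right _ hc))
        constructor
        · -- dominated
          have hdom : ¬ (∀ s ∈ S, ¬ G.Adj s u) := by
            intro hall
            exact huC (by rw [hC₀]; exact Set.mem_toFinset.mpr ⟨huS, huv, hall⟩)
          push_neg at hdom
          obtain ⟨s, hsS, hAdj⟩ := hdom
          refine ⟨⟨s, Finset.mem_insert_of_mem (Finset.mem_insert_of_mem
            (Finset.mem_union_left _ hsS))⟩, hsS, ?_⟩
          have hne : u ≠ s := fun hc => huS (hc ▸ hsS)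
          show f (pairMk u s hne) = true
          rw [pairMk_bool f u s hne]
          simp only [decide_eq_true_eq]
          exact G.adj_symm hAdj
        · -- not good
          rintro ⟨hg1, hg2⟩
          have hvu : G.Adj v u := by
            have hx := hg1 ⟨v, Finset.mem_insert_self _ _⟩ (Or.inl rfl)
            have hne : u ≠ v := huv
            have hx' : f (pairMk u v hne) = true := hx
            exact G.adj_symm ((adj_pairMk f u v hne).mpr hx')
          have hwu : G.Adj w u := by
            have hx := hg1 ⟨w, Finset.mem_insert_of_mem (Finset.mem_insert_self _ _)⟩
              (Or.inr rfl)
            have hne : u ≠ w := huw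
            have hx' : f (pairMk u w hne) = true := hx
            exact G.adj_symm ((adj_pairMk f u w hne).mpr hx')
          have hTfree : ∀ t' ∈ T, ¬ G.Adj t' u := by
            intro t' ht' hA
            have hmem : t' ∈ insert v (insert w (S ∪ U)) :=
              Finset.mem_insert_of_mem (Finset.mem_insert_of_mem
                (Finset.mem_union_left _ (hTS ht')))
            have hx := hg2 ⟨t', hmem⟩ (Or.inl ht')
            have hne : u ≠ t' := fun hc => huS (hc ▸ hTS ht')
            have hx' : f (pairMk u t' hne) = false := hx
            have := (adj_pairMk f u t' hne).mp (G.adj_symm hA)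
            rw [hx'] at this
            exact Bool.false_ne_true this
          obtain ⟨u', hu'U, hA⟩ := hw' u hvu hwu hTfree
          have hmem : u' ∈ insert v (insert w (S ∪ U)) :=
            Finset.mem_insert_of_mem (Finset.mem_insert_of_mem
              (Finset.mem_union_right _ hu'U))
          have hx := hg2 ⟨u', hmem⟩ (Or.inr hu'U)
          have hne : u ≠ u' := fun hc => huU (hc ▸ hu'U)
          have hx' : f (pairMk u u' hne) = false := hx
          have := (adj_pairMk f u u' hne).mp (G.adj_symm hA)
          rw [hx'] at this
          exact Bool.false_ne_true this
    · -- per-index bound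
      rintro ⟨U, w, C₀⟩ ht
      rw [hidx, Finset.mem_filter] at ht
      obtain ⟨hprod, hUside, hwS, hwv, hwU⟩ := ht
      rw [Finset.mem_product] at hprod
      obtain ⟨hUmem, hrest⟩ := hprod
      rw [Finset.mem_product] at hrest
      have hUcard : U.card = k - T.card := Finset.mem_powersetCard_univ.mp hUmem
      have hCcard : C₀.card = c := Finset.mem_powersetCard_univ.mp hrest.2
      refine le_trans (caseLarge S T U C₀ v w hTS hS rfl hlk hUcard hUside hwS hwv hwU hvS
        (hdisjL (U, w, C₀))) ?_
      have hcard : n ≤ ((Finset.univ \ insert v S) \ insert w (U ∪ C₀)).card + (c+k+1) := by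
        have ha := Finset.card_le_card_sdiff_add_card (s := Finset.univ \ insert v S)
          (t := insert w (U ∪ C₀))
        have hb : (insert w (U ∪ C₀)).card ≤ 1 + (U ∪ C₀).card := by
          have := Finset.card_insert_le w (U ∪ C₀)
          omega
        have hcc : (U ∪ C₀).card ≤ U.card + C₀.card := Finset.card_union_le _ _
        have hWc : (Finset.univ \ insert v S).card = n := hWcard
        omega
      have hshift : qq ^ (((Finset.univ \ insert v S) \ insert w (U ∪ C₀)).card)
          ≤ qq^n * 4^(c+k+1) := by
        have h := pow_base_shift (x := qq) (y := 1/4) (by norm_num) hqq14 hqq1 hcard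
        have h2 : ((1:ℝ)/(1/4))^(c+k+1) = 4^(c+k+1) := by norm_num
        rwa [h2] at h
      calc qq ^ (((Finset.univ \ insert v S) \ insert w (U ∪ C₀)).card) * 2^M
          ≤ (qq^n * 4^(c+k+1)) * 2^M :=
            mul_le_mul_of_nonneg_right hshift (by positivity)
        _ = qq^n * 4^(c+k+1) * 2^M := by ring
    · -- final numeric (large)
      have hNR : ((n+k+1:ℕ):ℝ) = (n:ℝ)+k+1 := by push_cast; ring
      have hidxcard : (idx.card : ℝ) ≤
          ((n+k+1).choose (k - T.card) : ℝ) * ((n+k+1:ℕ):ℝ) * ((n+k+1).choose c : ℝ) := by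
        have h1 : idx.card ≤ (n+k+1).choose (k - T.card) * ((n+k+1) * (n+k+1).choose c) := by
          rw [hidx]
          refine le_trans (Finset.card_filter_le _ _) ?_
          rw [Finset.card_product, Finset.card_product, Finset.card_powersetCard,
            Finset.card_powersetCard, Finset.card_univ, Fintype.card_fin]
        calc (idx.card : ℝ)
            ≤ (((n+k+1).choose (k - T.card) * ((n+k+1) * (n+k+1).choose c) : ℕ) : ℝ) := by
              exact_mod_cast h1
          _ = ((n+k+1).choose (k - T.card) : ℝ) * ((n+k+1:ℕ):ℝ) * ((n+k+1).choose c : ℝ) := by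
              push_cast; ring
      have hch1 : ((n+k+1).choose (k - T.card) : ℝ) * ((n+k+1:ℕ):ℝ) ≤ ((n+k+1:ℕ):ℝ)^(k+1) := by
        have h1 : (n+k+1).choose (k - T.card) ≤ (n+k+1)^(k - T.card) := Nat.choose_le_pow _ _
        have h2 : (n+k+1)^(k-T.card) ≤ (n+k+1)^k := Nat.pow_le_pow_right (by omega) (by omega)
        have h3 : (n+k+1).choose (k-T.card) * (n+k+1) ≤ (n+k+1)^(k+1) := by
          calc (n+k+1).choose (k-T.card) * (n+k+1) ≤ (n+k+1)^k * (n+k+1) :=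
                Nat.mul_le_mul_right _ (le_trans h1 h2)
            _ = (n+k+1)^(k+1) := (pow_succ _ _).symm
        exact_mod_cast h3
      have hδ16pos : (0:ℝ) < δ/16 := by positivity
      have hcN' : c ≤ n+k+1 := by omega
      have hδc : ((2:ℝ)^(k+9))^c * (δ/16)^c = 4^c := by
        rw [← mul_pow]
        congr 1
        rw [hδdef]
        have e : (2:ℝ)^(k+9) = 2^(k+3) * 64 := by
          have h9 : k+9 = (k+3)+6 := by omega
          rw [h9, pow_add]; norm_num
        have hhalf : (2:ℝ)^(k+3) * (1/2:ℝ)^(k+3) = 1 := by rw [← mul_pow]; norm_num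
        calc (2:ℝ)^(k+9) * ((1/2:ℝ)^(k+3)/16) = ((2:ℝ)^(k+3) * (1/2:ℝ)^(k+3)) * 4 := by
              rw [e]; ring
          _ = 4 := by rw [hhalf]; ring
      have hch2 : ((n+k+1).choose c : ℝ) * 4^c ≤ (1+δ/16)^(n+k+1) * ((2:ℝ)^(k+9))^c := by
        have h := choose_mul_pow_le (n+k+1) c hcN' (δ/16) hδ16pos.le
        calc ((n+k+1).choose c : ℝ) * 4^c
            = (((n+k+1).choose c : ℝ) * (δ/16)^c) * ((2:ℝ)^(k+9))^c := by
              rw [mul_assoc, mul_comm ((δ/16:ℝ)^c), hδc]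
          _ ≤ (1+δ/16)^(n+k+1) * ((2:ℝ)^(k+9))^c :=
              mul_le_mul_of_nonneg_right h (by positivity)
      -- key exponential estimates
      have h32 : (0:ℝ) < 1-δ/32 := by linarith
      have h1δ : (0:ℝ) ≤ 1-δ := by linarith
      have hs4 : ((2:ℝ)^(k+9))^c * (2:ℝ)^(ε*(n:ℝ)) ≤ (1/(1-δ/32))^n := by
        have hk9 : (0:ℝ) < (k:ℝ)+9 := by positivity
        have hka : ((k:ℝ)+9)*ξ ≤ δ/64 := by
          have h1 := mul_le_mul_of_nonneg_left hξa hk9.le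
          have h2 : ((k:ℝ)+9) * (δ/(64*((k:ℝ)+9))) = δ/64 := by
            field_simp
          linarith
        have hc9 : ((k:ℝ)+9)*(c:ℝ) ≤ (δ/64)*(n:ℝ) := by
          calc ((k:ℝ)+9)*(c:ℝ) ≤ ((k:ℝ)+9)*(ξ*(n:ℝ)) :=
                mul_le_mul_of_nonneg_left hcξ hk9.le
            _ = (((k:ℝ)+9)*ξ)*(n:ℝ) := by ring
            _ ≤ (δ/64)*(n:ℝ) := mul_le_mul_of_nonneg_right hka (by positivity)
        have hεc : ε*(n:ℝ) ≤ (δ/64)*(n:ℝ) :=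
          mul_le_mul_of_nonneg_right hεa (by positivity)
        have hcast9 : (((k+9)*c : ℕ):ℝ) = ((k:ℝ)+9)*(c:ℝ) := by push_cast; ring
        have step1 : ((2:ℝ)^(k+9))^c * (2:ℝ)^(ε*(n:ℝ)) ≤ (2:ℝ)^((δ/32)*(n:ℝ)) := by
          calc ((2:ℝ)^(k+9))^c * (2:ℝ)^(ε*(n:ℝ))
              = (2:ℝ)^((k+9)*c) * (2:ℝ)^(ε*(n:ℝ)) := by rw [← pow_mul]
            _ = (2:ℝ)^((((k+9)*c : ℕ)):ℝ) * (2:ℝ)^(ε*(n:ℝ)) := by rw [Real.rpow_natCast]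
            _ = (2:ℝ)^(((((k+9)*c : ℕ)):ℝ) + ε*(n:ℝ)) := (Real.rpow_add (by norm_num) _ _).symm
            _ ≤ (2:ℝ)^((δ/32)*(n:ℝ)) := by
                apply Real.rpow_le_rpow_of_exponent_le (by norm_num)
                rw [hcast9]
                linarith
        have step2 : (2:ℝ)^((δ/32)*(n:ℝ)) ≤ (1/(1-δ/32))^n := by
          have e1 : (2:ℝ)^((δ/32)*(n:ℝ)) = ((2:ℝ)^((δ/32):ℝ))^n := by
            rw [Real.rpow_mul (by norm_num), Real.rpow_natCast]
          rw [e1]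
          apply pow_le_pow_left₀ (Real.rpow_nonneg (by norm_num) _)
          exact two_rpow_le_inv_one_sub (by positivity) (by linarith)
        exact le_trans step1 step2
      have hpern : (1+δ/16) * (1/(1-δ/32)) * (1-δ) ≤ 1-δ/2 := by
        have hkey : (1+δ/16) * (1-δ) ≤ (1-δ/2) * (1-δ/32) := by nlinarith
        have e1 : (1+δ/16) * (1/(1-δ/32)) * (1-δ) = ((1+δ/16) * (1-δ)) / (1-δ/32) := by
          field_simp
        rw [e1, div_le_iff₀ h32]
        linarith
      -- assemble
      have hsplitN : (1+δ/16)^(n+k+1) = (1+δ/16)^n * (1+δ/16)^(k+1) := by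
        have hnk : n+k+1 = n+(k+1) := by omega
        rw [hnk, pow_add]
      have hconst : ((n+k+1:ℕ):ℝ)^(k+1) * ((1+δ/16)^(k+1) * 4^(k+1))
          ≤ ((n+k+1:ℕ):ℝ)^(k+1) * 8^(k+1) := by
        apply mul_le_mul_of_nonneg_left ?_ (by positivity)
        rw [← mul_pow]
        apply pow_le_pow_left₀ (by positivity) (by linarith)
      have hmidpow : (1+δ/16)^n * (1-δ)^n * (1/(1-δ/32))^n ≤ (1-δ/2)^n := by
        rw [← mul_pow, ← mul_pow]
        apply pow_le_pow_left₀
        · exact mul_nonneg (mul_nonneg (by positivity) h1δ) (by positivity)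
        · have e : (1+δ/16) * (1-δ) * (1/(1-δ/32)) = (1+δ/16) * (1/(1-δ/32)) * (1-δ) := by
            ring
          rw [e]
          exact hpern
      have hN0 : ((n+k+1:ℕ):ℝ)^(k+1) * 8^(k+1) * (1-δ/2)^n ≤ 1 := by
        rw [hNR]; exact hn₀ n hlarge
      have hbig : ((n+k+1:ℕ):ℝ)^(k+1) * (1+δ/16)^(n+k+1) * ((2:ℝ)^(k+9))^c * 4^(k+1) *
          (1-δ)^n * (2:ℝ)^(ε*(n:ℝ)) ≤ 1 := by
        have h1δn : (0:ℝ) ≤ (1-δ)^n := pow_nonneg h1δ n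
        calc ((n+k+1:ℕ):ℝ)^(k+1) * (1+δ/16)^(n+k+1) * ((2:ℝ)^(k+9))^c * 4^(k+1) *
              (1-δ)^n * (2:ℝ)^(ε*(n:ℝ))
            = (((n+k+1:ℕ):ℝ)^(k+1) * ((1+δ/16)^(k+1) * 4^(k+1))) *
              ((1+δ/16)^n * (1-δ)^n * (((2:ℝ)^(k+9))^c * (2:ℝ)^(ε*(n:ℝ)))) := by
              rw [hsplitN]; ring
          _ ≤ (((n+k+1:ℕ):ℝ)^(k+1) * ((1+δ/16)^(k+1) * 4^(k+1))) *
              ((1+δ/16)^n * (1-δ)^n * (1/(1-δ/32))^n) := by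
              apply mul_le_mul_of_nonneg_left ?_ (by positivity)
              apply mul_le_mul_of_nonneg_left hs4 (mul_nonneg (by positivity) h1δn)
          _ ≤ (((n+k+1:ℕ):ℝ)^(k+1) * 8^(k+1)) * (1-δ/2)^n := by
              apply mul_le_mul hconst hmidpow
              · exact mul_nonneg (mul_nonneg (by positivity) h1δn) (by positivity)
              · positivity
          _ = ((n+k+1:ℕ):ℝ)^(k+1) * 8^(k+1) * (1-δ/2)^n := by ring
          _ ≤ 1 := hN0
      have h2epos : (0:ℝ) < (2:ℝ)^(ε*(n:ℝ)) := Real.rpow_pos_of_pos (by norm_num) _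
      have hfin : ((n+k+1:ℕ):ℝ)^(k+1) * (1+δ/16)^(n+k+1) * ((2:ℝ)^(k+9))^c * 4^(k+1) *
          (1-δ)^n ≤ (2:ℝ)^(-(ε*(n:ℝ))) := by
        rw [Real.rpow_neg (by norm_num), ← one_div, le_div_iff₀ h2epos]
        exact hbig
      have hqq0 : (0:ℝ) ≤ qq := by linarith
      calc (idx.card : ℝ) * (qq^n * 4^(c+k+1) * 2^M)
          ≤ (((n+k+1).choose (k-T.card) : ℝ) * ((n+k+1:ℕ):ℝ) * ((n+k+1).choose c : ℝ)) *
            (qq^n * 4^(c+k+1) * 2^M) := by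
            apply mul_le_mul_of_nonneg_right hidxcard
            exact mul_nonneg (mul_nonneg (pow_nonneg hqq0 n) (by positivity)) (by positivity)
        _ = ((((n+k+1).choose (k-T.card) : ℝ) * ((n+k+1:ℕ):ℝ)) *
              (((n+k+1).choose c : ℝ) * 4^c)) * (qq^n * 4^(k+1) * 2^M) := by ring
        _ ≤ (((n+k+1:ℕ):ℝ)^(k+1) * ((1+δ/16)^(n+k+1) * ((2:ℝ)^(k+9))^c)) *
            (qq^n * 4^(k+1) * 2^M) := by
            apply mul_le_mul_of_nonneg_right
            · exact mul_le_mul hch1 hch2 (by positivity) (by positivity)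
            · exact mul_nonneg (mul_nonneg (pow_nonneg hqq0 n) (by positivity)) (by positivity)
        _ = (((n+k+1:ℕ):ℝ)^(k+1) * (1+δ/16)^(n+k+1) * ((2:ℝ)^(k+9))^c * 4^(k+1) * (1-δ)^n) *
            ((1 - (1/2:ℝ)^k)^n * 2^M) := by
            rw [hqq, mul_pow, hδdef]
            ring
        _ ≤ ((2:ℝ)^(-(ε*(n:ℝ)))) * ((1 - (1/2:ℝ)^k)^n * 2^M) := by
            apply mul_le_mul_of_nonneg_right hfin (by positivity)
        _ = (1 - (1/2:ℝ)^k)^n * 2^(-(ε*(n:ℝ))) * 2^M := by ring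
end

section
/- Let k ≥ 1 and q ≥ 1 be integers and let G be a finite simple graph with δ_k(G) ≥ q. If fewer than q vertices of G are (k,q)-dangerous, then G is not k-cop-win (i.e., the robber has a strategy to evade k cops forever). -/
open Filter Topology

/-- From a set of size at least `q`, one can pick a non-dangerous vertex. -/
lemma exists_safe_in {V : Type*} [Fintype V] (G : SimpleGraph V) (k q : ℕ)
    (hdanger : {b : V | Dangerous G k q b}.ncard < q)
    (T : Set V) (hT : q ≤ T.ncard) : ∃ r ∈ T, ¬ Dangerous G k q r := by
  by_contra h
  push_neg at h
  have hsub : T ⊆ {b : V | Dangerous G k q b} := fun x hx => h x hx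
  have := Set.ncard_le_ncard hsub (Set.toFinite _)
  omega

/-- Extend a small set to a `k`-set avoiding `r`. -/
lemma exists_ksupset {V : Type*} [Fintype V] (k : ℕ) {B : Finset V} (hB : B.card ≤ k)
    {r : V} (hr : r ∉ B) (hV : k + 1 ≤ Fintype.card V) :
    ∃ A : Finset V, B ⊆ A ∧ A.card = k ∧ r ∉ A := by
  classical
  have hBsub : B ⊆ Finset.univ.erase r := by
    intro x hx
    exact Finset.mem_erase.mpr ⟨by rintro rfl; exact hr hx, Finset.mem_univ x⟩
  have hcard : (Finset.univ.erase r).card = Fintype.card V - 1 := by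
    rw [Finset.card_erase_of_mem (Finset.mem_univ r), Finset.card_univ]
  obtain ⟨A, hBA, hAsub, hA⟩ := Finset.exists_subsuperset_card_eq hBsub
    (n := k - B.card + B.card) (by omega) (by omega)
  exact ⟨A, hBA, by omega, fun h => (Finset.mem_erase.mp (hAsub h)).1 rfl⟩

/-- The invariant `r ∉ N[c]` and `r` non-dangerous rules out cop-win positions. -/
lemma no_copwin {V : Type*} [Fintype V] (G : SimpleGraph V) (k q : ℕ)
    (hq : 1 ≤ q)
    (hdanger : {b : V | Dangerous G k q b}.ncard < q)
    (hV : k + 1 ≤ Fintype.card V)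
    (c : Fin k → V) (r : V) (h : CopsWinPos G c r)
    (hinv : ∀ i, r ≠ c i ∧ ¬ G.Adj (c i) r) (hnd : ¬ Dangerous G k q r) : False := by
  classical
  induction h with
  | capture c r c' hmove hc =>
    obtain ⟨i, hi⟩ := hc
    rcases hmove i with h1 | h1
    · exact (hinv i).1 (by rw [← hi, h1])
    · exact (hinv i).2 (hi ▸ h1)
  | advance c r c' hmove h ih =>
    have hcr : ∀ i, c' i ≠ r := by
      intro i hi
      rcases hmove i with h1 | h1
      · exact (hinv i).1 (by rw [← hi, h1])
      · exact (hinv i).2 (hi ▸ h1)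
    have hrB : r ∉ Finset.univ.image c' := by
      intro hmem
      obtain ⟨i, _, hi⟩ := Finset.mem_image.mp hmem
      exact hcr i hi
    obtain ⟨A, hBA, hAcard, hrA⟩ := exists_ksupset k
      ((Finset.card_image_le).trans (by simp)) hrB hV
    have hS : 2 * q < {w : V | (∀ u ∈ A, w ≠ u ∧ ¬ G.Adj u w) ∧ G.Adj r w}.ncard := by
      by_contra hle
      exact hnd ⟨A, hAcard, hrA, le_of_not_gt hle⟩
    obtain ⟨r', hr'T, hr'nd⟩ := exists_safe_in G k q hdanger
      {w : V | (∀ u ∈ A, w ≠ u ∧ ¬ G.Adj u w) ∧ G.Adj r w} (by omega)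
    refine ih r' (Or.inr hr'T.2) (fun i => ?_) hr'nd
    exact hr'T.1 (c' i) (hBA (Finset.mem_image.mpr ⟨i, Finset.mem_univ i, rfl⟩))

/-- If `δ_k(G) ≥ q` and fewer than `q` vertices of `G` are `(k,q)`-dangerous, then the robber
can evade `k` cops forever, i.e. `G` is not `k`-cop-win. -/
theorem not_kCopWin_of_few_dangerous {V : Type*} [Fintype V] (G : SimpleGraph V)
    (k q : ℕ) (hk : 1 ≤ k) (hq : 1 ≤ q) (hδ : q ≤ deltaK G k)
    (hdanger : {b : V | Dangerous G k q b}.ncard < q) :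
    ¬ IsKCopWin G k := by
  classical
  rintro ⟨c, hc⟩
  -- First, `|V| ≥ k + 1`.
  have hne : {m | ∃ S : Finset V, S.card = k ∧
      {w : V | ∀ u ∈ S, w ≠ u ∧ ¬ G.Adj u w}.ncard = m}.Nonempty := by
    rcases Set.eq_empty_or_nonempty {m | ∃ S : Finset V, S.card = k ∧
      {w : V | ∀ u ∈ S, w ≠ u ∧ ¬ G.Adj u w}.ncard = m} with he | h
    · rw [deltaK, he, Nat.sInf_empty] at hδ; omega
    · exact h
  obtain ⟨m, S, hS, hm⟩ := hne
  have hqm : q ≤ m := hδ.trans (Nat.sInf_le ⟨S, hS, hm⟩)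
  have hTne : ({w : V | ∀ u ∈ S, w ≠ u ∧ ¬ G.Adj u w}).Nonempty :=
    Set.nonempty_of_ncard_ne_zero (by omega)
  obtain ⟨w, hw⟩ := hTne
  have hwS : w ∉ S := fun hmem => (hw w hmem).1 rfl
  have hV : k + 1 ≤ Fintype.card V := by
    have : (insert w S).card = k + 1 := by
      rw [Finset.card_insert_of_notMem hwS, hS]
    calc k + 1 = (insert w S).card := this.symm
      _ ≤ Fintype.card V := Finset.card_le_univ _
  -- Choose initial robber position.
  have hBk : (Finset.univ.image c).card ≤ k := by
    have := Finset.card_image_le (s := (Finset.univ : Finset (Fin k))) (f := c)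
    simpa using this
  obtain ⟨A, hBA, hAsub, hA⟩ := Finset.exists_subsuperset_card_eq
    (Finset.subset_univ (Finset.univ.image c))
    (n := k - (Finset.univ.image c).card + (Finset.univ.image c).card) (by omega)
    (by rw [Finset.card_univ]; omega)
  have hAcard : A.card = k := by omega
  have hT : q ≤ {w : V | ∀ u ∈ A, w ≠ u ∧ ¬ G.Adj u w}.ncard :=
    hδ.trans (Nat.sInf_le ⟨A, hAcard, rfl⟩)
  obtain ⟨r, hrT, hrnd⟩ := exists_safe_in G k q hdanger _ hT
  have hinv : ∀ i, r ≠ c i ∧ ¬ G.Adj (c i) r := fun i =>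
    hrT (c i) (hBA (Finset.mem_image.mpr ⟨i, Finset.mem_univ i, rfl⟩))
  rcases hc r with ⟨i, hi⟩ | hwin
  · exact (hinv i).1 hi.symm
  · exact no_copwin G k q hq hdanger hV c r hwin hinv hrnd
end

section
/- Let k ≥ 1 be an integer and ξ ∈ (0,1] a real number, and set q = ⌈3(k+1)/ξ⌉. Then for all sufficiently large n, the number of labelled graphs G on vertex set {1,…,n} such that δ_k(G) ≥ ξn and G contains at least q vertices that are (k,q)-dangerous is at most 2^{−n} · 2^{n(n−1)/2}. -/
open Filter Topology

section Aux
open Finset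

lemma extract_compat {V : Type*} [DecidableEq V] (k : ℕ) (P : Finset (V × Finset V))
    (h1 : ∀ p ∈ P, p.1 ∉ p.2)
    (h2 : ∀ p ∈ P, ∀ p' ∈ P, p.1 = p'.1 → p = p')
    (h3 : ∀ p ∈ P, p.2.card ≤ k) :
    ∃ Q ⊆ P, P.card ≤ (2 * k + 1) * Q.card ∧
      ∀ p ∈ Q, ∀ p' ∈ Q, p.1 ∉ p'.2 := by
  induction P using Finset.strongInduction with
  | _ P ih =>
  rcases P.eq_empty_or_nonempty with rfl | hne
  · exact ⟨∅, by simp⟩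
  · have key : ∃ p₀ ∈ P, (P.filter (fun p' => p₀.1 ∈ p'.2)).card ≤ k := by
      have hsum : ∑ p ∈ P, (P.filter (fun p' => p.1 ∈ p'.2)).card ≤ ∑ _p ∈ P, k := by
        have swap : ∑ p ∈ P, (P.filter (fun p' => p.1 ∈ p'.2)).card
            = ∑ p' ∈ P, (P.filter (fun p => p.1 ∈ p'.2)).card := by
          simp only [Finset.card_filter]
          exact Finset.sum_comm
        rw [swap]
        apply Finset.sum_le_sum
        intro p' hp'
        calc (P.filter (fun p => p.1 ∈ p'.2)).card
            ≤ p'.2.card := by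
              apply Finset.card_le_card_of_injOn (fun p => p.1)
              · intro p hp; exact (Finset.mem_filter.mp hp).2
              · intro a ha c hc hac
                exact h2 a (Finset.mem_filter.mp ha).1 c (Finset.mem_filter.mp hc).1 hac
          _ ≤ k := h3 p' hp'
      exact Finset.exists_le_of_sum_le hne hsum
    obtain ⟨p₀, hp₀, hc₀⟩ := key
    set K := P.filter (fun p' => p'.1 ∈ p₀.2 ∨ p₀.1 ∈ p'.2 ∨ p' = p₀) with hK
    have hp₀K : p₀ ∈ K := Finset.mem_filter.mpr ⟨hp₀, Or.inr (Or.inr rfl)⟩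
    have hKsub : K ⊆ P := Finset.filter_subset _ _
    have hKcard : K.card ≤ 2 * k + 1 := by
      have : K ⊆ (P.filter (fun p' => p'.1 ∈ p₀.2)) ∪ (P.filter (fun p' => p₀.1 ∈ p'.2)) ∪ {p₀} := by
        intro p hp
        rcases Finset.mem_filter.mp hp with ⟨hpP, h | h | h⟩
        · exact Finset.mem_union.mpr (Or.inl (Finset.mem_union.mpr (Or.inl (Finset.mem_filter.mpr ⟨hpP, h⟩))))
        · exact Finset.mem_union.mpr (Or.inl (Finset.mem_union.mpr (Or.inr (Finset.mem_filter.mpr ⟨hpP, h⟩))))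
        · exact Finset.mem_union.mpr (Or.inr (by simp [h]))
      calc K.card ≤ _ := Finset.card_le_card this
        _ ≤ (P.filter (fun p' => p'.1 ∈ p₀.2)).card + (P.filter (fun p' => p₀.1 ∈ p'.2)).card + 1 := by
            refine le_trans (Finset.card_union_le _ _) ?_
            have := Finset.card_union_le (P.filter (fun p' => p'.1 ∈ p₀.2)) (P.filter (fun p' => p₀.1 ∈ p'.2))
            simp only [Finset.card_singleton]
            omega
        _ ≤ k + k + 1 := by
            have hA : (P.filter (fun p' => p'.1 ∈ p₀.2)).card ≤ k := by
              calc (P.filter (fun p' => p'.1 ∈ p₀.2)).card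
                  ≤ p₀.2.card := by
                    apply Finset.card_le_card_of_injOn (fun p => p.1)
                    · intro p hp; exact (Finset.mem_filter.mp hp).2
                    · intro a ha c hc hac
                      exact h2 a (Finset.mem_filter.mp ha).1 c (Finset.mem_filter.mp hc).1 hac
                _ ≤ k := h3 p₀ hp₀
            omega
        _ = 2 * k + 1 := by ring
    have hss : P \ K ⊂ P := by
      apply Finset.sdiff_ssubset ?_ ⟨p₀, hp₀K⟩
      exact hKsub
    obtain ⟨Q', hQ'sub, hQ'card, hQ'compat⟩ := ih (P \ K) hss
      (fun p hp => h1 p (Finset.mem_sdiff.mp hp).1)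
      (fun p hp p' hp' => h2 p (Finset.mem_sdiff.mp hp).1 p' (Finset.mem_sdiff.mp hp').1)
      (fun p hp => h3 p (Finset.mem_sdiff.mp hp).1)
    have hp₀Q' : p₀ ∉ Q' := fun h => (Finset.mem_sdiff.mp (hQ'sub h)).2 hp₀K
    refine ⟨insert p₀ Q', ?_, ?_, ?_⟩
    · intro p hp
      rcases Finset.mem_insert.mp hp with rfl | hp
      · exact hp₀
      · exact (Finset.mem_sdiff.mp (hQ'sub hp)).1
    · rw [Finset.card_insert_of_notMem hp₀Q']
      have h5 : (P \ K).card = P.card - K.card := Finset.card_sdiff_of_subset hKsub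
      have h6 : K.card ≤ P.card := Finset.card_le_card hKsub
      have := hQ'card
      rw [h5] at this
      rw [Nat.mul_add, Nat.mul_one]
      omega
    · intro p hp p' hp'
      rcases Finset.mem_insert.mp hp with hp1 | hp1
      · rcases Finset.mem_insert.mp hp' with hp2 | hp2
        · rw [hp1, hp2]; exact h1 p₀ hp₀
        · rw [hp1]
          intro hmem
          have hp'P := hQ'sub hp2
          exact (Finset.mem_sdiff.mp hp'P).2 (Finset.mem_filter.mpr ⟨(Finset.mem_sdiff.mp hp'P).1, Or.inr (Or.inl hmem)⟩)
      · rcases Finset.mem_insert.mp hp' with hp2 | hp2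
        · rw [hp2]
          intro hmem
          have hpP := hQ'sub hp1
          exact (Finset.mem_sdiff.mp hpP).2 (Finset.mem_filter.mpr ⟨(Finset.mem_sdiff.mp hpP).1, Or.inl hmem⟩)
        · exact hQ'compat p hp1 p' hp2



lemma card_small_finsets {α : Type*} [Fintype α] [LinearOrder α] (m : ℕ) :
    Nat.card {D : Finset α // D.card ≤ m} ≤ (Fintype.card α + 1) ^ m := by
  classical
  have hinj : Function.Injective
      (fun (D : {D : Finset α // D.card ≤ m}) => (fun i : Fin m => (D.1.sort (· ≤ ·))[(i : ℕ)]?)) := by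
    intro D D' hDD'
    have hlen : (D.1.sort (· ≤ ·)).length ≤ m := by
      rw [Finset.length_sort]; exact D.2
    have hlen' : (D'.1.sort (· ≤ ·)).length ≤ m := by
      rw [Finset.length_sort]; exact D'.2
    have hl : D.1.sort (· ≤ ·) = D'.1.sort (· ≤ ·) := by
      apply List.ext_getElem?
      intro i
      by_cases hi : i < m
      · exact congrFun hDD' ⟨i, hi⟩
      · rw [List.getElem?_eq_none (by omega), List.getElem?_eq_none (by omega)]
    have : (D.1.sort (· ≤ ·)).toFinset = (D'.1.sort (· ≤ ·)).toFinset := by rw [hl]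
    rw [Finset.sort_toFinset, Finset.sort_toFinset] at this
    exact Subtype.ext this
  calc Nat.card {D : Finset α // D.card ≤ m} ≤ Nat.card (Fin m → Option α) :=
        Nat.card_le_card_of_injective _ hinj
    _ = (Fintype.card α + 1) ^ m := by
        rw [Nat.card_eq_fintype_card, Fintype.card_fun]
        simp

lemma card_subsets_le {α : Type*} [Fintype α] [DecidableEq α] (Z : Finset α)
    (p : Finset α → Prop) [DecidablePred p] :
    Nat.card {h : Finset α // h ⊆ Z ∧ p h} ≤ 2 ^ Z.card := by
  classical
  calc Nat.card {h : Finset α // h ⊆ Z ∧ p h}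
      ≤ Nat.card {h : Finset α // h ∈ Z.powerset} := by
        apply Nat.card_le_card_of_injective
          (fun h => (⟨h.1, Finset.mem_powerset.mpr h.2.1⟩ : {h : Finset α // h ∈ Z.powerset}))
        intro x y hxy
        simpa [Subtype.ext_iff] using hxy
    _ = 2 ^ Z.card := by
        rw [Nat.card_eq_fintype_card, Fintype.card_coe, Finset.card_powerset]

section CountSec

variable {n s : ℕ}

def Wst (b : Fin s → Fin n) (A : Fin s → Finset (Fin n)) : Finset (Fin n) :=
  (Finset.univ.image b) ∪ (Finset.univ.biUnion A)

def Ust (b : Fin s → Fin n) (A : Fin s → Finset (Fin n)) : Finset (Fin n) :=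
  Finset.univ \ Wst b A

def slotE (b : Fin s → Fin n) (A : Fin s → Finset (Fin n)) (j : Fin s) :
    Finset (Sym2 (Fin n)) := (Ust b A).image (fun v => s(b j, v))

def slots (b : Fin s → Fin n) (A : Fin s → Finset (Fin n)) : Finset (Sym2 (Fin n)) :=
  Finset.univ.biUnion (slotE b A)

def SjF (b : Fin s → Fin n) (A : Fin s → Finset (Fin n)) (j : Fin s)
    (h : Finset (Sym2 (Fin n))) : Finset (Fin n) :=
  (Ust b A).filter (fun v => ∀ u ∈ A j, s(u, v) ∉ h)

variable {b : Fin s → Fin n} {A : Fin s → Finset (Fin n)}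

lemma mem_W_b (j : Fin s) : b j ∈ Wst b A :=
  Finset.mem_union.mpr (Or.inl (Finset.mem_image.mpr ⟨j, Finset.mem_univ _, rfl⟩))

lemma mem_W_A {u : Fin n} {j : Fin s} (hu : u ∈ A j) : u ∈ Wst b A :=
  Finset.mem_union.mpr (Or.inr (Finset.mem_biUnion.mpr ⟨j, Finset.mem_univ _, hu⟩))

lemma not_mem_U_of_W {u : Fin n} (hu : u ∈ Wst b A) : u ∉ Ust b A := by
  simp only [Ust, Finset.mem_sdiff]
  tauto

lemma mem_slots_iff {e : Sym2 (Fin n)} :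
    e ∈ slots b A ↔ ∃ j, ∃ v ∈ Ust b A, s(b j, v) = e := by
  simp [slots, slotE, Finset.mem_biUnion, Finset.mem_image]

lemma slots_not_mem (hbA : ∀ i j, b i ∉ A j) {j : Fin s} {u v : Fin n}
    (hu : u ∈ A j) (hv : v ∈ Ust b A) : s(u, v) ∉ slots b A := by
  intro hmem
  obtain ⟨i, w, hw, heq⟩ := mem_slots_iff.mp hmem
  rw [Sym2.eq_iff] at heq
  rcases heq with ⟨h1, h2⟩ | ⟨h1, h2⟩
  · exact hbA i j (h1 ▸ hu)
  · exact not_mem_U_of_W (h1 ▸ mem_W_b i) hv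
  
lemma SjF_edgeFinset (hbA : ∀ i j, b i ∉ A j) (G : SimpleGraph (Fin n)) [DecidableRel G.Adj]
    (j : Fin s) :
    SjF b A j (G.edgeFinset \ slots b A)
      = (Ust b A).filter (fun v => ∀ u ∈ A j, ¬ G.Adj u v) := by
  ext v
  simp only [SjF, Finset.mem_filter]
  refine and_congr_right fun hv => ?_
  refine forall_congr' fun u => forall_congr' fun hu => ?_
  rw [Finset.mem_sdiff]
  simp only [SimpleGraph.mem_edgeFinset, SimpleGraph.mem_edgeSet]
  have := slots_not_mem hbA hu hv
  tauto

lemma U_card : (Ust b A).card = n - (Wst b A).card := by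
  rw [Ust, Finset.card_sdiff_of_subset (Finset.subset_univ _)]
  simp

lemma W_card_le (k : ℕ) (hA : ∀ j, (A j).card = k) : (Wst b A).card ≤ s * (k + 1) := by
  refine le_trans (Finset.card_union_le _ _) ?_
  have h1 : (Finset.univ.image b).card ≤ s := le_trans (Finset.card_image_le) (by simp)
  have h2 : (Finset.univ.biUnion A).card ≤ s * k := by
    refine le_trans (Finset.card_biUnion_le) ?_
    rw [Finset.sum_congr rfl (fun j _ => hA j)]
    simp [mul_comm]
  have : s * (k+1) = s * k + s := by ring
  omega

lemma slotE_card (j : Fin s) : (slotE b A j).card = (Ust b A).card := by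
  rw [slotE, Finset.card_image_of_injective]
  intro v w hvw
  exact Sym2.congr_right.mp hvw

lemma slots_sub_top : slots b A ⊆ (⊤ : SimpleGraph (Fin n)).edgeFinset := by
  intro e he
  obtain ⟨j, v, hv, rfl⟩ := mem_slots_iff.mp he
  simp only [SimpleGraph.mem_edgeFinset, SimpleGraph.mem_edgeSet, SimpleGraph.top_adj]
  intro hbv
  exact not_mem_U_of_W (hbv ▸ mem_W_b j) hv

lemma slots_card (hbinj : Function.Injective b) :
    (slots b A).card = s * (Ust b A).card := by
  rw [slots, Finset.card_biUnion]
  · rw [Finset.sum_congr rfl (fun j _ => slotE_card j)]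
    simp [mul_comm]
  · intro i _ j _ hij
    simp only [Finset.disjoint_left]
    intro e hei hej
    simp only [slotE, Finset.mem_image] at hei hej
    obtain ⟨v, hv, rfl⟩ := hei
    obtain ⟨w, hw, heq⟩ := hej
    rw [Sym2.eq_iff] at heq
    rcases heq with ⟨h1, h2⟩ | ⟨h1, h2⟩
    · exact hij (hbinj h1.symm)
    · exact not_mem_U_of_W (h2 ▸ mem_W_b i) hw

end CountSec

lemma nat_card_sigma_le {ι : Type*} [Finite ι] (β : ι → Type*) [∀ i, Finite (β i)] (B : ℕ)
    (hB : ∀ i, Nat.card (β i) ≤ B) : Nat.card (Σ i, β i) ≤ Nat.card ι * B := by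
  classical
  letI : Fintype ι := Fintype.ofFinite ι
  letI : ∀ i, Fintype (β i) := fun i => Fintype.ofFinite _
  rw [Nat.card_eq_fintype_card, Fintype.card_sigma, Nat.card_eq_fintype_card,
    ← Finset.card_univ]
  refine le_trans (Finset.sum_le_card_nsmul _ _ B fun i _ => ?_) (by simp [mul_comm])
  rw [← Nat.card_eq_fintype_card]
  exact hB i

lemma count_X {n s : ℕ} (k q r : ℕ) (b : Fin s → Fin n) (A : Fin s → Finset (Fin n))
    (hbinj : Function.Injective b) (hA : ∀ j, (A j).card = k) (hbA : ∀ i j, b i ∉ A j) :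
    Nat.card {G : SimpleGraph (Fin n) //
        ∀ j, (r ≤ {w : Fin n | ∀ u ∈ A j, w ≠ u ∧ ¬ G.Adj u w}.ncard ∧
          {w : Fin n | (∀ u ∈ A j, w ≠ u ∧ ¬ G.Adj u w) ∧ G.Adj (b j) w}.ncard ≤ 2 * q)} ≤
      2 ^ (n * (n - 1) / 2 - s * (n - s * (k + 1))) * ((n + 1) ^ (2 * q)) ^ s
        * (2 ^ (n - r)) ^ s := by
  classical
  set TF := (⊤ : SimpleGraph (Fin n)).edgeFinset with hTFdef
  have hTFcard : TF.card = n * (n - 1) / 2 := by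
    rw [hTFdef, SimpleGraph.card_edgeFinset_top_eq_card_choose_two]
    simp [Nat.choose_two_right]
  set Cond := fun (G : SimpleGraph (Fin n)) =>
    ∀ j, (r ≤ {w : Fin n | ∀ u ∈ A j, w ≠ u ∧ ¬ G.Adj u w}.ncard ∧
      {w : Fin n | (∀ u ∈ A j, w ≠ u ∧ ¬ G.Adj u w) ∧ G.Adj (b j) w}.ncard ≤ 2 * q) with hCond
  set Good := fun (h : Finset (Sym2 (Fin n))) =>
    h ⊆ TF \ slots b A ∧ ∀ j, r ≤ (SjF b A j h).card + (Wst b A).card with hGoodDef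
  -- target type
  set T := (h : {h : Finset (Sym2 (Fin n)) // Good h}) ×
    ((Fin s → {D : Finset (Fin n) // D.card ≤ 2 * q}) ×
      ((j : Fin s) → Finset ((Ust b A \ SjF b A j h.1 : Finset (Fin n))))) with hT
  -- the Sj set of a bad graph written via the graph
  have hSjG : ∀ (G : SimpleGraph (Fin n)) (j : Fin s),
      SjF b A j (G.edgeFinset \ slots b A)
        = (Ust b A).filter (fun v => ∀ u ∈ A j, ¬ G.Adj u v) := fun G j => by
    letI : DecidableRel G.Adj := Classical.decRel _
    exact SjF_edgeFinset hbA G j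
  -- goodness of the base of a bad graph
  have hGoodG : ∀ G : {G : SimpleGraph (Fin n) // Cond G}, Good (G.1.edgeFinset \ slots b A) := by
    rintro ⟨G, hG⟩
    constructor
    · exact Finset.sdiff_subset_sdiff (SimpleGraph.edgeFinset_mono le_top) le_rfl
    · intro j
      have h1 := (hG j).1
      rw [Set.ncard_eq_toFinset_card'] at h1
      refine le_trans (le_trans (h1.trans (Finset.card_le_card ?_)) (Finset.card_union_le _ _))
        le_rfl
      · intro w hw
        simp only [Set.mem_toFinset, Set.mem_setOf_eq] at hw
        rw [Finset.mem_union, hSjG G j, Finset.mem_filter]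
        by_cases hwW : w ∈ Wst b A
        · exact Or.inr hwW
        · exact Or.inl ⟨by simp [Ust, hwW], fun u hu => (hw u hu).2⟩
  have hSmallG : ∀ (G : {G : SimpleGraph (Fin n) // Cond G}) (j : Fin s),
      ((SjF b A j (G.1.edgeFinset \ slots b A)).filter (fun v => G.1.Adj (b j) v)).card
        ≤ 2 * q := by
    rintro ⟨G, hG⟩ j
    have h2 := (hG j).2
    rw [Set.ncard_eq_toFinset_card'] at h2
    refine le_trans (Finset.card_le_card ?_) h2
    intro v hv
    rw [Finset.mem_filter, hSjG G j, Finset.mem_filter] at hv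
    obtain ⟨⟨hvU, hvA⟩, hvadj⟩ := hv
    simp only [Set.mem_toFinset, Set.mem_setOf_eq]
    exact ⟨fun u hu => ⟨fun huv => not_mem_U_of_W (mem_W_A hu) (huv ▸ hvU), hvA u hu⟩, hvadj⟩
  -- the encoding
  set enc : {G : SimpleGraph (Fin n) // Cond G} → T := fun G =>
    ⟨⟨G.1.edgeFinset \ slots b A, hGoodG G⟩,
      fun j => ⟨(SjF b A j (G.1.edgeFinset \ slots b A)).filter (fun v => G.1.Adj (b j) v),
        hSmallG G j⟩,
      fun j => (Ust b A \ SjF b A j (G.1.edgeFinset \ slots b A)).attach.filter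
        (fun v => G.1.Adj (b j) v.1)⟩ with henc
  -- decoding
  set dec : T → SimpleGraph (Fin n) := fun t =>
    SimpleGraph.fromEdgeSet ↑(t.1.1 ∪ Finset.univ.biUnion (fun j =>
      ((t.2.1 j).1.image (fun v => s(b j, v))) ∪ ((t.2.2 j).image (fun v => s(b j, v.1)))))
    with hdec
  have hleft : ∀ G : {G : SimpleGraph (Fin n) // Cond G}, dec (enc G) = G.1 := by
    rintro ⟨G, hG⟩
    rw [hdec]
    have hE : ((⟨G, hG⟩ : {G : SimpleGraph (Fin n) // Cond G}).1.edgeFinset \ slots b A)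
        ∪ Finset.univ.biUnion (fun j =>
          (((enc ⟨G, hG⟩).2.1 j).1.image (fun v => s(b j, v)))
            ∪ (((enc ⟨G, hG⟩).2.2 j).image (fun v => s(b j, v.1))))
        = G.edgeFinset := by
      ext e
      rw [henc]
      simp only [henc, Finset.mem_union, Finset.mem_biUnion, Finset.mem_image,
        Finset.mem_filter, Finset.mem_sdiff, Finset.mem_attach, true_and, Subtype.exists]
      constructor
      · rintro (⟨he, -⟩ | ⟨j, -, (⟨v, ⟨-, hadj⟩, rfl⟩ | ⟨v, ⟨hv, ⟨hadj, rfl⟩⟩⟩)⟩)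
        · exact he
        · rwa [SimpleGraph.mem_edgeFinset, SimpleGraph.mem_edgeSet]
        · rwa [SimpleGraph.mem_edgeFinset, SimpleGraph.mem_edgeSet]
      · intro he
        by_cases hsl : e ∈ slots b A
        · obtain ⟨j, v, hv, rfl⟩ := mem_slots_iff.mp hsl
          have hadj : G.Adj (b j) v := by
            rwa [SimpleGraph.mem_edgeFinset, SimpleGraph.mem_edgeSet] at he
          refine Or.inr ⟨j, Finset.mem_univ j, ?_⟩
          by_cases hvS : v ∈ SjF b A j (G.edgeFinset \ slots b A)
          · exact Or.inl ⟨v, ⟨hvS, hadj⟩, rfl⟩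
          · exact Or.inr ⟨v, ⟨hv, hvS⟩, hadj, rfl⟩
        · exact Or.inl ⟨he, hsl⟩
      
    beta_reduce
    rw [hE]
    rw [SimpleGraph.coe_edgeFinset, SimpleGraph.fromEdgeSet_edgeSet]
  have hinj : Function.Injective enc := by
    intro x y hxy
    apply Subtype.ext
    rw [← hleft x, ← hleft y, hxy]
  -- cardinality bounds
  have hle1 : Nat.card {G : SimpleGraph (Fin n) // Cond G} ≤ Nat.card T :=
    Nat.card_le_card_of_injective enc hinj
  have hWle : (Wst b A).card ≤ s * (k + 1) := W_card_le k hA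
  have hWn : (Wst b A).card ≤ n := by
    have := Finset.card_le_card (Finset.subset_univ (Wst b A))
    simpa using this
  have hUW : (Ust b A).card = n - (Wst b A).card := U_card
  have hTbound : Nat.card T ≤
      2 ^ ((TF \ slots b A).card) * (((n + 1) ^ (2 * q)) ^ s * (2 ^ (n - r)) ^ s) := by
    rw [hT]
    refine le_trans (nat_card_sigma_le _ (((n + 1) ^ (2 * q)) ^ s * (2 ^ (n - r)) ^ s) ?_) ?_
    · intro h
      rw [Nat.card_prod]
      refine Nat.mul_le_mul ?_ ?_
      · rw [Nat.card_pi]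
        have hsm : Nat.card {D : Finset (Fin n) // D.card ≤ 2 * q} ≤ (n + 1) ^ (2 * q) := by
          have := card_small_finsets (α := Fin n) (2 * q)
          simpa using this
        calc ∏ _j : Fin s, Nat.card {D : Finset (Fin n) // D.card ≤ 2 * q}
            = (Nat.card {D : Finset (Fin n) // D.card ≤ 2 * q}) ^ s := by
              rw [Finset.prod_const]; simp
          _ ≤ ((n + 1) ^ (2 * q)) ^ s := Nat.pow_le_pow_left hsm s
      · rw [Nat.card_pi]
        have hper : ∀ j : Fin s,
            Nat.card (Finset ((Ust b A \ SjF b A j h.1 : Finset (Fin n)))) ≤ 2 ^ (n - r) := by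
          intro j
          rw [Nat.card_eq_fintype_card, Fintype.card_finset, Fintype.card_coe]
          apply Nat.pow_le_pow_right (by norm_num)
          have h1 : (Ust b A \ SjF b A j h.1).card
              = (Ust b A).card - (SjF b A j h.1).card :=
            Finset.card_sdiff_of_subset (Finset.filter_subset _ _)
          have h2 : r ≤ (SjF b A j h.1).card + (Wst b A).card := h.2.2 j
          have h3 : (SjF b A j h.1).card ≤ (Ust b A).card :=
            Finset.card_le_card (Finset.filter_subset _ _)
          omega
        calc ∏ j : Fin s, Nat.card (Finset ((Ust b A \ SjF b A j h.1 : Finset (Fin n))))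
            ≤ ∏ _j : Fin s, 2 ^ (n - r) :=
              Finset.prod_le_prod' (fun j _ => hper j)
          _ = (2 ^ (n - r)) ^ s := by rw [Finset.prod_const]; simp
    · refine Nat.mul_le_mul ?_ le_rfl
      have := card_subsets_le (TF \ slots b A)
        (fun h => ∀ j, r ≤ (SjF b A j h).card + (Wst b A).card)
      simpa [hGoodDef] using this
  have hTF2 : (TF \ slots b A).card ≤ n * (n - 1) / 2 - s * (n - s * (k + 1)) := by
    rw [Finset.card_sdiff_of_subset slots_sub_top, hTFcard, slots_card hbinj]
    have : s * (n - s * (k + 1)) ≤ s * (Ust b A).card := by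
      apply Nat.mul_le_mul_left
      omega
    omega
  calc Nat.card {G : SimpleGraph (Fin n) // Cond G} ≤ Nat.card T := hle1
    _ ≤ 2 ^ ((TF \ slots b A).card) * (((n + 1) ^ (2 * q)) ^ s * (2 ^ (n - r)) ^ s) := hTbound
    _ ≤ 2 ^ (n * (n - 1) / 2 - s * (n - s * (k + 1)))
        * (((n + 1) ^ (2 * q)) ^ s * (2 ^ (n - r)) ^ s) := by
      exact Nat.mul_le_mul (Nat.pow_le_pow_right (by norm_num) hTF2) le_rfl
    _ = _ := by ring

def DTy (n k s : ℕ) : Type :=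
  {d : (Fin s → Fin n) × (Fin s → Finset (Fin n)) //
    Function.Injective d.1 ∧ (∀ j, (d.2 j).card = k) ∧ ∀ i j, d.1 i ∉ d.2 j}

instance (n k s : ℕ) : Finite (DTy n k s) := by
  unfold DTy; infer_instance

def CondD {n k s : ℕ} (q r : ℕ) (d : DTy n k s) (G : SimpleGraph (Fin n)) : Prop :=
  ∀ j, (r ≤ {w : Fin n | ∀ u ∈ d.1.2 j, w ≠ u ∧ ¬ G.Adj u w}.ncard ∧
    {w : Fin n | (∀ u ∈ d.1.2 j, w ≠ u ∧ ¬ G.Adj u w) ∧ G.Adj (d.1.1 j) w}.ncard ≤ 2 * q)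

lemma count_data (n k s : ℕ) : Nat.card (DTy n k s) ≤ n ^ s * n ^ (k * s) := by
  classical
  have hinj : Function.Injective (fun (d : DTy n k s) =>
      ((d.1.1, fun j => fun i : Fin k => (d.1.2 j).orderEmbOfFin (d.2.2.1 j) i) :
        (Fin s → Fin n) × (Fin s → Fin k → Fin n))) := by
    rintro ⟨⟨b, A⟩, hb, hA, hbA⟩ ⟨⟨b', A'⟩, hb', hA', hbA'⟩ hdd
    simp only [Prod.mk.injEq] at hdd
    obtain ⟨h1, h2⟩ := hdd
    apply Subtype.ext
    simp only [Prod.mk.injEq]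
    refine ⟨h1, ?_⟩
    funext j
    have h3 : Set.range ((A j).orderEmbOfFin (hA j)) = Set.range ((A' j).orderEmbOfFin (hA' j)) := by
      rw [Set.range_eq_iff]
      constructor
      · intro i
        have := congrFun (congrFun h2 j) i
        rw [this]
        exact Set.mem_range_self i
      · intro v ⟨i, hi⟩
        have := congrFun (congrFun h2 j) i
        exact ⟨i, by rw [this, hi]⟩
    rw [Finset.range_orderEmbOfFin, Finset.range_orderEmbOfFin] at h3
    exact_mod_cast Finset.coe_inj.mp h3
  calc Nat.card (DTy n k s) ≤ Nat.card ((Fin s → Fin n) × (Fin s → Fin k → Fin n)) :=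
        Nat.card_le_card_of_injective _ hinj
    _ = n ^ s * n ^ (k * s) := by
      rw [Nat.card_prod, Nat.card_eq_fintype_card, Nat.card_eq_fintype_card]
      simp [Fintype.card_fun, ← pow_mul, mul_comm]

lemma exists_data {n k q s r : ℕ}
    (hs : ∀ c : ℕ, q ≤ (2 * k + 1) * c → s ≤ c) (G : SimpleGraph (Fin n))
    (hq : q ≤ {v : Fin n | Dangerous G k q v}.ncard)
    (hδ : ∀ S : Finset (Fin n), S.card = k →
      r ≤ {w : Fin n | ∀ u ∈ S, w ≠ u ∧ ¬ G.Adj u w}.ncard) :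
    ∃ d : DTy n k s, CondD q r d G := by
  classical
  set D := {v : Fin n | Dangerous G k q v}.toFinset with hD
  have hDcard : q ≤ D.card := by
    rwa [Set.ncard_eq_toFinset_card'] at hq
  set wit : Fin n → Finset (Fin n) := fun v =>
    if h : Dangerous G k q v then h.choose else ∅ with hwit
  have hwitspec : ∀ v, Dangerous G k q v → (wit v).card = k ∧ v ∉ wit v ∧
      {w : Fin n | (∀ u ∈ wit v, w ≠ u ∧ ¬ G.Adj u w) ∧ G.Adj v w}.ncard ≤ 2 * q := by
    intro v hv
    simp only [hwit, dif_pos hv]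
    exact hv.choose_spec
  set P := D.image (fun v => (v, wit v)) with hP
  have hmemP : ∀ p ∈ P, p.1 ∈ D ∧ p.2 = wit p.1 := by
    intro p hp
    obtain ⟨v, hv, rfl⟩ := Finset.mem_image.mp hp
    exact ⟨hv, rfl⟩
  have hpair : ∀ p ∈ P, p = (p.1, wit p.1) := by
    intro p hp
    obtain ⟨v, hv, rfl⟩ := Finset.mem_image.mp hp
    rfl
  have hmemD : ∀ v ∈ D, Dangerous G k q v := by
    intro v hv
    rwa [hD, Set.mem_toFinset] at hv
  have hPcard : P.card = D.card := Finset.card_image_of_injective _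
    (fun v w hvw => (Prod.mk.injEq _ _ _ _ ▸ hvw).1)
  obtain ⟨Q, hQP, hQcard, hQcompat⟩ := extract_compat k P
    (fun p hp => by
      obtain ⟨hpD, hpw⟩ := hmemP p hp
      rw [hpw]; exact (hwitspec p.1 (hmemD _ hpD)).2.1)
    (fun p hp p' hp' h1 => by
      rw [hpair p hp, hpair p' hp', h1])
    (fun p hp => by
      obtain ⟨hpD, hpw⟩ := hmemP p hp
      rw [hpw, (hwitspec p.1 (hmemD _ hpD)).1])
  have hsQ : s ≤ Q.card := hs Q.card (le_trans hDcard (hPcard ▸ hQcard))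
  obtain ⟨Q', hQ'Q, hQ'card⟩ := Finset.exists_subset_card_eq hsQ
  set e := (Q'.equivFinOfCardEq hQ'card).symm with he
  set b : Fin s → Fin n := fun j => ((e j : Fin n × Finset (Fin n))).1 with hb
  set A : Fin s → Finset (Fin n) := fun j => ((e j : Fin n × Finset (Fin n))).2 with hA
  have hmemQ' : ∀ j, ((e j : Fin n × Finset (Fin n))) ∈ P := fun j => hQP (hQ'Q (e j).2)
  have hAwit : ∀ j, A j = wit (b j) := fun j => (hmemP _ (hmemQ' j)).2
  have hDang : ∀ j, Dangerous G k q (b j) := fun j => hmemD _ (hmemP _ (hmemQ' j)).1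
  have hbinj : Function.Injective b := by
    intro i j hij
    have h1 := hmemP _ (hmemQ' i)
    have h2 := hmemP _ (hmemQ' j)
    have : (e i : Fin n × Finset (Fin n)) = (e j : Fin n × Finset (Fin n)) := by
      calc (e i : Fin n × Finset (Fin n)) = (b i, wit (b i)) := hpair _ (hmemQ' i)
        _ = (b j, wit (b j)) := by rw [hij]
        _ = (e j : Fin n × Finset (Fin n)) := (hpair _ (hmemQ' j)).symm
    exact (Equiv.injective e) (Subtype.ext this)
  have hAcard : ∀ j, (A j).card = k := by
    intro j
    rw [hAwit j]
    exact (hwitspec (b j) (hDang j)).1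
  have hbA : ∀ i j, b i ∉ A j := by
    intro i j
    exact hQcompat _ (hQ'Q (e i).2) _ (hQ'Q (e j).2)
  refine ⟨⟨(b, A), hbinj, hAcard, hbA⟩, ?_⟩
  intro j
  constructor
  · exact hδ (A j) (hAcard j)
  · have := (hwitspec (b j) (hDang j)).2.2
    rwa [← hAwit j] at this

lemma count_bad {n k q s r : ℕ} (hs : ∀ c : ℕ, q ≤ (2 * k + 1) * c → s ≤ c) :
    Nat.card {G : SimpleGraph (Fin n) //
      (∀ S : Finset (Fin n), S.card = k →
        r ≤ {w : Fin n | ∀ u ∈ S, w ≠ u ∧ ¬ G.Adj u w}.ncard) ∧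
      q ≤ {v : Fin n | Dangerous G k q v}.ncard} ≤
    (n ^ s * n ^ (k * s)) * (2 ^ (n * (n - 1) / 2 - s * (n - s * (k + 1)))
      * ((n + 1) ^ (2 * q)) ^ s * (2 ^ (n - r)) ^ s) := by
  classical
  set Bad := {G : SimpleGraph (Fin n) //
      (∀ S : Finset (Fin n), S.card = k →
        r ≤ {w : Fin n | ∀ u ∈ S, w ≠ u ∧ ¬ G.Adj u w}.ncard) ∧
      q ≤ {v : Fin n | Dangerous G k q v}.ncard} with hBad
  have hex : ∀ x : Bad, ∃ d : DTy n k s, CondD q r d x.1 :=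
    fun x => exists_data hs x.1 x.2.2 x.2.1
  set F : Bad → Σ d : DTy n k s, {G : SimpleGraph (Fin n) // CondD q r d G} :=
    fun x => ⟨(hex x).choose, ⟨x.1, (hex x).choose_spec⟩⟩ with hF
  have hFinj : Function.Injective F := by
    intro x y hxy
    have : (F x).2.1 = (F y).2.1 := by rw [hxy]
    exact Subtype.ext this
  calc Nat.card Bad ≤ Nat.card (Σ d : DTy n k s, {G : SimpleGraph (Fin n) // CondD q r d G}) :=
        Nat.card_le_card_of_injective F hFinj
    _ ≤ Nat.card (DTy n k s) * (2 ^ (n * (n - 1) / 2 - s * (n - s * (k + 1)))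
          * ((n + 1) ^ (2 * q)) ^ s * (2 ^ (n - r)) ^ s) := by
        refine nat_card_sigma_le _ _ ?_
        intro d
        exact count_X k q r d.1.1 d.1.2 d.2.1 d.2.2.1 d.2.2.2
    _ ≤ _ := Nat.mul_le_mul (count_data n k s) le_rfl

end Aux

set_option maxHeartbeats 1600000 in
/-- With `q = ⌈3(k+1)/ξ⌉`, for all large `n`, the number of labelled graphs on `{1,…,n}` with
`δ_k ≥ ξn` having at least `q` `(k,q)`-dangerous vertices is at most `2^{-n} · 2^{n(n-1)/2}`. -/
theorem many_dangerous_count (k : ℕ) (hk : 1 ≤ k) (ξ : ℝ) (hξ : 0 < ξ) (hξ1 : ξ ≤ 1) :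
    ∀ᶠ n : ℕ in atTop,
      (Nat.card {G : SimpleGraph (Fin n) //
          ξ * n ≤ (deltaK G k : ℝ) ∧
          ⌈3 * ((k : ℝ) + 1) / ξ⌉₊ ≤
            {b : Fin n | Dangerous G k ⌈3 * ((k : ℝ) + 1) / ξ⌉₊ b}.ncard} : ℝ) ≤
        2 ^ (-(n : ℝ)) * 2 ^ (n * (n - 1) / 2) := by
  classical
  set q := ⌈3 * ((k : ℝ) + 1) / ξ⌉₊ with hqdef
  set s := (q + 2 * k) / (2 * k + 1) with hsdef
  have hq1 : 0 < q := by
    rw [hqdef]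
    apply Nat.ceil_pos.mpr
    positivity
  have hq_le : q ≤ (2 * k + 1) * s := by
    have hdm := Nat.div_add_mod (q + 2 * k) (2 * k + 1)
    have hmlt : (q + 2 * k) % (2 * k + 1) < 2 * k + 1 := Nat.mod_lt _ (by omega)
    rw [← hsdef] at hdm
    generalize ht : (2 * k + 1) * s = t at hdm ⊢
    omega
  have hs : ∀ c : ℕ, q ≤ (2 * k + 1) * c → s ≤ c := by
    intro c hc
    rw [hsdef, Nat.div_le_iff_le_mul_add_pred (by omega)]
    generalize ht : (2 * k + 1) * c = t at hc ⊢
    omega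
  have hs1 : 0 < s := by
    rw [hsdef]
    exact Nat.div_pos (by omega) (by omega)
  have hqξ : 3 * ((k : ℝ) + 1) ≤ q * ξ := by
    have h1 : 3 * ((k : ℝ) + 1) / ξ ≤ q := Nat.le_ceil _
    calc 3 * ((k : ℝ) + 1) = (3 * ((k : ℝ) + 1) / ξ) * ξ := by field_simp
      _ ≤ q * ξ := mul_le_mul_of_nonneg_right h1 hξ.le
  have hsξ : (3 : ℝ) / 2 ≤ s * ξ := by
    have h2 : (q : ℝ) ≤ (2 * (k : ℝ) + 1) * s := by exact_mod_cast hq_le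
    have h3 : (q : ℝ) * ξ ≤ ((2 * (k : ℝ) + 1) * s) * ξ := mul_le_mul_of_nonneg_right h2 hξ.le
    have h4 : 3 * ((k : ℝ) + 1) ≤ (2 * (k : ℝ) + 1) * (s * ξ) := by nlinarith
    nlinarith [(Nat.cast_nonneg k : (0:ℝ) ≤ (k:ℝ))]
  -- eventual bounds
  have Ev1 : ∀ᶠ n : ℕ in atTop, s * (k + 1) ≤ n := eventually_ge_atTop _
  have Ev2 : ∀ᶠ n : ℕ in atTop, 2 * s + 2 ≤ n := eventually_ge_atTop _
  have Ev3 : ∀ᶠ n : ℕ in atTop,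
      ((n : ℝ) + 1) ^ (s + k * s + 2 * q * s) * (2 : ℝ) ^ (s * (s * (k + 1)))
        ≤ (2 : ℝ) ^ ((n : ℝ) / 2) := by
    set E := s + k * s + 2 * q * s with hE
    set K : ℝ := (2 : ℝ) ^ (s * (s * (k + 1))) with hKdef
    have hK : (0 : ℝ) < K := by positivity
    have h2 : (1 : ℝ) < Real.sqrt 2 := by
      have := Real.sqrt_lt_sqrt (by norm_num) (show (1 : ℝ) < 2 by norm_num)
      simpa using this
    have hsq : (0 : ℝ) < Real.sqrt 2 := by positivity
    have htt := (tendsto_pow_const_div_const_pow_of_one_lt E h2).comp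
      (tendsto_add_atTop_nat 1)
    have hev := htt.eventually_lt_const
      (show (0 : ℝ) < 1 / (K * Real.sqrt 2) by positivity)
    filter_upwards [hev] with n hn
    simp only [Function.comp_apply] at hn
    push_cast at hn
    rw [div_lt_iff₀ (by positivity)] at hn
    have hsqrt : Real.sqrt 2 ^ n = (2 : ℝ) ^ ((n : ℝ) / 2) := by
      rw [← Real.rpow_natCast (Real.sqrt 2) n, Real.sqrt_eq_rpow,
        ← Real.rpow_mul (by norm_num)]
      ring_nf
    have hstep : ((n : ℝ) + 1) ^ E * K < Real.sqrt 2 ^ n := by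
      have h5 : (1 / (K * Real.sqrt 2)) * Real.sqrt 2 ^ (n + 1)
          = Real.sqrt 2 ^ n / K := by
        rw [pow_succ]
        field_simp
      rw [h5] at hn
      calc ((n : ℝ) + 1) ^ E * K < (Real.sqrt 2 ^ n / K) * K :=
            mul_lt_mul_of_pos_right hn hK
        _ = Real.sqrt 2 ^ n := by field_simp
    rw [← hsqrt]
    exact hstep.le
  filter_upwards [Ev1, Ev2, Ev3] with n h1 h2 h3
  set r := ⌈ξ * (n : ℝ)⌉₊ with hrdef
  -- reduce to the counting lemma
  have hsub : Nat.card {G : SimpleGraph (Fin n) //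
        ξ * n ≤ (deltaK G k : ℝ) ∧ q ≤ {b : Fin n | Dangerous G k q b}.ncard}
      ≤ Nat.card {G : SimpleGraph (Fin n) //
        (∀ S : Finset (Fin n), S.card = k →
          r ≤ {w : Fin n | ∀ u ∈ S, w ≠ u ∧ ¬ G.Adj u w}.ncard) ∧
        q ≤ {v : Fin n | Dangerous G k q v}.ncard} := by
    refine Nat.card_le_card_of_injective (fun x => ⟨x.1, ?_, x.2.2⟩) ?_
    · intro S hS
      have hd : deltaK x.1 k ≤ {w : Fin n | ∀ u ∈ S, w ≠ u ∧ ¬ x.1.Adj u w}.ncard :=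
        Nat.sInf_le ⟨S, hS, rfl⟩
      exact Nat.ceil_le.mpr (le_trans x.2.1 (Nat.cast_le.mpr hd))
    · intro x y hxy
      apply Subtype.ext
      simpa [Subtype.ext_iff] using hxy
  have hcb := count_bad (n := n) (k := k) (q := q) (s := s) (r := r) hs
  have htot := le_trans hsub hcb
  -- cast to the reals
  have hcast : (Nat.card {G : SimpleGraph (Fin n) //
        ξ * n ≤ (deltaK G k : ℝ) ∧ q ≤ {b : Fin n | Dangerous G k q b}.ncard} : ℝ)
      ≤ ((n : ℝ) ^ s * (n : ℝ) ^ (k * s)) *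
        ((2 : ℝ) ^ (n * (n - 1) / 2 - s * (n - s * (k + 1)))
          * (((n : ℝ) + 1) ^ (2 * q)) ^ s * ((2 : ℝ) ^ (n - r)) ^ s) := by
    calc (Nat.card {G : SimpleGraph (Fin n) //
          ξ * n ≤ (deltaK G k : ℝ) ∧ q ≤ {b : Fin n | Dangerous G k q b}.ncard} : ℝ)
        ≤ (((n ^ s * n ^ (k * s)) * (2 ^ (n * (n - 1) / 2 - s * (n - s * (k + 1)))
            * ((n + 1) ^ (2 * q)) ^ s * (2 ^ (n - r)) ^ s) : ℕ) : ℝ) := by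
          exact_mod_cast htot
      _ = _ := by push_cast; ring
  -- nat facts
  have f1 : s * (k + 1) ≤ n := h1
  have f2 : s * n ≤ n * (n - 1) / 2 := by
    rw [Nat.le_div_iff_mul_le (by norm_num)]
    calc s * n * 2 = n * (2 * s) := by ring
      _ ≤ n * (n - 1) := Nat.mul_le_mul_left _ (by omega)
  have f3 : s * (n - s * (k + 1)) ≤ n * (n - 1) / 2 :=
    le_trans (Nat.mul_le_mul_left _ (Nat.sub_le _ _)) f2
  have f4 : r ≤ n := by
    rw [hrdef]
    refine Nat.ceil_le.mpr ?_
    nlinarith [Nat.cast_nonneg (α := ℝ) n]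
  have f5 : ξ * (n : ℝ) ≤ r := Nat.le_ceil _
  -- real exponent computations
  have hM : (((n * (n - 1) / 2 - s * (n - s * (k + 1))) : ℕ) : ℝ)
      = ((n * (n - 1) / 2 : ℕ) : ℝ) - s * n + s * (s * (k + 1)) := by
    rw [Nat.cast_sub f3, Nat.cast_mul, Nat.cast_sub f1]
    push_cast
    ring
  have h6 : (((n - r) : ℕ) : ℝ) ≤ (n : ℝ) - ξ * n := by
    rw [Nat.cast_sub f4]
    have : ξ * (n : ℝ) ≤ (r : ℝ) := f5
    linarith
  -- assemble
  have hexp : (((n * (n - 1) / 2 - s * (n - s * (k + 1))) : ℕ) : ℝ)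
      + (((n - r) : ℕ) : ℝ) * s
      ≤ ((n * (n - 1) / 2 : ℕ) : ℝ) + (s * (s * (k + 1)) : ℕ) - 3 / 2 * n := by
    have h7 : (((n - r) : ℕ) : ℝ) * s ≤ ((n : ℝ) - ξ * n) * s := by
      apply mul_le_mul_of_nonneg_right h6 (by positivity)
    have h8 : (3 : ℝ) / 2 * n ≤ (s * ξ) * n :=
      mul_le_mul_of_nonneg_right hsξ (Nat.cast_nonneg n)
    rw [hM]
    push_cast
    nlinarith [Nat.cast_nonneg (α := ℝ) n, Nat.cast_nonneg (α := ℝ) s]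
  -- convert powers to rpow and finish
  have hfin : ((n : ℝ) ^ s * (n : ℝ) ^ (k * s)) *
        ((2 : ℝ) ^ (n * (n - 1) / 2 - s * (n - s * (k + 1)))
          * (((n : ℝ) + 1) ^ (2 * q)) ^ s * ((2 : ℝ) ^ (n - r)) ^ s)
      ≤ 2 ^ (-(n : ℝ)) * 2 ^ (n * (n - 1) / 2) := by
    have e1 : ((2 : ℝ) ^ (n * (n - 1) / 2 - s * (n - s * (k + 1)))
          * ((2 : ℝ) ^ (n - r)) ^ s)
        = (2 : ℝ) ^ ((((n * (n - 1) / 2 - s * (n - s * (k + 1))) : ℕ) : ℝ)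
            + (((n - r) : ℕ) : ℝ) * s) := by
      rw [← pow_mul, ← pow_add, ← Real.rpow_natCast (2 : ℝ)]
      push_cast
      ring_nf
    have hP : ((n : ℝ) ^ s * (n : ℝ) ^ (k * s)) * (((n : ℝ) + 1) ^ (2 * q)) ^ s
        ≤ ((n : ℝ) + 1) ^ (s + k * s + 2 * q * s) := by
      have hn1 : (n : ℝ) ≤ (n : ℝ) + 1 := by linarith
      have hnn : (0 : ℝ) ≤ (n : ℝ) := Nat.cast_nonneg n
      calc ((n : ℝ) ^ s * (n : ℝ) ^ (k * s)) * (((n : ℝ) + 1) ^ (2 * q)) ^ s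
          ≤ (((n : ℝ) + 1) ^ s * ((n : ℝ) + 1) ^ (k * s)) * (((n : ℝ) + 1) ^ (2 * q)) ^ s := by
            gcongr <;> linarith
        _ = ((n : ℝ) + 1) ^ (s + k * s + 2 * q * s) := by
            rw [← pow_mul, ← pow_add, ← pow_add]
    calc ((n : ℝ) ^ s * (n : ℝ) ^ (k * s)) *
          ((2 : ℝ) ^ (n * (n - 1) / 2 - s * (n - s * (k + 1)))
            * (((n : ℝ) + 1) ^ (2 * q)) ^ s * ((2 : ℝ) ^ (n - r)) ^ s)
        = (((n : ℝ) ^ s * (n : ℝ) ^ (k * s)) * (((n : ℝ) + 1) ^ (2 * q)) ^ s) *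
          ((2 : ℝ) ^ (n * (n - 1) / 2 - s * (n - s * (k + 1))) * ((2 : ℝ) ^ (n - r)) ^ s) := by
          ring
      _ ≤ ((n : ℝ) + 1) ^ (s + k * s + 2 * q * s) *
          (2 : ℝ) ^ ((((n * (n - 1) / 2 - s * (n - s * (k + 1))) : ℕ) : ℝ)
            + (((n - r) : ℕ) : ℝ) * s) := by
          rw [e1]
          exact mul_le_mul_of_nonneg_right hP (by positivity)
      _ ≤ ((n : ℝ) + 1) ^ (s + k * s + 2 * q * s) *
          (2 : ℝ) ^ (((n * (n - 1) / 2 : ℕ) : ℝ) + (s * (s * (k + 1)) : ℕ) - 3 / 2 * n) := by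
          apply mul_le_mul_of_nonneg_left _ (by positivity)
          exact Real.rpow_le_rpow_of_exponent_le (by norm_num) hexp
      _ = (((n : ℝ) + 1) ^ (s + k * s + 2 * q * s) * (2 : ℝ) ^ (s * (s * (k + 1)))) *
          (2 : ℝ) ^ (((n * (n - 1) / 2 : ℕ) : ℝ) - 3 / 2 * n) := by
          rw [show ((n * (n - 1) / 2 : ℕ) : ℝ) + ((s * (s * (k + 1)) : ℕ) : ℝ) - 3 / 2 * n
            = ((s * (s * (k + 1)) : ℕ) : ℝ) + (((n * (n - 1) / 2 : ℕ) : ℝ) - 3 / 2 * n) by ring]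
          rw [Real.rpow_add (by norm_num), ← Real.rpow_natCast (2 : ℝ) (s * (s * (k + 1)))]
          ring
      _ ≤ (2 : ℝ) ^ ((n : ℝ) / 2) * (2 : ℝ) ^ (((n * (n - 1) / 2 : ℕ) : ℝ) - 3 / 2 * n) := by
          exact mul_le_mul_of_nonneg_right h3 (by positivity)
      _ = 2 ^ (-(n : ℝ)) * 2 ^ (n * (n - 1) / 2) := by
          rw [← Real.rpow_add (by norm_num), ← Real.rpow_natCast (2 : ℝ) (n * (n - 1) / 2),
            ← Real.rpow_add (by norm_num)]
          congr 1
          ring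
  exact le_trans hcast hfin
end

section
/- Let G be a finite simple graph with at least two vertices and let u be a corner of G. Then G is cop-win if and only if the induced subgraph G − u (obtained by deleting u) is cop-win. -/
open Filter Topology

section CornerAux
open Classical

variable {V : Type*} (G : SimpleGraph V) (u v : V)

/-- The shadow map sending `u` to `v` and fixing everything else. -/
noncomputable def cornerShadow (hvu : v ≠ u) (r : V) : {w : V | w ≠ u} :=
  if h : r = u then ⟨v, hvu⟩ else ⟨r, h⟩

lemma cornerShadow_move (hvu : v ≠ u)
    (hcorner : ∀ w : V, (w = u ∨ G.Adj w u) → (w = v ∨ G.Adj w v))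
    {r r' : V} (h : r' = r ∨ G.Adj r r') :
    cornerShadow u v hvu r' = cornerShadow u v hvu r ∨
      (G.induce {w : V | w ≠ u}).Adj (cornerShadow u v hvu r) (cornerShadow u v hvu r') := by
  rcases h with rfl | hadj
  · exact Or.inl rfl
  · by_cases hru : r = u
    · have hru2 : u = r := hru.symm; subst hru2
      have hr'u : r' ≠ u := fun h => G.irrefl (h ▸ hadj)
      rcases hcorner r' (Or.inr (G.adj_symm hadj)) with h1 | h1
      · left; simp [cornerShadow, hr'u, h1]
      · right
        simp only [cornerShadow, dif_pos rfl, dif_neg hr'u, SimpleGraph.comap_adj]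
        exact G.adj_symm h1
    · by_cases hr'u : r' = u
      · have hr'u2 : u = r' := hr'u.symm; subst hr'u2
        rcases hcorner r (Or.inr hadj) with h1 | h1
        · left
          simp only [cornerShadow, dif_pos rfl, dif_neg hru]
          exact Subtype.ext h1.symm
        · right
          simp only [cornerShadow, dif_pos rfl, dif_neg hru, SimpleGraph.comap_adj]
          exact h1
      · right
        simp only [cornerShadow, dif_neg hru, dif_neg hr'u, SimpleGraph.comap_adj]
        exact hadj

lemma cornerAux1 (hvu : v ≠ u)
    (hcorner : ∀ w : V, (w = u ∨ G.Adj w u) → (w = v ∨ G.Adj w v))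
    {k : ℕ} {c : Fin k → {w : V | w ≠ u}} {s : {w : V | w ≠ u}}
    (h : CopsWinPos (G.induce {w : V | w ≠ u}) c s) :
    ∀ r : V, cornerShadow u v hvu r = s → CopsWinPos G (fun i => (c i : V)) r := by
  induction h with
  | capture c s c' hmove hc =>
    intro r hr
    obtain ⟨i, hi⟩ := hc
    by_cases hru : r = u
    · have hru2 : u = r := hru.symm; subst hru2
      have hv : (c' i : V) = v := by
        rw [hi, ← hr]; simp [cornerShadow]
      refine CopsWinPos.advance _ _ (fun j => (c' j : V)) ?_ ?_
      · intro j; rcases hmove j with h1 | h1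
        · exact Or.inl (congrArg Subtype.val h1)
        · exact Or.inr h1
      · intro r' hr'
        have hmem : r' = v ∨ G.Adj v r' := by
          rcases hr' with hEq | hadj
          · rw [hEq]
            rcases hcorner u (Or.inl rfl) with h1 | h1
            · exact absurd h1.symm hvu
            · exact Or.inr (G.adj_symm h1)
          · rcases hcorner r' (Or.inr (G.adj_symm hadj)) with h1 | h1
            · exact Or.inl h1
            · exact Or.inr (G.adj_symm h1)
        refine CopsWinPos.capture _ _ (fun j => if j = i then r' else (c' j : V)) ?_ ⟨i, by simp⟩
        intro j
        by_cases hj : j = i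
        · subst hj; simp only [if_pos rfl, hv]
          rcases hmem with rfl | h1
          · exact Or.inl rfl
          · exact Or.inr h1
        · simp [hj]
    · refine CopsWinPos.capture _ _ (fun j => (c' j : V)) ?_ ⟨i, ?_⟩
      · intro j; rcases hmove j with h1 | h1
        · exact Or.inl (congrArg Subtype.val h1)
        · exact Or.inr h1
      · show (c' i : V) = r
        rw [hi, ← hr]; simp [cornerShadow, hru]
  | advance c s c' hmove h ih =>
    intro r hr
    refine CopsWinPos.advance _ _ (fun j => (c' j : V)) ?_ ?_
    · intro j; rcases hmove j with h1 | h1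
      · exact Or.inl (congrArg Subtype.val h1)
      · exact Or.inr h1
    · intro r' hr'
      rcases cornerShadow_move G u v hvu hcorner hr' with heq | hadj
      · exact ih _ (Or.inl (heq.trans hr)) r' rfl
      · exact ih _ (Or.inr (hr ▸ hadj)) r' rfl

lemma cornerAux2 (hvu : v ≠ u)
    (hcorner : ∀ w : V, (w = u ∨ G.Adj w u) → (w = v ∨ G.Adj w v))
    {k : ℕ} {c : Fin k → V} {r : V} (h : CopsWinPos G c r) :
    ∀ (hru : r ≠ u),
      CopsWinPos (G.induce {w : V | w ≠ u}) (fun i => cornerShadow u v hvu (c i)) ⟨r, hru⟩ := by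
  induction h with
  | capture c r c' hmove hc =>
    intro hru
    obtain ⟨i, hi⟩ := hc
    refine CopsWinPos.capture _ _ (fun j => cornerShadow u v hvu (c' j))
      (fun j => cornerShadow_move G u v hvu hcorner (hmove j)) ⟨i, ?_⟩
    show cornerShadow u v hvu (c' i) = ⟨r, hru⟩
    rw [hi]; simp [cornerShadow, hru]
  | advance c r c' hmove h ih =>
    intro hru
    refine CopsWinPos.advance _ _ (fun j => cornerShadow u v hvu (c' j))
      (fun j => cornerShadow_move G u v hvu hcorner (hmove j)) ?_
    intro r' hr'
    have hm : (r' : V) = r ∨ G.Adj r (r' : V) := by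
      rcases hr' with rfl | hadj
      · exact Or.inl rfl
      · exact Or.inr hadj
    exact ih (r' : V) hm r'.2

end CornerAux

/-- If `u` is a corner of a finite graph `G` with at least two vertices (witnessed by `v ≠ u`
with `N[u] ⊆ N[v]`), then `G` is cop-win iff `G - u` is cop-win. -/
theorem copWin_iff_deleteCorner {V : Type*} [Fintype V] (G : SimpleGraph V)
    (h2 : 2 ≤ Fintype.card V) (u v : V) (hvu : v ≠ u)
    (hcorner : ∀ w : V, (w = u ∨ G.Adj w u) → (w = v ∨ G.Adj w v)) :
    IsKCopWin G 1 ↔ IsKCopWin (G.induce {w : V | w ≠ u}) 1 := by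
  constructor
  · rintro ⟨c, hc⟩
    refine ⟨fun i => cornerShadow u v hvu (c i), fun r' => ?_⟩
    rcases hc (r' : V) with ⟨i, hi⟩ | hwin
    · left
      refine ⟨i, ?_⟩
      show cornerShadow u v hvu (c i) = r'
      have h2' : (r' : V) ≠ u := r'.2
      rw [hi]
      simp [cornerShadow, h2']
    · right
      exact cornerAux2 G u v hvu hcorner hwin r'.2
  · rintro ⟨c, hc⟩
    refine ⟨fun i => (c i : V), fun r => ?_⟩
    rcases hc (cornerShadow u v hvu r) with ⟨i, hi⟩ | hwin
    · by_cases hru : r = u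
      · have hru2 : u = r := hru.symm; subst hru2
        have hv : (c i : V) = v := by
          rw [hi]; simp [cornerShadow]
        have hadj : G.Adj v u := by
          rcases hcorner u (Or.inl rfl) with h1 | h1
          · exact absurd h1.symm hvu
          · exact G.adj_symm h1
        right
        refine CopsWinPos.capture _ _ (fun j => if j = i then u else (c j : V)) ?_
          ⟨i, by simp⟩
        intro j
        by_cases hj : j = i
        · subst hj; simp only [if_pos rfl, hv]
          exact Or.inr hadj
        · simp [hj]
      · left
        refine ⟨i, ?_⟩
        show (c i : V) = r
        rw [hi]; simp [cornerShadow, hru]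
    · right
      exact cornerAux1 G u v hvu hcorner hwin r rfl
end
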